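/- arXiv:1304.2512 — 11 statements merged into one kernel-verified Lean document; each statement's English description precedes it below -/
import Mathlib

section
/- Let E be a vector space over 𝕜 (𝕜 = ℝ or ℂ) and let s be a subset of E such that for every linear functional f : E → 𝕜 the image f(s) is a bounded subset of 𝕜. Then the linear span of s is a finite-dimensional subspace of E. -/
/-- Every σ(E,E*)-bounded subset of a vector space `E` over `𝕜 = ℝ` or `ℂ`
(i.e. every set whose image under every linear functional is bounded in `𝕜`)
spans a finite-dimensional subspace. -/
theorem weakStar_bounded_finiteDimensional
    {𝕜 : Type*} [RCLike 𝕜] {E : Type*} [AddCommGroup E] [Module 𝕜 E]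
    (s : Set E) (hs : ∀ f : E →ₗ[𝕜] 𝕜, Bornology.IsBounded (f '' s)) :
    FiniteDimensional 𝕜 (Submodule.span 𝕜 s) := by
  classical
  by_contra h
  obtain ⟨t, hts, htspan, htli⟩ := exists_linearIndependent 𝕜 s
  have htinf : t.Infinite := by
    intro hfin
    exact h (htspan ▸ FiniteDimensional.span_of_finite 𝕜 hfin)
  let g : ℕ ↪ t := htinf.natEmbedding
  let B := Module.Basis.extend htli
  -- value function
  let ν : t → 𝕜 := fun x => (Function.invFun g x : ℕ)
  let c : LinearIndepOn.extend (v := id) htli (Set.subset_univ t) → 𝕜 :=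
    fun x => if hx : (x : E) ∈ t then ν ⟨x, hx⟩ else 0
  let f : E →ₗ[𝕜] 𝕜 := B.constr 𝕜 c
  have hfg : ∀ n : ℕ, f ((g n : t) : E) = (n : 𝕜) := by
    intro n
    have hmem : ((g n : t) : E) ∈ LinearIndepOn.extend (v := id) htli (Set.subset_univ t) :=
      LinearIndepOn.subset_extend (v := id) htli _ (g n).2
    have : f ((g n : t) : E) = c ⟨_, hmem⟩ := by
      have := B.constr_basis 𝕜 c ⟨_, hmem⟩
      rw [show B ⟨_, hmem⟩ = ((g n : t) : E) from Module.Basis.extend_apply_self _ _] at this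
      exact this
    rw [this]
    simp only [c, dif_pos (g n).2, ν]
    congr 1
    have : (⟨((g n : t) : E), (g n).2⟩ : t) = g n := Subtype.ext rfl
    rw [this, Function.leftInverse_invFun g.injective n]
  obtain ⟨C, hC⟩ := (hs f).exists_norm_le
  obtain ⟨n, hn⟩ := exists_nat_gt C
  have hmem : f ((g n : t) : E) ∈ f '' s := ⟨_, hts (g n).2, rfl⟩
  have := hC _ hmem
  rw [hfg n, RCLike.norm_natCast] at this
  linarith
end

section
/- Let E be a vector space over 𝕜 (𝕜 = ℝ or ℂ). The algebraic dual E*, equipped with the weak-* topology σ(E*,E) of pointwise convergence, is a barrelled topological vector space; equivalently, every seminorm on E* that is lower semicontinuous for this topology is continuous. -/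
open Filter Set Topology

section PiLemma

variable {𝕜 : Type*} [RCLike 𝕜] {ι : Type*}

theorem aux_seminorm_sum_le {E : Type*} [AddCommGroup E] [Module 𝕜 E] (p : Seminorm 𝕜 E)
    (s : Finset ι) (f : ι → E) : p (∑ i ∈ s, f i) ≤ ∑ i ∈ s, p (f i) := by
  classical
  induction s using Finset.cons_induction with
  | empty => simp
  | cons a s ha ih =>
    rw [Finset.sum_cons, Finset.sum_cons]
    exact le_trans (map_add_le_add p _ _) (add_le_add le_rfl ih)

/-- A lower semicontinuous seminorm on `ι → 𝕜` vanishes on the subspace of functions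
vanishing on some finite set of coordinates. -/
theorem aux_exists_finset_vanish (p : Seminorm 𝕜 (ι → 𝕜)) (hp : LowerSemicontinuous p) :
    ∃ F : Finset ι, ∀ x : ι → 𝕜, (∀ i ∈ F, x i = 0) → p x = 0 := by
  classical
  by_contra hcon
  push_neg at hcon
  -- Step: for every finite `F` there is a finitely supported `y`, vanishing on `F`,
  -- with `p y > 1`.
  have step : ∀ F : Finset ι, ∃ (y : ι → 𝕜) (G : Finset ι),
      (∀ i ∈ F, y i = 0) ∧ (∀ i ∉ G, y i = 0) ∧ 1 < p y := by
    intro F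
    obtain ⟨x, hxF, hx⟩ := hcon F
    have hxpos : 0 < p x := lt_of_le_of_ne (apply_nonneg p x) (Ne.symm hx)
    set r : ℝ := 2 / p x with hr
    have hrpos : 0 < r := by positivity
    set x' : ι → 𝕜 := (r : 𝕜) • x with hx'
    have hpx' : p x' = 2 := by
      rw [hx', map_smul_eq_mul, RCLike.norm_ofReal, abs_of_pos hrpos, hr,
        div_mul_cancel₀ _ hxpos.ne']
    have hO : IsOpen (p ⁻¹' Set.Ioi (1 : ℝ)) :=
      lowerSemicontinuous_iff_isOpen_preimage.mp hp 1
    have hx'O : x' ∈ p ⁻¹' Set.Ioi (1 : ℝ) := by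
      simp only [Set.mem_preimage, Set.mem_Ioi, hpx']; norm_num
    obtain ⟨G, u, h1, h2⟩ := isOpen_pi_iff.mp hO x' hx'O
    refine ⟨fun i => if i ∈ G then x' i else 0, G, ?_, ?_, ?_⟩
    · intro i hiF
      by_cases hiG : i ∈ G <;> simp [hiG, hx', hxF i hiF]
    · intro i hiG; simp [hiG]
    · refine h2 fun i hi => ?_
      have hi' : i ∈ G := hi
      simpa [hi'] using (h1 i hi').2
  choose Y G hYF hYG hYp using step
  -- accumulated supports
  set S : ℕ → Finset ι := fun n => Nat.rec (∅ : Finset ι) (fun _ Sk => Sk ∪ G Sk) n with hS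
  set y : ℕ → ι → 𝕜 := fun n => Y (S n) with hy
  have hSsucc : ∀ n, S (n + 1) = S n ∪ G (S n) := fun n => rfl
  have hSmono : Monotone S := by
    apply monotone_nat_of_le_succ
    intro n
    rw [hSsucc]
    exact Finset.subset_union_left
  have hsupp : ∀ n i, y n i ≠ 0 → i ∈ S (n + 1) := by
    intro n i hi
    rw [hSsucc]
    by_contra h
    exact hi (hYG (S n) i (fun hiG => h (Finset.mem_union_right _ hiG)))
  have hdisj : ∀ m n i, m < n → y n i ≠ 0 → y m i = 0 := by
    intro m n i hmn hni
    by_contra hmi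
    have hiS : i ∈ S (m + 1) := hsupp m i hmi
    have : i ∈ S n := hSmono hmn hiS
    exact hni (hYF (S n) i this)
  -- the coordinate-picking function
  set ν : ι → ℕ := fun i => if h : ∃ n, y n i ≠ 0 then h.choose else 0 with hν
  have hνspec : ∀ n i, y n i ≠ 0 → ν i = n := by
    intro n i hni
    have hex : ∃ n, y n i ≠ 0 := ⟨n, hni⟩
    have hc : y hex.choose i ≠ 0 := hex.choose_spec
    simp only [hν, dif_pos hex]
    rcases lt_trichotomy hex.choose n with h | h | h
    · exact absurd (hdisj _ _ _ h hni) hc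
    · exact h
    · exact absurd (hdisj _ _ _ h hc) hni
  -- the linear map `T : (ℕ → 𝕜) → (ι → 𝕜)`
  set T : (ℕ → 𝕜) →ₗ[𝕜] (ι → 𝕜) :=
    { toFun := fun t i => t (ν i) * y (ν i) i
      map_add' := by intro a b; funext i; simp [add_mul]
      map_smul' := by intro c a; funext i; simp [mul_assoc] } with hT
  have hTcont : Continuous T := continuous_pi fun i =>
    (continuous_apply (ν i)).mul continuous_const
  have hTe : ∀ n, T (Pi.single n (1 : 𝕜)) = y n := by
    intro n
    funext i
    by_cases hni : y n i = 0
    · by_cases hνi : ν i = n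
      · simp [hT, hνi, hni]
      · simp [hT, Pi.single_apply, hνi, hni]
    · have hn : ν i = n := hνspec n i hni
      simp only [hT, LinearMap.coe_mk, AddHom.coe_mk]
      rw [hn, Pi.single_eq_same, one_mul]
  set q : Seminorm 𝕜 (ℕ → 𝕜) := p.comp T with hq
  have hq_lsc : LowerSemicontinuous q := by
    have : LowerSemicontinuous fun t => p (T t) := hp.comp hTcont
    exact this
  have hq_cont : Continuous q := by
    letI := TopologicalSpace.upgradeIsCompletelyMetrizable (ℕ → 𝕜)
    exact q.continuous_of_lowerSemicontinuous hq_lsc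
  -- derive a contradiction
  have hO : IsOpen (q ⁻¹' Set.Iio (1 : ℝ)) := (isOpen_Iio).preimage hq_cont
  have h0 : (0 : ℕ → 𝕜) ∈ q ⁻¹' Set.Iio (1 : ℝ) := by
    simp [Set.mem_preimage]
  obtain ⟨N, u, h1, h2⟩ := isOpen_pi_iff.mp hO 0 h0
  obtain ⟨m, hm⟩ := Infinite.exists_notMem_finset N
  have hym : 1 < p (y m) := hYp (S m)
  have hympos : 0 < p (y m) := lt_trans one_pos hym
  set c : 𝕜 := ((2 / p (y m) : ℝ) : 𝕜) with hc
  set t : ℕ → 𝕜 := c • (Pi.single m (1 : 𝕜) : ℕ → 𝕜) with ht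
  have hqle : q t < 1 := by
    apply h2
    intro i hi
    have hi' : i ∈ N := hi
    have him : m ≠ i := fun h => hm (h ▸ hi')
    have : t i = 0 := by
      simp [ht, Pi.single_apply, Ne.symm him]
    rw [this]
    simpa using (h1 i hi').2
  have hqeq : q t = 2 := by
    rw [ht]
    rw [map_smul_eq_mul, hq, Seminorm.comp_apply, hTe, hc, RCLike.norm_ofReal,
      abs_of_pos (by positivity), div_mul_cancel₀ _ hympos.ne']
  rw [hqeq] at hqle
  norm_num at hqle

/-- The product `ι → 𝕜` with the product topology is barrelled: every lower
semicontinuous seminorm is continuous. -/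
theorem aux_pi_continuous (p : Seminorm 𝕜 (ι → 𝕜)) (hp : LowerSemicontinuous p) :
    Continuous p := by
  classical
  obtain ⟨F, hF⟩ := aux_exists_finset_vanish p hp
  set g : (ι → 𝕜) → ℝ := fun x => ∑ i ∈ F, p (Pi.single i 1) * ‖x i‖ with hg
  have hg_cont : Continuous g :=
    continuous_finset_sum _ fun i _ => continuous_const.mul ((continuous_apply i).norm)
  have hbound : ∀ x, p x ≤ g x := by
    intro x
    set xF : ι → 𝕜 := ∑ i ∈ F, Pi.single i (x i) with hxF
    have hxF_app : ∀ i ∈ F, xF i = x i := by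
      intro i hi
      simp [hxF, Finset.sum_apply, Pi.single_apply, Finset.sum_ite_eq, hi]
    have hrest : p (x - xF) = 0 := by
      apply hF
      intro i hi
      simp [hxF_app i hi]
    have h1 : p x ≤ p xF := by
      calc p x = p (xF + (x - xF)) := by rw [show xF + (x - xF) = x from by abel]
      _ ≤ p xF + p (x - xF) := map_add_le_add p _ _
      _ = p xF := by rw [hrest, add_zero]
    calc p x ≤ p xF := h1
    _ ≤ ∑ i ∈ F, p (Pi.single i (x i)) := aux_seminorm_sum_le p F _
    _ = g x := by
        refine Finset.sum_congr rfl fun i _ => ?_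
        have : (Pi.single i (x i) : ι → 𝕜) = x i • (Pi.single i (1 : 𝕜) : ι → 𝕜) := by
          funext j
          by_cases h : j = i
          · subst h; simp
          · simp [Pi.single_eq_of_ne h]
        rw [this, map_smul_eq_mul, mul_comm]
  refine Seminorm.continuous_of_forall fun r hr => ?_
  have h0 : g 0 = 0 := by simp [hg]
  have h0mem : (0 : ι → 𝕜) ∈ g ⁻¹' Set.Iio r := by
    simp only [Set.mem_preimage, Set.mem_Iio, h0]; exact hr
  have hmem : g ⁻¹' Set.Iio r ∈ nhds (0 : ι → 𝕜) :=
    (isOpen_Iio.preimage hg_cont).mem_nhds h0mem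
  refine Filter.mem_of_superset hmem fun x hx => ?_
  rw [Seminorm.mem_ball_zero]
  exact lt_of_le_of_lt (hbound x) hx

end PiLemma

/-- The algebraic dual `E* = E →ₗ[𝕜] 𝕜` of a vector space over `𝕜 = ℝ` or `ℂ`,
equipped with the weak-* topology `σ(E*, E)` of pointwise convergence (the
topology induced from the product topology on `E → 𝕜`), is barrelled:
every lower semicontinuous seminorm on it is continuous. -/
theorem algebraicDual_barrelledSpace_weakStar
    {𝕜 : Type*} [RCLike 𝕜] {E : Type*} [AddCommGroup E] [Module 𝕜 E] :
    @BarrelledSpace 𝕜 (E →ₗ[𝕜] 𝕜) _ _ _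
      (TopologicalSpace.induced (fun (f : E →ₗ[𝕜] 𝕜) (x : E) => f x)
        (Pi.topologicalSpace (Y := fun _ : E => 𝕜))) := by
  classical
  letI τ : TopologicalSpace (E →ₗ[𝕜] 𝕜) :=
    TopologicalSpace.induced (fun (f : E →ₗ[𝕜] 𝕜) (x : E) => f x)
      (Pi.topologicalSpace (Y := fun _ : E => 𝕜))
  constructor
  intro p hp
  set b := Module.Basis.ofVectorSpace 𝕜 E with hb
  set e : (Module.Basis.ofVectorSpaceIndex 𝕜 E → 𝕜) ≃ₗ[𝕜] (E →ₗ[𝕜] 𝕜) := b.constr 𝕜 with he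
  have he_cont : Continuous e := by
    rw [continuous_induced_rng]
    refine continuous_pi fun x => ?_
    have : (fun c : Module.Basis.ofVectorSpaceIndex 𝕜 E → 𝕜 => e c x) =
        fun c => ∑ i ∈ (b.repr x).support, (b.repr x) i • c i := by
      funext c
      rw [he, Module.Basis.constr_apply, Finsupp.sum]
    rw [show ((fun f : E →ₗ[𝕜] 𝕜 => fun x : E => f x) ∘ ⇑e) = fun c x => e c x from rfl]
    show Continuous fun c : Module.Basis.ofVectorSpaceIndex 𝕜 E → 𝕜 => e c x
    rw [this]
    exact continuous_finset_sum _ fun i _ => (continuous_apply i).const_smul ((b.repr x) i)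
  have he_symm_cont : Continuous e.symm := by
    refine continuous_pi fun i => ?_
    have : (fun f : E →ₗ[𝕜] 𝕜 => e.symm f i) = fun f => f (b i) := by
      funext f
      have := e.apply_symm_apply f
      conv_rhs => rw [← this]
      rw [he, Module.Basis.constr_basis]
    rw [this]
    exact (continuous_apply (b i)).comp continuous_induced_dom
  set q : Seminorm 𝕜 (Module.Basis.ofVectorSpaceIndex 𝕜 E → 𝕜) := p.comp (e : _ →ₗ[𝕜] _) with hq
  have hq_lsc : LowerSemicontinuous q := by
    have : LowerSemicontinuous fun c => p (e c) := hp.comp he_cont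
    exact this
  have hq_cont : Continuous q := aux_pi_continuous q hq_lsc
  have : (p : (E →ₗ[𝕜] 𝕜) → ℝ) = fun f => q (e.symm f) := by
    funext f
    rw [hq, Seminorm.comp_apply]
    simp
  rw [this]
  exact hq_cont.comp he_symm_cont
end

section
/- Let Ω ⊆ ℝⁿ be open and let (Ωᵢ)_{i ∈ I} be a family of open sets with Ω = ⋃_{i ∈ I} Ωᵢ. Let T ∈ D*(Ω) be a linear functional on D(Ω) such that for every i ∈ I and every φ ∈ D(Ω) with tsupport φ ⊆ Ωᵢ one has T(φ) = 0. Then T = 0, i.e., T(φ) = 0 for every φ ∈ D(Ω). -/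
/-- `D(Ω)`: smooth functions `ℝⁿ → ℂ` with compact support contained in `Ω`. -/
noncomputable def Dspace (n : ℕ) (Ω : Set (Fin n → ℝ)) :
    Submodule ℂ ((Fin n → ℝ) → ℂ) where
  carrier := {φ | ContDiff ℝ (⊤ : ℕ∞) φ ∧ HasCompactSupport φ ∧ tsupport φ ⊆ Ω}
  add_mem' hf hg := ⟨hf.1.add hg.1, hf.2.1.add hg.2.1,
    (tsupport_add _ _).trans (Set.union_subset hf.2.2 hg.2.2)⟩
  zero_mem' := ⟨contDiff_const, HasCompactSupport.zero,
    by simp [tsupport, Function.support_zero]⟩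
  smul_mem' c f hf := ⟨hf.1.const_smul c,
    hf.2.1.mono (Function.support_const_smul_subset c f),
    (closure_mono (Function.support_const_smul_subset c f)).trans hf.2.2⟩

lemma mem_Dspace {n : ℕ} {Ω : Set (Fin n → ℝ)} {φ : (Fin n → ℝ) → ℂ} :
    φ ∈ Dspace n Ω ↔
      ContDiff ℝ (⊤ : ℕ∞) φ ∧ HasCompactSupport φ ∧ tsupport φ ⊆ Ω :=
  Iff.rfl

/-- Locality: if a linear functional `T` on `D(Ω)` vanishes on every member of an
open cover of `Ω` (i.e. on all test functions supported in some `Ωᵢ`), then `T = 0`. -/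
theorem algebraicDual_local_vanishing
    {n : ℕ} {Ω : Set (Fin n → ℝ)} (hΩ : IsOpen Ω)
    {ι : Type*} (Ωi : ι → Set (Fin n → ℝ))
    (hopen : ∀ i, IsOpen (Ωi i)) (hcover : Ω = ⋃ i, Ωi i)
    (T : Dspace n Ω →ₗ[ℂ] ℂ)
    (hT : ∀ i, ∀ φ : Dspace n Ω, tsupport (φ : (Fin n → ℝ) → ℂ) ⊆ Ωi i → T φ = 0) :
    ∀ φ : Dspace n Ω, T φ = 0 := by
  intro φ
  obtain ⟨hsm, hcs, hsub⟩ := φ.2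
  have hsΩ : tsupport (φ : (Fin n → ℝ) → ℂ) ⊆ ⋃ i, Ωi i := hcover ▸ hsub
  obtain ⟨f, hf⟩ := SmoothPartitionOfUnity.exists_isSubordinate
    (I := modelWithCornersSelf ℝ (Fin n → ℝ)) (isClosed_tsupport _) Ωi hopen hsΩ
  -- the finitely many indices whose support meets `tsupport φ`
  have hfin : {i : ι | (Function.support (f i) ∩ tsupport (φ : (Fin n → ℝ) → ℂ)).Nonempty}.Finite :=
    f.locallyFinite.finite_nonempty_inter_compact hcs
  set F : Finset ι := hfin.toFinset with hF
  -- the pieces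
  have hψmem : ∀ i : ι, (fun x => ((f i x : ℝ) : ℂ) * (φ : (Fin n → ℝ) → ℂ) x) ∈ Dspace n Ω := by
    intro i
    have hfi : ContDiff ℝ (⊤ : ℕ∞) (f i) := (f i).contMDiff.contDiff
    have hsupp : Function.support (fun x => ((f i x : ℝ) : ℂ) * (φ : (Fin n → ℝ) → ℂ) x)
        ⊆ Function.support (φ : (Fin n → ℝ) → ℂ) := by
      intro x hx
      simp only [Function.mem_support] at hx ⊢
      intro h; apply hx; simp [h]
    refine ⟨(Complex.ofRealCLM.contDiff.comp hfi).mul hsm, ?_, ?_⟩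
    · exact hcs.mono hsupp
    · exact (closure_mono hsupp).trans hsub
  set ψ : ι → Dspace n Ω := fun i => ⟨_, hψmem i⟩ with hψ
  -- φ equals the finite sum of the pieces
  have hsum : φ = ∑ i ∈ F, ψ i := by
    apply Subtype.ext
    have : ((∑ i ∈ F, ψ i : Dspace n Ω) : (Fin n → ℝ) → ℂ)
        = ∑ i ∈ F, fun x => ((f i x : ℝ) : ℂ) * (φ : (Fin n → ℝ) → ℂ) x := by
      push_cast
      rfl
    rw [this]
    funext x
    simp only [Finset.sum_apply]
    by_cases hx : x ∈ tsupport (φ : (Fin n → ℝ) → ℂ)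
    · have h1 : ∑ᶠ i, f i x = 1 := f.sum_eq_one hx
      have h2 : ∑ᶠ i, f i x = ∑ i ∈ F, f i x := by
        refine finsum_eq_sum_of_support_subset _ ?_
        intro i hi
        simp only [Function.mem_support] at hi
        simp only [hF, Set.Finite.coe_toFinset]
        exact ⟨x, hi, hx⟩
      have : (((∑ i ∈ F, f i x : ℝ)) : ℂ) = 1 := by rw [← h2, h1]; norm_num
      calc (φ : (Fin n → ℝ) → ℂ) x = (((∑ i ∈ F, f i x : ℝ)) : ℂ) * (φ : (Fin n → ℝ) → ℂ) x := by
            rw [this, one_mul]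
        _ = ∑ i ∈ F, ((f i x : ℝ) : ℂ) * (φ : (Fin n → ℝ) → ℂ) x := by
            push_cast; rw [Finset.sum_mul]
    · have hφx : (φ : (Fin n → ℝ) → ℂ) x = 0 := image_eq_zero_of_notMem_tsupport hx
      simp [hφx]
  -- each piece is killed by `T`
  have hTψ : ∀ i, T (ψ i) = 0 := by
    intro i
    refine hT i (ψ i) ?_
    have hsupp : Function.support ((ψ i : Dspace n Ω) : (Fin n → ℝ) → ℂ)
        ⊆ Function.support (f i) := by
      intro x hx
      simp only [hψ, Function.mem_support] at hx ⊢
      intro h; apply hx; simp [h]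
    exact (closure_mono hsupp).trans (hf i)
  rw [hsum, map_sum]
  exact Finset.sum_eq_zero fun i _ => hTψ i
end

section
/- Let Ω ⊆ ℝⁿ be open and let (Ωᵢ)_{i ∈ I} be a family of open sets with Ω = ⋃_{i ∈ I} Ωᵢ. For each i ∈ I let Tᵢ ∈ D*(Ωᵢ) be a linear functional on D(Ωᵢ), and assume the family is compatible: whenever φ is a smooth function with compact topological support contained in Ωᵢ ∩ Ωⱼ, then Tᵢ(φ) = Tⱼ(φ). Then there exists a unique linear functional T ∈ D*(Ω) such that for every i ∈ I and every φ ∈ D(Ω) with tsupport φ ⊆ Ωᵢ one has T(φ) = Tᵢ(φ). -/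
open Function Set
open scoped Manifold

section Aux

variable {n : ℕ} {ι : Type*}

/-- Multiplication by a member of a smooth partition of unity, as a function into `ℂ`. -/
noncomputable def pmul {s : Set (Fin n → ℝ)}
    (ρ : SmoothPartitionOfUnity ι 𝓘(ℝ, Fin n → ℝ) (Fin n → ℝ) s) (j : ι)
    (φ : (Fin n → ℝ) → ℂ) : (Fin n → ℝ) → ℂ :=
  fun x => (ρ j x : ℂ) * φ x

lemma pmul_contDiff {s : Set (Fin n → ℝ)}
    (ρ : SmoothPartitionOfUnity ι 𝓘(ℝ, Fin n → ℝ) (Fin n → ℝ) s) (j : ι)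
    {φ : (Fin n → ℝ) → ℂ} (hφ : ContDiff ℝ (⊤ : ℕ∞) φ) :
    ContDiff ℝ (⊤ : ℕ∞) (pmul ρ j φ) := by
  have h1 : ContDiff ℝ (⊤ : ℕ∞) (ρ j : (Fin n → ℝ) → ℝ) := by
    have := (ρ j).contMDiff
    rwa [contMDiff_iff_contDiff] at this
  exact (Complex.ofRealCLM.contDiff.comp h1).mul hφ

lemma pmul_support {s : Set (Fin n → ℝ)}
    (ρ : SmoothPartitionOfUnity ι 𝓘(ℝ, Fin n → ℝ) (Fin n → ℝ) s) (j : ι)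
    (φ : (Fin n → ℝ) → ℂ) :
    support (pmul ρ j φ) ⊆ support (ρ j) ∩ support φ := by
  intro x hx
  simp only [pmul, mem_support, ne_eq] at hx
  constructor <;>
    · simp only [mem_support, ne_eq]
      intro h
      apply hx
      simp [pmul, h]

lemma pmul_tsupport_left {s : Set (Fin n → ℝ)}
    (ρ : SmoothPartitionOfUnity ι 𝓘(ℝ, Fin n → ℝ) (Fin n → ℝ) s) (j : ι)
    (φ : (Fin n → ℝ) → ℂ) :
    tsupport (pmul ρ j φ) ⊆ tsupport (ρ j) :=
  closure_mono ((pmul_support ρ j φ).trans inter_subset_left)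

lemma pmul_tsupport_right {s : Set (Fin n → ℝ)}
    (ρ : SmoothPartitionOfUnity ι 𝓘(ℝ, Fin n → ℝ) (Fin n → ℝ) s) (j : ι)
    (φ : (Fin n → ℝ) → ℂ) :
    tsupport (pmul ρ j φ) ⊆ tsupport φ :=
  closure_mono ((pmul_support ρ j φ).trans inter_subset_right)

lemma pmul_hcs {s : Set (Fin n → ℝ)}
    (ρ : SmoothPartitionOfUnity ι 𝓘(ℝ, Fin n → ℝ) (Fin n → ℝ) s) (j : ι)
    {φ : (Fin n → ℝ) → ℂ} (hφ : HasCompactSupport φ) :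
    HasCompactSupport (pmul ρ j φ) :=
  hφ.mono ((pmul_support ρ j φ).trans inter_subset_right)

lemma pmul_sum {s : Set (Fin n → ℝ)}
    (ρ : SmoothPartitionOfUnity ι 𝓘(ℝ, Fin n → ℝ) (Fin n → ℝ) s) (j : ι)
    (t : Finset ι) (ψ : ι → (Fin n → ℝ) → ℂ) :
    pmul ρ j (∑ i ∈ t, ψ i) = ∑ i ∈ t, pmul ρ j (ψ i) := by
  funext x
  simp [pmul, Finset.mul_sum]

/-- On a set where the partition sums to 1, a function supported there is the sum
of its `pmul`s over a sufficiently large finite set. -/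
lemma eq_sum_pmul {s : Set (Fin n → ℝ)}
    (ρ : SmoothPartitionOfUnity ι 𝓘(ℝ, Fin n → ℝ) (Fin n → ℝ) s)
    (t : Finset ι) {φ : (Fin n → ℝ) → ℂ} (hφs : tsupport φ ⊆ s)
    (ht : ∀ i x, x ∈ tsupport φ → ρ i x ≠ 0 → i ∈ t) :
    φ = ∑ i ∈ t, pmul ρ i φ := by
  funext x
  by_cases hx : x ∈ tsupport φ
  · have hsupp : support (fun i => ρ i x) ⊆ ↑t := fun i hi => ht i x hx hi
    have h1 : ∑ i ∈ t, ρ i x = 1 := by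
      rw [← finsum_eq_sum_of_support_subset _ hsupp]
      exact ρ.sum_eq_one (hφs hx)
    have : ∑ i ∈ t, pmul ρ i φ x = (↑(∑ i ∈ t, ρ i x) : ℂ) * φ x := by
      push_cast
      rw [Finset.sum_mul]
      rfl
    simp only [Finset.sum_apply]
    rw [this, h1]
    simp
  · have hφx : φ x = 0 := image_eq_zero_of_notMem_tsupport hx
    simp only [Finset.sum_apply, pmul, hφx, mul_zero, Finset.sum_const_zero]

/-- Key decomposition lemma. -/
lemma exists_decomposition (Ωi : ι → Set (Fin n → ℝ)) (hopen : ∀ i, IsOpen (Ωi i))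
    {φ : (Fin n → ℝ) → ℂ} (h1 : ContDiff ℝ (⊤ : ℕ∞) φ) (h2 : HasCompactSupport φ)
    (hsub : tsupport φ ⊆ ⋃ i, Ωi i) :
    ∃ (t : Finset ι) (ψ : ι → (Fin n → ℝ) → ℂ),
      (∀ i, ContDiff ℝ (⊤ : ℕ∞) (ψ i)) ∧ (∀ i, HasCompactSupport (ψ i)) ∧
      (∀ i, tsupport (ψ i) ⊆ Ωi i) ∧ φ = ∑ i ∈ t, ψ i := by
  obtain ⟨ρ, hρ⟩ := SmoothPartitionOfUnity.exists_isSubordinate 𝓘(ℝ, Fin n → ℝ)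
    (isClosed_tsupport φ) Ωi hopen hsub
  have hfin : {i | (support (ρ i) ∩ tsupport φ).Nonempty}.Finite :=
    ρ.locallyFinite.finite_nonempty_inter_compact h2
  refine ⟨hfin.toFinset, fun i => pmul ρ i φ,
    fun i => pmul_contDiff ρ i h1, fun i => pmul_hcs ρ i h2,
    fun i => (pmul_tsupport_left ρ i φ).trans (hρ i), ?_⟩
  refine eq_sum_pmul ρ _ subset_rfl fun i x hx hρx => ?_
  simp only [Finite.mem_toFinset, mem_setOf_eq]
  exact ⟨x, hρx, hx⟩

variable (Ωi : ι → Set (Fin n → ℝ)) (Ti : ∀ i, Dspace n (Ωi i) →ₗ[ℂ] ℂ)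

open scoped Classical in
/-- Totalized version of `Ti`. -/
noncomputable def TT (i : ι) (χ : (Fin n → ℝ) → ℂ) : ℂ :=
  if h : χ ∈ Dspace n (Ωi i) then Ti i ⟨χ, h⟩ else 0

lemma TT_eq {i : ι} {χ : (Fin n → ℝ) → ℂ} (h : χ ∈ Dspace n (Ωi i)) :
    TT Ωi Ti i χ = Ti i ⟨χ, h⟩ := dif_pos h

lemma TT_zero (i : ι) : TT Ωi Ti i 0 = 0 := by
  rw [TT_eq Ωi Ti (Dspace n (Ωi i)).zero_mem]
  exact map_zero (Ti i)

lemma TT_add {i : ι} {χ χ' : (Fin n → ℝ) → ℂ} (h : χ ∈ Dspace n (Ωi i))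
    (h' : χ' ∈ Dspace n (Ωi i)) :
    TT Ωi Ti i (χ + χ') = TT Ωi Ti i χ + TT Ωi Ti i χ' := by
  rw [TT_eq Ωi Ti h, TT_eq Ωi Ti h', TT_eq Ωi Ti ((Dspace n (Ωi i)).add_mem h h')]
  exact map_add (Ti i) ⟨χ, h⟩ ⟨χ', h'⟩

lemma TT_smul {i : ι} (c : ℂ) {χ : (Fin n → ℝ) → ℂ} (h : χ ∈ Dspace n (Ωi i)) :
    TT Ωi Ti i (c • χ) = c * TT Ωi Ti i χ := by
  rw [TT_eq Ωi Ti h, TT_eq Ωi Ti ((Dspace n (Ωi i)).smul_mem c h)]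
  exact map_smul (Ti i) c ⟨χ, h⟩

lemma TT_sum {i : ι} (u : Finset ι) {χ : ι → (Fin n → ℝ) → ℂ}
    (h : ∀ j ∈ u, χ j ∈ Dspace n (Ωi i)) :
    TT Ωi Ti i (∑ j ∈ u, χ j) = ∑ j ∈ u, TT Ωi Ti i (χ j) := by
  classical
  induction u using Finset.induction_on with
  | empty => simpa using TT_zero Ωi Ti i
  | insert j u' hju ih =>
    rw [Finset.sum_insert hju, Finset.sum_insert hju,
      TT_add Ωi Ti (h j (Finset.mem_insert_self j u'))
        (Submodule.sum_mem _ fun k hk => h k (Finset.mem_insert_of_mem hk)),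
      ih fun k hk => h k (Finset.mem_insert_of_mem hk)]

lemma TT_ite {i : ι} (P : Prop) [Decidable P] (χ : (Fin n → ℝ) → ℂ) :
    TT Ωi Ti i (if P then χ else 0) = if P then TT Ωi Ti i χ else 0 := by
  by_cases hP : P <;> simp [hP, TT_zero Ωi Ti i]

end Aux

section Glue

variable {n : ℕ} {ι : Type*}
variable {Ωi : ι → Set (Fin n → ℝ)} (hopen : ∀ i, IsOpen (Ωi i))
variable (Ti : ∀ i, Dspace n (Ωi i) →ₗ[ℂ] ℂ)
variable (hTT : ∀ i j, ∀ χ : (Fin n → ℝ) → ℂ, ContDiff ℝ (⊤ : ℕ∞) χ →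
    HasCompactSupport χ → tsupport χ ⊆ Ωi i ∩ Ωi j → TT Ωi Ti i χ = TT Ωi Ti j χ)

include hopen hTT

/-- If a compatible valid family sums to zero, the sum of the values is zero. -/
lemma key_zero (t : Finset ι) (ψ : ι → (Fin n → ℝ) → ℂ)
    (h1 : ∀ i, ContDiff ℝ (⊤ : ℕ∞) (ψ i)) (h2 : ∀ i, HasCompactSupport (ψ i))
    (h3 : ∀ i, tsupport (ψ i) ⊆ Ωi i) (hsum : ∑ i ∈ t, ψ i = 0) :
    ∑ i ∈ t, TT Ωi Ti i (ψ i) = 0 := by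
  classical
  set s : Set (Fin n → ℝ) := ⋃ i ∈ t, tsupport (ψ i) with hs
  have hsclosed : IsClosed s := t.finite_toSet.isClosed_biUnion fun i _ => isClosed_tsupport _
  have hscompact : IsCompact s := t.finite_toSet.isCompact_biUnion fun i _ => h2 i
  have hssub : s ⊆ ⋃ j, Ωi j :=
    Set.iUnion₂_subset fun i _ => (h3 i).trans (Set.subset_iUnion Ωi i)
  obtain ⟨ρ, hρ⟩ := SmoothPartitionOfUnity.exists_isSubordinate 𝓘(ℝ, Fin n → ℝ)
    hsclosed Ωi hopen hssub
  have hfin : {j | (support (ρ j) ∩ s).Nonempty}.Finite :=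
    ρ.locallyFinite.finite_nonempty_inter_compact hscompact
  set u := hfin.toFinset with hu
  -- each ψ i decomposes via ρ over u
  have hdec : ∀ i ∈ t, ψ i = ∑ j ∈ u, pmul ρ j (ψ i) := by
    intro i hi
    refine eq_sum_pmul ρ u (fun x hx => Set.mem_biUnion hi hx) fun j x hx hρx => ?_
    simp only [hu, Finite.mem_toFinset, mem_setOf_eq]
    exact ⟨x, hρx, Set.mem_biUnion hi hx⟩
  have hmem : ∀ i j, pmul ρ j (ψ i) ∈ Dspace n (Ωi i) :=
    fun i j => mem_Dspace.mpr ⟨pmul_contDiff ρ j (h1 i), pmul_hcs ρ j (h2 i),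
      (pmul_tsupport_right ρ j (ψ i)).trans (h3 i)⟩
  calc ∑ i ∈ t, TT Ωi Ti i (ψ i)
      = ∑ i ∈ t, ∑ j ∈ u, TT Ωi Ti i (pmul ρ j (ψ i)) := by
        refine Finset.sum_congr rfl fun i hi => ?_
        conv_lhs => rw [hdec i hi]
        exact TT_sum Ωi Ti u fun j _ => hmem i j
    _ = ∑ i ∈ t, ∑ j ∈ u, TT Ωi Ti j (pmul ρ j (ψ i)) := by
        refine Finset.sum_congr rfl fun i _ => Finset.sum_congr rfl fun j _ => ?_
        exact hTT i j _ (pmul_contDiff ρ j (h1 i)) (pmul_hcs ρ j (h2 i))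
          (Set.subset_inter ((pmul_tsupport_right ρ j (ψ i)).trans (h3 i))
            ((pmul_tsupport_left ρ j (ψ i)).trans (hρ j)))
    _ = ∑ j ∈ u, ∑ i ∈ t, TT Ωi Ti j (pmul ρ j (ψ i)) := Finset.sum_comm
    _ = ∑ j ∈ u, TT Ωi Ti j (∑ i ∈ t, pmul ρ j (ψ i)) := by
        refine Finset.sum_congr rfl fun j _ => ?_
        exact (TT_sum Ωi Ti t fun i _ => by
          have := hmem i j
          exact mem_Dspace.mpr ⟨pmul_contDiff ρ j (h1 i), pmul_hcs ρ j (h2 i),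
            (pmul_tsupport_left ρ j (ψ i)).trans (hρ j)⟩).symm
    _ = 0 := by
        refine Finset.sum_eq_zero fun j _ => ?_
        rw [← pmul_sum ρ j t ψ, hsum]
        have : pmul ρ j (0 : (Fin n → ℝ) → ℂ) = 0 := by
          funext x; simp [pmul]
        rw [this]
        exact TT_zero Ωi Ti j

/-- Independence of the decomposition. -/
lemma key_indep (t t' : Finset ι) (ψ ψ' : ι → (Fin n → ℝ) → ℂ)
    (h1 : ∀ i, ContDiff ℝ (⊤ : ℕ∞) (ψ i)) (h2 : ∀ i, HasCompactSupport (ψ i))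
    (h3 : ∀ i, tsupport (ψ i) ⊆ Ωi i)
    (h1' : ∀ i, ContDiff ℝ (⊤ : ℕ∞) (ψ' i)) (h2' : ∀ i, HasCompactSupport (ψ' i))
    (h3' : ∀ i, tsupport (ψ' i) ⊆ Ωi i)
    (hsum : ∑ i ∈ t, ψ i = ∑ i ∈ t', ψ' i) :
    ∑ i ∈ t, TT Ωi Ti i (ψ i) = ∑ i ∈ t', TT Ωi Ti i (ψ' i) := by
  classical
  set a : ι → (Fin n → ℝ) → ℂ := fun i => if i ∈ t then ψ i else 0 with ha
  set b : ι → (Fin n → ℝ) → ℂ := fun i => if i ∈ t' then ψ' i else 0 with hb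
  have hma : ∀ i, a i ∈ Dspace n (Ωi i) := by
    intro i; rw [ha]; dsimp only; split
    · exact mem_Dspace.mpr ⟨h1 i, h2 i, h3 i⟩
    · exact (Dspace n (Ωi i)).zero_mem
  have hmb : ∀ i, b i ∈ Dspace n (Ωi i) := by
    intro i; rw [hb]; dsimp only; split
    · exact mem_Dspace.mpr ⟨h1' i, h2' i, h3' i⟩
    · exact (Dspace n (Ωi i)).zero_mem
  set χ : ι → (Fin n → ℝ) → ℂ := fun i => a i + (-1 : ℂ) • b i with hχ
  have hmχ : ∀ i, χ i ∈ Dspace n (Ωi i) := fun i =>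
    (Dspace n (Ωi i)).add_mem (hma i) ((Dspace n (Ωi i)).smul_mem _ (hmb i))
  have hχ1 : ∀ i, ContDiff ℝ (⊤ : ℕ∞) (χ i) := fun i => (mem_Dspace.mp (hmχ i)).1
  have hχ2 : ∀ i, HasCompactSupport (χ i) := fun i => (mem_Dspace.mp (hmχ i)).2.1
  have hχ3 : ∀ i, tsupport (χ i) ⊆ Ωi i := fun i => (mem_Dspace.mp (hmχ i)).2.2
  have hχsum : ∑ i ∈ t ∪ t', χ i = 0 := by
    have hab : ∑ x ∈ t ∪ t', a x = ∑ x ∈ t ∪ t', b x := by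
      rw [ha, hb]
      rw [Finset.sum_ite_mem, Finset.sum_ite_mem, Finset.union_inter_cancel_left,
        Finset.union_inter_cancel_right, hsum]
    rw [hχ]
    simp only [Finset.sum_add_distrib, neg_one_smul, hab]
    rw [← Finset.sum_add_distrib]
    simp
  have hzero := key_zero hopen Ti hTT (t ∪ t') χ hχ1 hχ2 hχ3 hχsum
  have hsplit : ∑ i ∈ t ∪ t', TT Ωi Ti i (χ i)
      = ∑ i ∈ t, TT Ωi Ti i (ψ i) - ∑ i ∈ t', TT Ωi Ti i (ψ' i) := by
    have hterm : ∀ i, TT Ωi Ti i (χ i)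
        = (if i ∈ t then TT Ωi Ti i (ψ i) else 0)
          - (if i ∈ t' then TT Ωi Ti i (ψ' i) else 0) := by
      intro i
      rw [hχ]
      dsimp only
      rw [TT_add Ωi Ti (hma i) ((Dspace n (Ωi i)).smul_mem _ (hmb i)),
        TT_smul Ωi Ti _ (hmb i), ha, hb]
      dsimp only
      rw [TT_ite Ωi Ti, TT_ite Ωi Ti]
      ring
    rw [Finset.sum_congr rfl fun i _ => hterm i, Finset.sum_sub_distrib,
      Finset.sum_ite_mem, Finset.sum_ite_mem, Finset.union_inter_cancel_left,
      Finset.union_inter_cancel_right]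
  rw [hsplit] at hzero
  exact sub_eq_zero.mp hzero
end Glue

/-- Gluing: a compatible family of linear functionals `Tᵢ` on `D(Ωᵢ)` for an open
cover `Ω = ⋃ Ωᵢ` glues to a unique linear functional `T` on `D(Ω)` restricting to
each `Tᵢ`. -/
theorem algebraicDual_gluing
    {n : ℕ} {Ω : Set (Fin n → ℝ)} (hΩ : IsOpen Ω)
    {ι : Type*} (Ωi : ι → Set (Fin n → ℝ))
    (hopen : ∀ i, IsOpen (Ωi i)) (hcover : Ω = ⋃ i, Ωi i)
    (Ti : ∀ i, Dspace n (Ωi i) →ₗ[ℂ] ℂ)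
    (hcompat : ∀ i j, ∀ φ : (Fin n → ℝ) → ℂ,
      ∀ (h1 : ContDiff ℝ (⊤ : ℕ∞) φ) (h2 : HasCompactSupport φ)
        (hij : tsupport φ ⊆ Ωi i ∩ Ωi j),
      Ti i ⟨φ, mem_Dspace.mpr ⟨h1, h2, hij.trans Set.inter_subset_left⟩⟩ =
      Ti j ⟨φ, mem_Dspace.mpr ⟨h1, h2, hij.trans Set.inter_subset_right⟩⟩) :
    ∃! T : Dspace n Ω →ₗ[ℂ] ℂ,
      ∀ i, ∀ φ : Dspace n Ω, ∀ hsup : tsupport (φ : (Fin n → ℝ) → ℂ) ⊆ Ωi i,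
        T φ = Ti i ⟨(φ : (Fin n → ℝ) → ℂ),
          mem_Dspace.mpr ⟨(mem_Dspace.mp φ.2).1, (mem_Dspace.mp φ.2).2.1, hsup⟩⟩ := by
  classical
  -- the compatibility condition in `TT` form
  have hTT : ∀ i j, ∀ χ : (Fin n → ℝ) → ℂ, ContDiff ℝ (⊤ : ℕ∞) χ →
      HasCompactSupport χ → tsupport χ ⊆ Ωi i ∩ Ωi j →
      TT Ωi Ti i χ = TT Ωi Ti j χ := by
    intro i j χ hc hs hij
    rw [TT_eq Ωi Ti (mem_Dspace.mpr ⟨hc, hs, hij.trans Set.inter_subset_left⟩),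
      TT_eq Ωi Ti (mem_Dspace.mpr ⟨hc, hs, hij.trans Set.inter_subset_right⟩)]
    exact hcompat i j χ hc hs hij
  -- choose a decomposition for every φ in D(Ω)
  have hdec : ∀ φ : Dspace n Ω, ∃ (t : Finset ι) (ψ : ι → (Fin n → ℝ) → ℂ),
      (∀ i, ContDiff ℝ (⊤ : ℕ∞) (ψ i)) ∧ (∀ i, HasCompactSupport (ψ i)) ∧
      (∀ i, tsupport (ψ i) ⊆ Ωi i) ∧ (φ : (Fin n → ℝ) → ℂ) = ∑ i ∈ t, ψ i := fun φ =>
    exists_decomposition Ωi hopen (mem_Dspace.mp φ.2).1 (mem_Dspace.mp φ.2).2.1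
      ((mem_Dspace.mp φ.2).2.2.trans (hcover ▸ subset_rfl))
  choose t ψ hψ1 hψ2 hψ3 hψsum using hdec
  set F : Dspace n Ω → ℂ := fun φ => ∑ i ∈ t φ, TT Ωi Ti i (ψ φ i) with hF
  -- F is independent of the decomposition
  have hkey : ∀ (φ : Dspace n Ω) (u : Finset ι) (χ : ι → (Fin n → ℝ) → ℂ),
      (∀ i, χ i ∈ Dspace n (Ωi i)) → (φ : (Fin n → ℝ) → ℂ) = ∑ i ∈ u, χ i →
      F φ = ∑ i ∈ u, TT Ωi Ti i (χ i) := by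
    intro φ u χ hm hsum
    exact key_indep hopen Ti hTT (t φ) u (ψ φ) χ (hψ1 φ) (hψ2 φ) (hψ3 φ)
      (fun i => (mem_Dspace.mp (hm i)).1) (fun i => (mem_Dspace.mp (hm i)).2.1)
      (fun i => (mem_Dspace.mp (hm i)).2.2) ((hψsum φ).symm.trans hsum)
  -- additivity
  have hadd : ∀ φ φ' : Dspace n Ω, F (φ + φ') = F φ + F φ' := by
    intro φ φ'
    set a : ι → (Fin n → ℝ) → ℂ := fun i => if i ∈ t φ then ψ φ i else 0 with ha
    set b : ι → (Fin n → ℝ) → ℂ := fun i => if i ∈ t φ' then ψ φ' i else 0 with hb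
    have hma : ∀ i, a i ∈ Dspace n (Ωi i) := by
      intro i; rw [ha]; dsimp only; split
      · exact mem_Dspace.mpr ⟨hψ1 φ i, hψ2 φ i, hψ3 φ i⟩
      · exact (Dspace n (Ωi i)).zero_mem
    have hmb : ∀ i, b i ∈ Dspace n (Ωi i) := by
      intro i; rw [hb]; dsimp only; split
      · exact mem_Dspace.mpr ⟨hψ1 φ' i, hψ2 φ' i, hψ3 φ' i⟩
      · exact (Dspace n (Ωi i)).zero_mem
    have hsum : ((φ + φ' : Dspace n Ω) : (Fin n → ℝ) → ℂ)
        = ∑ i ∈ t φ ∪ t φ', (a i + b i) := by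
      rw [Finset.sum_add_distrib, ha, hb]
      rw [Finset.sum_ite_mem, Finset.sum_ite_mem, Finset.union_inter_cancel_left,
        Finset.union_inter_cancel_right]
      push_cast
      rw [hψsum φ, hψsum φ']
    rw [hkey (φ + φ') (t φ ∪ t φ') (fun i => a i + b i)
      (fun i => (Dspace n (Ωi i)).add_mem (hma i) (hmb i)) hsum]
    have : ∀ i, TT Ωi Ti i (a i + b i) = TT Ωi Ti i (a i) + TT Ωi Ti i (b i) :=
      fun i => TT_add Ωi Ti (hma i) (hmb i)
    rw [Finset.sum_congr rfl fun i _ => this i, Finset.sum_add_distrib]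
    congr 1
    · rw [ha]
      simp only
      rw [Finset.sum_congr rfl fun i _ => TT_ite Ωi Ti (i ∈ t φ) (ψ φ i),
        Finset.sum_ite_mem, Finset.union_inter_cancel_left]
    · rw [hb]
      simp only
      rw [Finset.sum_congr rfl fun i _ => TT_ite Ωi Ti (i ∈ t φ') (ψ φ' i),
        Finset.sum_ite_mem, Finset.union_inter_cancel_right]
  -- homogeneity
  have hsmul : ∀ (c : ℂ) (φ : Dspace n Ω), F (c • φ) = c * F φ := by
    intro c φ
    have hm : ∀ i, c • ψ φ i ∈ Dspace n (Ωi i) :=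
      fun i => (Dspace n (Ωi i)).smul_mem c (mem_Dspace.mpr ⟨hψ1 φ i, hψ2 φ i, hψ3 φ i⟩)
    have hsum : ((c • φ : Dspace n Ω) : (Fin n → ℝ) → ℂ) = ∑ i ∈ t φ, c • ψ φ i := by
      rw [← Finset.smul_sum]
      push_cast
      rw [hψsum φ]
    rw [hkey (c • φ) (t φ) (fun i => c • ψ φ i) hm hsum]
    rw [Finset.sum_congr rfl fun i _ =>
      TT_smul Ωi Ti c (mem_Dspace.mpr ⟨hψ1 φ i, hψ2 φ i, hψ3 φ i⟩), ← Finset.mul_sum]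
  set T : Dspace n Ω →ₗ[ℂ] ℂ :=
    { toFun := F, map_add' := hadd, map_smul' := fun c φ => hsmul c φ } with hT
  -- restriction property
  have hrestrict : ∀ i, ∀ φ : Dspace n Ω, ∀ hsup : tsupport (φ : (Fin n → ℝ) → ℂ) ⊆ Ωi i,
      T φ = Ti i ⟨(φ : (Fin n → ℝ) → ℂ),
        mem_Dspace.mpr ⟨(mem_Dspace.mp φ.2).1, (mem_Dspace.mp φ.2).2.1, hsup⟩⟩ := by
    intro i φ hsup
    set χ : ι → (Fin n → ℝ) → ℂ :=
      fun j => if j = i then (φ : (Fin n → ℝ) → ℂ) else 0 with hχ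
    have hm : ∀ j, χ j ∈ Dspace n (Ωi j) := by
      intro j; rw [hχ]; dsimp only; split
      · rename_i hj
        subst hj
        exact mem_Dspace.mpr ⟨(mem_Dspace.mp φ.2).1, (mem_Dspace.mp φ.2).2.1, hsup⟩
      · exact (Dspace n (Ωi j)).zero_mem
    have hsum : (φ : (Fin n → ℝ) → ℂ) = ∑ j ∈ {i}, χ j := by
      simp [hχ]
    have := hkey φ {i} χ hm hsum
    rw [Finset.sum_singleton] at this
    have hχi : χ i = (φ : (Fin n → ℝ) → ℂ) := by rw [hχ]; simp
    rw [show T φ = F φ from rfl, this]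
    rw [show TT Ωi Ti i (χ i)
        = TT Ωi Ti i ((φ : (Fin n → ℝ) → ℂ)) from by rw [hχi]]
    exact TT_eq Ωi Ti _
  refine ⟨T, hrestrict, ?_⟩
  -- uniqueness
  intro T' hT'
  ext φ
  have hmemΩ : ∀ i, ψ φ i ∈ Dspace n Ω :=
    fun i => mem_Dspace.mpr ⟨hψ1 φ i, hψ2 φ i,
      (hψ3 φ i).trans (hcover ▸ Set.subset_iUnion Ωi i)⟩
  have hφsum : φ = ∑ i ∈ t φ, (⟨ψ φ i, hmemΩ i⟩ : Dspace n Ω) := by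
    apply Subtype.ext
    push_cast
    exact hψsum φ
  have hTi : ∀ (TT' : Dspace n Ω →ₗ[ℂ] ℂ),
      (∀ i, ∀ ξ : Dspace n Ω, ∀ hsup : tsupport (ξ : (Fin n → ℝ) → ℂ) ⊆ Ωi i,
        TT' ξ = Ti i ⟨(ξ : (Fin n → ℝ) → ℂ),
          mem_Dspace.mpr ⟨(mem_Dspace.mp ξ.2).1, (mem_Dspace.mp ξ.2).2.1, hsup⟩⟩) →
      TT' φ = ∑ i ∈ t φ, TT Ωi Ti i (ψ φ i) := by
    intro TT' hprop
    conv_lhs => rw [hφsum, map_sum]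
    refine Finset.sum_congr rfl fun i _ => ?_
    rw [hprop i ⟨ψ φ i, hmemΩ i⟩ (hψ3 φ i)]
    exact (TT_eq Ωi Ti _).symm
  rw [hTi T' hT', ← hTi T hrestrict]
end

section
/- There exists a nonzero linear functional T on D(ℝ) such that T(φ) = 0 for every φ ∈ D(ℝ) with 0 ∉ tsupport φ (so the support of T is {0}), and yet T is not a finite linear combination of the Dirac measure at 0 and its derivatives: there do not exist m ∈ ℕ and coefficients a₀,…,a_m ∈ ℂ such that T(φ) = Σ_{k=0}^{m} a_k · φ^{(k)}(0) for all φ ∈ D(ℝ), where φ^{(k)} denotes the k-th iterated derivative. -/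
/-- `D(ℝ)`: the space of smooth compactly supported functions `ℝ → ℂ`,
as a submodule of `ℝ → ℂ`. -/
noncomputable def TestD : Submodule ℂ (ℝ → ℂ) where
  carrier := {φ | ContDiff ℝ (⊤ : ℕ∞) φ ∧ HasCompactSupport φ}
  add_mem' hf hg := ⟨hf.1.add hg.1, hf.2.add hg.2⟩
  zero_mem' := ⟨contDiff_const, HasCompactSupport.zero⟩
  smul_mem' c f hf := ⟨hf.1.const_smul c,
    hf.2.mono (Function.support_const_smul_subset c f)⟩

open Complex Topology Filter

/-- A fixed bump function around `0`. -/
noncomputable def myBump : ContDiffBump (0 : ℝ) := ⟨1, 2, one_pos, one_lt_two⟩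

lemma contDiff_nat_of_top {f : ℝ → ℂ} (hf : ContDiff ℝ (⊤ : ℕ∞) f) (n : ℕ) :
    ContDiff ℝ (n : ℕ∞) f := hf.of_le (by exact_mod_cast le_top)

lemma hasDerivAt_ofRealC (x : ℝ) : HasDerivAt (fun t : ℝ => (t : ℂ)) 1 x := by
  simpa using (hasDerivAt_id x).ofReal_comp

lemma iteratedDeriv_cmul {n : ℕ} {f : ℝ → ℂ} (hf : ContDiff ℝ (n : ℕ∞) f) (c : ℂ) :
    iteratedDeriv n (fun x => c * f x) = fun x => c * iteratedDeriv n f x := by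
  funext x
  have h := iteratedDerivWithin_const_smul (Set.mem_univ x) uniqueDiffOn_univ c hf.contDiffWithinAt
  simp only [iteratedDerivWithin_univ] at h
  simpa [Pi.smul_def, smul_eq_mul] using h

lemma iteratedDeriv_addC {n : ℕ} {f g : ℝ → ℂ} (hf : ContDiff ℝ (⊤ : ℕ∞) f)
    (hg : ContDiff ℝ (⊤ : ℕ∞) g) (x : ℝ) :
    iteratedDeriv n (f + g) x = iteratedDeriv n f x + iteratedDeriv n g x := by
  have h := iteratedDerivWithin_add (Set.mem_univ x) uniqueDiffOn_univ
    (contDiff_nat_of_top hf n).contDiffWithinAt (contDiff_nat_of_top hg n).contDiffWithinAt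
  simpa [iteratedDerivWithin_univ] using h

lemma iteratedDeriv_cexpR (n : ℕ) :
    iteratedDeriv n (fun x : ℝ => Complex.exp x) = fun x : ℝ => Complex.exp x := by
  induction n with
  | zero => simp
  | succ n ih =>
    rw [iteratedDeriv_succ, ih]
    funext x
    simpa using ((hasDerivAt_ofRealC x).cexp).deriv

lemma contDiff_monoC (k : ℕ) : ContDiff ℝ (⊤ : ℕ∞) (fun x : ℝ => (x : ℂ) ^ k) :=
  Complex.ofRealCLM.contDiff.pow k

lemma iteratedDeriv_monoC (j k : ℕ) :
    iteratedDeriv j (fun x : ℝ => (x : ℂ) ^ k) =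
      fun x : ℝ => (k.descFactorial j : ℂ) * (x : ℂ) ^ (k - j) := by
  induction j generalizing k with
  | zero => simp
  | succ j ih =>
    rw [iteratedDeriv_succ']
    have hd : deriv (fun x : ℝ => (x : ℂ) ^ k) = fun x : ℝ => (k : ℂ) * (x : ℂ) ^ (k - 1) := by
      funext x
      exact ((hasDerivAt_pow k (x : ℂ)).comp_ofReal).deriv
    rw [hd, iteratedDeriv_cmul (contDiff_nat_of_top (contDiff_monoC (k - 1)) j) (k : ℂ), ih (k - 1)]
    funext x
    have hnat : k * (k - 1).descFactorial j = k.descFactorial (j + 1) := by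
      cases k with
      | zero => simp
      | succ k' => simp only [Nat.add_sub_cancel, Nat.succ_descFactorial_succ]
    have hexp : k - 1 - j = k - (j + 1) := by omega
    rw [hexp]
    push_cast [← hnat]
    ring

/-- The jet map: `φ ↦ (φ^(k)(0))_k`. -/
noncomputable def jetMap : TestD →ₗ[ℂ] (ℕ → ℂ) where
  toFun φ := fun k => iteratedDeriv k (φ : ℝ → ℂ) 0
  map_add' φ ψ := by
    funext k
    exact iteratedDeriv_addC φ.2.1 ψ.2.1 0
  map_smul' c φ := by
    funext k
    have h := iteratedDerivWithin_const_smul (Set.mem_univ (0 : ℝ)) uniqueDiffOn_univ c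
      (contDiff_nat_of_top φ.2.1 k).contDiffWithinAt
    simpa [iteratedDerivWithin_univ, Submodule.coe_smul] using h

/-- Eventually-zero sequences. -/
noncomputable def evZero : Submodule ℂ (ℕ → ℂ) where
  carrier := {s | ∀ᶠ k in Filter.atTop, s k = 0}
  add_mem' := fun hf hg => by filter_upwards [hf, hg] with k h1 h2; simp [h1, h2]
  zero_mem' := Filter.Eventually.of_forall fun k => rfl
  smul_mem' := fun c s hs => by filter_upwards [hs] with k h; simp [h]

lemma mem_TestD_mul_bump {g : ℝ → ℂ} (hg : ContDiff ℝ (⊤ : ℕ∞) g) :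
    (fun x => g x * ((myBump x : ℝ) : ℂ)) ∈ TestD := by
  refine ⟨hg.mul (Complex.ofRealCLM.contDiff.comp myBump.contDiff), ?_⟩
  have h1 : HasCompactSupport (fun x => ((myBump x : ℝ) : ℂ)) :=
    myBump.hasCompactSupport.comp_left (g := fun t : ℝ => (t : ℂ)) (by simp)
  exact h1.mul_left

lemma jet_mul_bump (g : ℝ → ℂ) (n : ℕ) :
    iteratedDeriv n (fun x => g x * ((myBump x : ℝ) : ℂ)) 0 = iteratedDeriv n g 0 := by
  refine Filter.EventuallyEq.iteratedDeriv_eq n ?_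
  filter_upwards [myBump.eventuallyEq_one] with x hx
  simp [hx]

/-- There is a linear functional on `D(ℝ)` supported in `{0}` which is not a
finite linear combination of the Dirac measure at `0` and its derivatives. -/
theorem exists_functional_supported_at_zero_not_combination_of_dirac_derivatives :
    ∃ T : TestD →ₗ[ℂ] ℂ,
      T ≠ 0 ∧
      (∀ φ : TestD, 0 ∉ tsupport (φ : ℝ → ℂ) → T φ = 0) ∧
      ¬ ∃ (m : ℕ) (a : ℕ → ℂ), ∀ φ : TestD,
          T φ = ∑ k ∈ Finset.range (m + 1), a k * iteratedDeriv k (φ : ℝ → ℂ) 0 := by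
  classical
  -- the test function with jet `(1,1,1,…)`
  set φ₀ : TestD := ⟨fun x => Complex.exp x * ((myBump x : ℝ) : ℂ),
    mem_TestD_mul_bump ((Complex.contDiff_exp (𝕜 := ℝ)).comp Complex.ofRealCLM.contDiff)⟩ with hφ₀
  have jet_φ₀ : jetMap φ₀ = fun _ => (1 : ℂ) := by
    funext k
    show iteratedDeriv k (fun x : ℝ => Complex.exp x * ((myBump x : ℝ) : ℂ)) 0 = 1
    rw [jet_mul_bump, iteratedDeriv_cexpR]
    simp
  have hone_notmem : (fun _ : ℕ => (1 : ℂ)) ∉ evZero := by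
    intro h
    obtain ⟨k, hk⟩ := h.exists
    exact one_ne_zero hk
  -- a dual functional on the quotient separating the class of `(1,1,…)`
  have hne : evZero.mkQ (fun _ : ℕ => (1 : ℂ)) ≠ 0 := by
    simp only [Submodule.mkQ_apply, ne_eq, Submodule.Quotient.mk_eq_zero]
    exact hone_notmem
  obtain ⟨Λ, hΛ⟩ : ∃ Λ : Module.Dual ℂ ((ℕ → ℂ) ⧸ evZero),
      Λ (evZero.mkQ (fun _ : ℕ => (1 : ℂ))) ≠ 0 := by
    by_contra h
    push_neg at h
    exact hne ((Module.forall_dual_apply_eq_zero_iff ℂ _).mp h)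
  refine ⟨Λ ∘ₗ evZero.mkQ ∘ₗ jetMap, ?_, ?_, ?_⟩
  · intro h0
    apply hΛ
    have := LinearMap.congr_fun h0 φ₀
    simpa [jet_φ₀] using this
  · intro φ hφ
    have hjet : jetMap φ = 0 := by
      funext k
      have hev : (φ : ℝ → ℂ) =ᶠ[𝓝 0] (fun _ => 0) := by
        filter_upwards [(isClosed_tsupport (φ : ℝ → ℂ)).isOpen_compl.mem_nhds hφ] with x hx
        exact image_eq_zero_of_notMem_tsupport hx
      show iteratedDeriv k (φ : ℝ → ℂ) 0 = 0
      rw [Filter.EventuallyEq.iteratedDeriv_eq k hev]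
      simp [iteratedDeriv_eq_iteratedFDeriv, iteratedFDeriv_zero_fun]
    simp [hjet]
  · rintro ⟨m, a, ha⟩
    -- monomial test functions
    have key : ∀ k, k ≤ m → a k = 0 := by
      intro k hk
      set ψ : TestD := ⟨fun x => (x : ℂ) ^ k * ((myBump x : ℝ) : ℂ),
        mem_TestD_mul_bump (contDiff_monoC k)⟩ with hψ
      have jet_ψ : ∀ j, iteratedDeriv j (ψ : ℝ → ℂ) 0 =
          (k.descFactorial j : ℂ) * (0 : ℂ) ^ (k - j) := by
        intro j
        show iteratedDeriv j (fun x : ℝ => (x : ℂ) ^ k * ((myBump x : ℝ) : ℂ)) 0 = _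
        rw [jet_mul_bump, iteratedDeriv_monoC]
        simp
      have hTψ : (Λ ∘ₗ evZero.mkQ ∘ₗ jetMap) ψ = 0 := by
        have hmem : jetMap ψ ∈ evZero := by
          filter_upwards [Filter.eventually_ge_atTop (k + 1)] with j hj
          show iteratedDeriv j (ψ : ℝ → ℂ) 0 = 0
          rw [jet_ψ j, Nat.descFactorial_eq_zero_iff_lt.mpr (by omega)]
          simp
        simp [LinearMap.comp_apply, (Submodule.Quotient.mk_eq_zero _).mpr hmem]
      have hsum2 : ∑ j ∈ Finset.range (m + 1), a j * iteratedDeriv j (ψ : ℝ → ℂ) 0 =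
          a k * (Nat.factorial k : ℂ) := by
        rw [Finset.sum_eq_single k]
        · rw [jet_ψ k]
          simp [Nat.descFactorial_self]
        · intro j _ hjk
          rw [jet_ψ j]
          rcases lt_or_gt_of_ne hjk with h | h
          · rw [zero_pow (by omega : k - j ≠ 0)]; ring
          · rw [Nat.descFactorial_eq_zero_iff_lt.mpr h]; simp
        · intro hnotin
          exact absurd (Finset.mem_range.mpr (by omega)) hnotin
      have hsum := (ha ψ).symm.trans hTψ
      rw [hsum2] at hsum
      have hfact : (Nat.factorial k : ℂ) ≠ 0 := Nat.cast_ne_zero.mpr (Nat.factorial_ne_zero k)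
      exact (mul_eq_zero.mp hsum).resolve_right hfact
    have := ha φ₀
    have hzero : ∑ k ∈ Finset.range (m + 1), a k * iteratedDeriv k (φ₀ : ℝ → ℂ) 0 = 0 := by
      refine Finset.sum_eq_zero fun k hk => ?_
      rw [key k (Nat.lt_succ_iff.mp (Finset.mem_range.mp hk))]
      ring
    have hTφ₀ : (Λ ∘ₗ evZero.mkQ ∘ₗ jetMap) φ₀ = 0 := this.trans hzero
    exact hΛ (by simpa [jet_φ₀] using hTφ₀)
end

section
/- There exist a linear functional S on D(ℝ) and a nonzero φ ∈ D(ℝ) such that the convolution function S∗φ : ℝ → ℂ, defined by (S∗φ)(x) = S(y ↦ φ(x − y)), is not continuous at 0. (In fact one can achieve (S∗φ)(1/n) = n for all n ≥ 1 while (S∗φ)(0) = 0.) -/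
lemma transReflect_mem (φ : TestD) (x : ℝ) :
    (fun y : ℝ => (φ : ℝ → ℂ) (x - y)) ∈ TestD :=
  ⟨φ.2.1.comp (contDiff_const.sub contDiff_id),
    φ.2.2.comp_homeomorph (Homeomorph.subLeft x)⟩

namespace ConvAux

noncomputable def bump : ContDiffBump (0 : ℝ) := ⟨1, 2, one_pos, one_lt_two⟩

noncomputable def φ : ℝ → ℂ := fun t => ((bump t : ℝ) : ℂ)

lemma φ_contDiff : ContDiff ℝ (⊤ : ℕ∞) φ :=
  Complex.ofRealCLM.contDiff.comp bump.contDiff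

lemma φ_supp : HasCompactSupport φ :=
  bump.hasCompactSupport.comp_left (g := Complex.ofReal) Complex.ofReal_zero

lemma φ_zero : φ 0 = 1 := by
  have : bump (0 : ℝ) = 1 :=
    bump.one_of_mem_closedBall (by simp [bump])
  simp [φ, this]

lemma φ_ne_zero : φ ≠ 0 := fun h => by
  have := congrFun h 0
  rw [φ_zero] at this
  simp at this

/-- Translates (by a strictly decreasing sequence of shifts) of a nonzero
continuous compactly supported function are linearly independent. -/
lemma translates_li {ψ : ℝ → ℂ} (hs : HasCompactSupport ψ) (h0 : ψ ≠ 0)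
    {x : ℕ → ℝ} (hx : StrictAnti x) :
    LinearIndependent ℂ (fun m : ℕ => (fun y : ℝ => ψ (x m - y))) := by
  classical
  set K := tsupport ψ with hK
  have hKc : IsCompact K := hs
  have hKne : K.Nonempty := (Function.support_nonempty_iff.mpr h0).closure
  set a := sInf K with ha
  have haK : a ∈ K := hKc.sInf_mem hKne
  have fact1 : ∀ t : ℝ, t < a → ψ t = 0 := by
    intro t ht
    by_contra h
    have : t ∈ K := subset_closure (by simpa [Function.mem_support] using h)
    exact absurd (csInf_le hKc.bddBelow this) (not_le.mpr ht)
  have fact2 : ∀ ε : ℝ, 0 < ε → ∃ s : ℝ, ψ s ≠ 0 ∧ s < a + ε := by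
    intro ε hε
    have h1 : a ∈ closure (Function.support ψ) := haK
    rw [Metric.mem_closure_iff] at h1
    obtain ⟨s, hs1, hs2⟩ := h1 ε hε
    refine ⟨s, hs1, ?_⟩
    rw [Real.dist_eq] at hs2
    have := abs_lt.mp hs2
    linarith [this.1]
  rw [linearIndependent_iff']
  intro s g hsum i hi
  suffices H : ∀ s : Finset ℕ,
      (∑ j ∈ s, g j • (fun y : ℝ => ψ (x j - y))) = 0 → ∀ i ∈ s, g i = 0 from
    H s hsum i hi
  clear hsum hi i
  clear s
  intro s
  induction s using Finset.strongInductionOn with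
  | _ s ih =>
    intro hsum i hi
    have hne : s.Nonempty := ⟨i, hi⟩
    set i0 := s.min' hne with hi0def
    have hi0s : i0 ∈ s := s.min'_mem hne
    have hε : 0 < x i0 - x (i0 + 1) := sub_pos.mpr (hx (Nat.lt_succ_self i0))
    obtain ⟨s0, hs0ne, hs0lt⟩ := fact2 _ hε
    have hy := congrFun hsum (x i0 - s0)
    simp only [Finset.sum_apply, Pi.smul_apply, smul_eq_mul, Pi.zero_apply] at hy
    have hzero : ∀ j ∈ s, j ≠ i0 → g j * ψ (x j - (x i0 - s0)) = 0 := by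
      intro j hj hjne
      have hji : i0 + 1 ≤ j :=
        Nat.succ_le_of_lt (lt_of_le_of_ne (s.min'_le j hj) (Ne.symm hjne))
      have hxj : x j ≤ x (i0 + 1) := hx.antitone hji
      have harg : x j - (x i0 - s0) < a := by linarith
      rw [fact1 _ harg, mul_zero]
    have hsum1 : g i0 * ψ (x i0 - (x i0 - s0)) = 0 := by
      rwa [Finset.sum_eq_single_of_mem i0 hi0s hzero] at hy
    rw [sub_sub_cancel] at hsum1
    have hgi0 : g i0 = 0 := by
      rcases mul_eq_zero.mp hsum1 with h | h
      · exact h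
      · exact absurd h hs0ne
    have hrest : (∑ j ∈ s.erase i0, g j • (fun y : ℝ => ψ (x j - y))) = 0 := by
      rw [← Finset.add_sum_erase s _ hi0s] at hsum
      rwa [hgi0, zero_smul, zero_add] at hsum
    rcases eq_or_ne i i0 with h | h
    · rw [h]; exact hgi0
    · exact ih (s.erase i0) (Finset.erase_ssubset hi0s) hrest i
        (Finset.mem_erase.mpr ⟨h, hi⟩)

end ConvAux

/-- The convolution `(S∗φ)(x) = S(y ↦ φ(x−y))` of an algebraic-dual element
`S ∈ D*(ℝ)` with a test function need not be continuous. -/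
theorem exists_convolution_not_continuous :
    ∃ (S : TestD →ₗ[ℂ] ℂ) (φ : TestD), (φ : ℝ → ℂ) ≠ 0 ∧
      ¬ ContinuousAt
          (fun x : ℝ => S ⟨fun y : ℝ => (φ : ℝ → ℂ) (x - y), transReflect_mem φ x⟩)
          0 := by
  classical
  set Φ : TestD := ⟨ConvAux.φ, ConvAux.φ_contDiff, ConvAux.φ_supp⟩ with hΦ
  set x : ℕ → ℝ := fun m => 1 / ((m : ℝ) + 1) with hxdef
  have hx : StrictAnti x := by
    intro m n h
    apply one_div_lt_one_div_of_lt
    · positivity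
    · exact_mod_cast by exact_mod_cast add_lt_add_left (Nat.cast_lt.mpr h) 1
  set v : ℕ → TestD :=
    fun m => ⟨fun y : ℝ => (Φ : ℝ → ℂ) (x m - y), transReflect_mem Φ (x m)⟩ with hvdef
  have hu : LinearIndependent ℂ (fun m : ℕ => (fun y : ℝ => ConvAux.φ (x m - y))) :=
    ConvAux.translates_li ConvAux.φ_supp ConvAux.φ_ne_zero hx
  have hv : LinearIndependent ℂ v := LinearIndependent.of_comp TestD.subtype hu
  set b := Module.Basis.span hv with hbdef
  obtain ⟨S, hS⟩ := LinearMap.exists_extend (b.constr ℂ (fun m : ℕ => (m : ℂ) + 1))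
  refine ⟨S, Φ, ?_, ?_⟩
  · exact ConvAux.φ_ne_zero
  · intro hcont
    have hval : ∀ m : ℕ, S (v m) = (m : ℂ) + 1 := by
      intro m
      have h3 : (Submodule.span ℂ (Set.range v)).subtype (b m) = v m := by
        simpa [hbdef] using Module.Basis.span_apply hv m
      calc S (v m) = (S.comp (Submodule.span ℂ (Set.range v)).subtype) (b m) := by
            rw [LinearMap.comp_apply, h3]
        _ = (b.constr ℂ (fun m : ℕ => (m : ℂ) + 1)) (b m) := by rw [hS]
        _ = (m : ℂ) + 1 := b.constr_basis _ _ _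
    have hxm : Filter.Tendsto x Filter.atTop (nhds 0) :=
      tendsto_one_div_add_atTop_nhds_zero_nat
    have h2 := (hcont.tendsto).comp hxm
    have hcomp : ((fun t : ℝ =>
        S ⟨fun y : ℝ => (Φ : ℝ → ℂ) (t - y), transReflect_mem Φ t⟩) ∘ x)
        = fun m : ℕ => (m : ℂ) + 1 := funext fun m => hval m
    rw [hcomp] at h2
    have h4 := h2.norm
    have h5 : Filter.Tendsto (fun m : ℕ => ‖(m : ℂ) + 1‖) Filter.atTop Filter.atTop := by
      have heq : (fun m : ℕ => ‖(m : ℂ) + 1‖) = fun m : ℕ => (m : ℝ) + 1 := by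
        funext m
        rw [show ((m : ℂ) + 1) = (((m : ℝ) + 1 : ℝ) : ℂ) by push_cast; ring,
          Complex.norm_real, Real.norm_eq_abs, abs_of_nonneg (by positivity)]
      rw [heq]
      exact Filter.tendsto_atTop_add_const_right _ 1 tendsto_natCast_atTop_atTop
    exact not_tendsto_nhds_of_tendsto_atTop h5 _ h4
end

section
/- There exist a linear functional T on D(ℝ) and a smooth compactly supported function Χ : ℝ² → ℂ such that the function f : ℝ → ℂ defined by f(x) = T(y ↦ Χ(x,y)) is not continuous at 0. (Here for each fixed x ∈ ℝ, the slice y ↦ Χ(x,y) is a smooth compactly supported function ℝ → ℂ, hence an element of D(ℝ); one can achieve f(1/n) = n for all n ≥ 1 and f(0) = 0.) -/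
lemma slice_mem (Χ : ℝ × ℝ → ℂ) (h1 : ContDiff ℝ (⊤ : ℕ∞) Χ)
    (h2 : HasCompactSupport Χ) (x : ℝ) :
    (fun y : ℝ => Χ (x, y)) ∈ TestD := by
  refine ⟨h1.comp ((contDiff_const (c := x)).prodMk contDiff_id), ?_⟩
  apply HasCompactSupport.intro (h2.image continuous_snd)
  intro y hy
  by_contra hne
  exact hy ⟨(x, y), subset_tsupport _ hne, rfl⟩

noncomputable def bumpC : ContDiffBump (0:ℝ) := ⟨1, 2, one_pos, one_lt_two⟩

noncomputable def Chi : ℝ × ℝ → ℂ := fun p =>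
  (p.1 : ℂ) * (bumpC p.1 : ℂ) * (bumpC p.2 : ℂ) * Complex.exp ((p.1 : ℂ) * (p.2 : ℂ))

lemma Chi_contDiff : ContDiff ℝ (⊤ : ℕ∞) Chi := by
  have hre : ContDiff ℝ (⊤ : ℕ∞) (fun x : ℝ => (x : ℂ)) := Complex.ofRealCLM.contDiff
  have h1 : ContDiff ℝ (⊤ : ℕ∞) (fun p : ℝ × ℝ => (p.1 : ℂ)) := hre.comp contDiff_fst
  have h2 : ContDiff ℝ (⊤ : ℕ∞) (fun p : ℝ × ℝ => ((bumpC p.1 : ℝ) : ℂ)) :=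
    hre.comp (bumpC.contDiff.comp contDiff_fst)
  have h3 : ContDiff ℝ (⊤ : ℕ∞) (fun p : ℝ × ℝ => ((bumpC p.2 : ℝ) : ℂ)) :=
    hre.comp (bumpC.contDiff.comp contDiff_snd)
  have h4 : ContDiff ℝ (⊤ : ℕ∞) (fun p : ℝ × ℝ => Complex.exp ((p.1 : ℂ) * (p.2 : ℂ))) :=
    ((hre.comp contDiff_fst).mul (hre.comp contDiff_snd)).cexp
  exact ((h1.mul h2).mul h3).mul h4

lemma Chi_hcs : HasCompactSupport Chi := by
  apply HasCompactSupport.intro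
    ((isCompact_closedBall (0:ℝ) 2).prod (isCompact_closedBall (0:ℝ) 2))
  intro p hp
  rw [Set.mem_prod, not_and_or] at hp
  rcases hp with h | h
  · have : bumpC p.1 = 0 := bumpC.zero_of_le_dist (le_of_lt (by simpa [Metric.mem_closedBall, not_le, bumpC] using h))
    simp [Chi, this]
  · have : bumpC p.2 = 0 := bumpC.zero_of_le_dist (le_of_lt (by simpa [Metric.mem_closedBall, not_le, bumpC] using h))
    simp [Chi, this]

noncomputable def aseq (n : ℕ) : ℝ := 1 / ((n : ℝ) + 1)

lemma aseq_pos (n : ℕ) : 0 < aseq n := by rw [aseq]; positivity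

lemma aseq_le_one (n : ℕ) : aseq n ≤ 1 := by
  rw [aseq, div_le_one (by positivity)]
  linarith [Nat.cast_nonneg (α := ℝ) n]

lemma aseq_inj : Function.Injective aseq := by
  intro m n h
  rw [aseq, aseq] at h
  field_simp at h
  exact_mod_cast add_right_cancel h.symm

/-- The exponential characters. -/
noncomputable def expChar (n : ℕ) : Multiplicative ℝ →* ℂ where
  toFun y := Complex.exp ((aseq n : ℂ) * (Multiplicative.toAdd y : ℝ))
  map_one' := by simp
  map_mul' y z := by
    simp only [toAdd_mul, Complex.ofReal_add, mul_add, Complex.exp_add]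

lemma expChar_inj : Function.Injective expChar := by
  intro m n h
  have := congrFun (congrArg (fun f : Multiplicative ℝ →* ℂ => (f : Multiplicative ℝ → ℂ))
    h) (Multiplicative.ofAdd (1:ℝ))
  simp only [expChar, MonoidHom.coe_mk, OneHom.coe_mk, toAdd_ofAdd,
    Complex.ofReal_one, mul_one] at this
  rw [← Complex.ofReal_exp, ← Complex.ofReal_exp, Complex.ofReal_inj] at this
  exact aseq_inj (Real.exp_injective this)

lemma Chi_slice_eq (n : ℕ) {y : ℝ} (hy : |y| ≤ 1) :
    Chi (aseq n, y) = (aseq n : ℂ) * Complex.exp ((aseq n : ℂ) * y) := by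
  have h1 : bumpC (aseq n) = 1 := bumpC.one_of_mem_closedBall (by
    simpa [Real.dist_eq, abs_of_pos (aseq_pos n), bumpC] using aseq_le_one n)
  have h2 : bumpC y = 1 := bumpC.one_of_mem_closedBall (by simpa [Real.dist_eq, bumpC] using hy)
  simp [Chi, h1, h2]

lemma li_slices : LinearIndependent ℂ (fun n : ℕ => (fun y : ℝ => Chi (aseq n, y))) := by
  rw [linearIndependent_iff']
  intro t g hrel n hn
  set h : ℝ → ℂ := fun y : ℝ => ∑ m ∈ t, (g m * (aseq m : ℂ)) * Complex.exp ((aseq m : ℂ) * y)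
    with hh
  have hzero : ∀ y ∈ Metric.ball (0:ℝ) 1, h y = 0 := by
    intro y hy
    have hy1 : |y| ≤ 1 := le_of_lt (by simpa [Real.dist_eq] using hy)
    have := congrFun hrel y
    simp only [Finset.sum_apply, Pi.smul_apply, Pi.zero_apply, smul_eq_mul] at this
    rw [hh]
    rw [← this]
    refine Finset.sum_congr rfl fun m _ => ?_
    rw [Chi_slice_eq m hy1]; ring
  have hanal : AnalyticOnNhd ℝ h Set.univ := by
    apply Finset.analyticOnNhd_fun_sum
    intro m _
    intro y _
    have hin : AnalyticAt ℝ (fun y : ℝ => (aseq m : ℂ) * (y : ℂ)) y :=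
      analyticAt_const.mul (Complex.ofRealCLM.analyticAt y)
    exact analyticAt_const.mul ((analyticAt_cexp.restrictScalars).comp hin)
  have hev : h =ᶠ[nhds (0:ℝ)] 0 :=
    Filter.eventuallyEq_of_mem (Metric.ball_mem_nhds (0:ℝ) one_pos) hzero
  have hall : Set.EqOn h 0 Set.univ :=
    hanal.eqOn_zero_of_preconnected_of_eventuallyEq_zero isPreconnected_univ
      (Set.mem_univ 0) hev
  have hli : LinearIndependent ℂ (fun n : ℕ => ((expChar n : Multiplicative ℝ → ℂ))) :=
    (linearIndependent_monoidHom (Multiplicative ℝ) ℂ).comp expChar expChar_inj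
  have hrel2 : ∑ m ∈ t, (g m * (aseq m : ℂ)) • (expChar m : Multiplicative ℝ → ℂ) = 0 := by
    funext y
    have := hall (Set.mem_univ (Multiplicative.toAdd y))
    simp only [Finset.sum_apply, Pi.smul_apply, Pi.zero_apply, smul_eq_mul]
    simpa [hh, expChar] using this
  have := linearIndependent_iff'.1 hli t (fun m => g m * (aseq m : ℂ)) hrel2 n hn
  have hne : (aseq n : ℂ) ≠ 0 := by
    exact_mod_cast ne_of_gt (aseq_pos n)
  exact (mul_eq_zero.1 this).resolve_right hne


noncomputable def sliceV (n : ℕ) : TestD :=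
  ⟨fun y : ℝ => Chi (aseq n, y), slice_mem Chi Chi_contDiff Chi_hcs (aseq n)⟩

lemma sliceV_li : LinearIndependent ℂ sliceV :=
  LinearIndependent.of_comp TestD.subtype li_slices

noncomputable def Scomp : Submodule ℂ TestD :=
  (Submodule.exists_isCompl (Submodule.span ℂ (Set.range sliceV))).choose

lemma Scomp_isCompl : IsCompl (Submodule.span ℂ (Set.range sliceV)) Scomp :=
  (Submodule.exists_isCompl (Submodule.span ℂ (Set.range sliceV))).choose_spec

noncomputable def Tfun : TestD →ₗ[ℂ] ℂ :=
  ((Finsupp.linearCombination ℂ (fun n : ℕ => ((n : ℂ) + 1))).comp sliceV_li.repr).comp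
    ((Submodule.span ℂ (Set.range sliceV)).linearProjOfIsCompl Scomp Scomp_isCompl)

lemma Tfun_sliceV (n : ℕ) : Tfun (sliceV n) = (n : ℂ) + 1 := by
  have hmem : sliceV n ∈ Submodule.span ℂ (Set.range sliceV) :=
    Submodule.subset_span ⟨n, rfl⟩
  have hproj : (Submodule.span ℂ (Set.range sliceV)).linearProjOfIsCompl Scomp Scomp_isCompl
      (sliceV n) = ⟨sliceV n, hmem⟩ :=
    Submodule.linearProjOfIsCompl_apply_left Scomp_isCompl ⟨sliceV n, hmem⟩
  have hrepr : sliceV_li.repr ⟨sliceV n, hmem⟩ = Finsupp.single n 1 :=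
    sliceV_li.repr_eq_single n ⟨sliceV n, hmem⟩ rfl
  simp [Tfun, hproj, hrepr, Finsupp.linearCombination_single]

/-- There are a linear functional `T ∈ D*(ℝ)` and a test function
`Χ ∈ D(ℝ²)` such that `x ↦ T(y ↦ Χ(x,y))` is not continuous: the map
required for the definition of the tensor product does not exist in the
algebraic dual. -/
theorem exists_tensor_slice_map_not_continuous :
    ∃ (T : TestD →ₗ[ℂ] ℂ) (Χ : ℝ × ℝ → ℂ)
      (h1 : ContDiff ℝ (⊤ : ℕ∞) Χ) (h2 : HasCompactSupport Χ),
      ¬ ContinuousAt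
          (fun x : ℝ => T ⟨fun y : ℝ => Χ (x, y), slice_mem Χ h1 h2 x⟩) 0 := by
  refine ⟨Tfun, Chi, Chi_contDiff, Chi_hcs, ?_⟩
  intro hc
  have h0 : (⟨fun y : ℝ => Chi ((0:ℝ), y), slice_mem Chi Chi_contDiff Chi_hcs 0⟩ : TestD)
      = 0 := by
    apply Subtype.ext
    funext y
    simp [Chi]
  have hf0 : Tfun ⟨fun y : ℝ => Chi ((0:ℝ), y), slice_mem Chi Chi_contDiff Chi_hcs 0⟩ = 0 := by
    rw [h0, map_zero]
  have ha : Filter.Tendsto aseq Filter.atTop (nhds 0) := by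
    exact tendsto_one_div_add_atTop_nhds_zero_nat.congr (fun n => by rw [aseq])
  have htend : Filter.Tendsto
      (fun n : ℕ => Tfun ⟨fun y : ℝ => Chi (aseq n, y),
        slice_mem Chi Chi_contDiff Chi_hcs (aseq n)⟩) Filter.atTop (nhds 0) := by
    have h2 := hc.tendsto.comp ha
    rw [hf0] at h2
    exact h2
  have hval : ∀ n : ℕ, Tfun ⟨fun y : ℝ => Chi (aseq n, y),
      slice_mem Chi Chi_contDiff Chi_hcs (aseq n)⟩ = (n : ℂ) + 1 := fun n => Tfun_sliceV n
  have hnorm : Filter.Tendsto (fun n : ℕ => ‖((n : ℂ) + 1)‖) Filter.atTop (nhds 0) := by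
    have := htend.norm
    simp only [hval] at this
    simpa using this
  have hev : ∀ᶠ n : ℕ in Filter.atTop, ‖((n : ℂ) + 1)‖ < 1 :=
    hnorm.eventually_lt_const one_pos
  obtain ⟨n, hn⟩ := hev.exists
  have hge : (1 : ℝ) ≤ ‖((n : ℂ) + 1)‖ := by
    have hcast : ((n : ℂ) + 1) = (((n : ℝ) + 1 : ℝ) : ℂ) := by push_cast; ring
    rw [hcast, Complex.norm_real, Real.norm_eq_abs, abs_of_nonneg (by positivity)]
    linarith [Nat.cast_nonneg (α := ℝ) n]
  linarith
end

section
/- Let n ≥ 1 and let a : (Fin n → ℕ) → ℂ be a finitely supported coefficient function that is not identically zero (defining the nonzero constant-coefficient linear partial differential operator P(∂) = Σ_p a_p ∂^p). If φ : ℝⁿ → ℂ is an infinitely differentiable function with compact support such that Σ_p a_p (∂^p φ)(x) = 0 for all x ∈ ℝⁿ, then φ = 0. In particular, for every open Ω ⊆ ℝⁿ, the operator P(∂) (and likewise its transpose) is injective on D(Ω). -/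
/-- Partial derivative in the `j`-th coordinate direction:
`(pd j ψ) x = fderiv ℝ ψ x (Pi.single j 1)`. -/
noncomputable def pd {n : ℕ} (j : Fin n) (ψ : (Fin n → ℝ) → ℂ) :
    (Fin n → ℝ) → ℂ :=
  fun x => fderiv ℝ ψ x (Pi.single j 1)

/-- Iterated partial derivative `∂^p` for a multi-index `p : Fin n → ℕ`:
apply, for each `j`, the `j`-th partial derivative `p j` times. -/
noncomputable def multiPD {n : ℕ} (p : Fin n → ℕ) (ψ : (Fin n → ℝ) → ℂ) :
    (Fin n → ℝ) → ℂ :=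
  (List.finRange n).foldr (fun j f => (pd j)^[p j] ∘ f) id ψ

open MeasureTheory Filter Set Complex
open scoped FourierTransform RealInnerProductSpace Real Topology

namespace PDOAux

variable {n : ℕ}

abbrev Eucl (n : ℕ) : Type := EuclideanSpace ℝ (Fin n)

noncomputable def ee (n : ℕ) : Eucl n ≃L[ℝ] (Fin n → ℝ) := EuclideanSpace.equiv (Fin n) ℝ

lemma pd_contDiff {g : (Fin n → ℝ) → ℂ} (hg : ContDiff ℝ (⊤ : ℕ∞) g) (j : Fin n) :
    ContDiff ℝ (⊤ : ℕ∞) (pd j g) :=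
  (hg.fderiv_right (by simp)).clm_apply contDiff_const

lemma pd_support {g : (Fin n → ℝ) → ℂ} (hg : HasCompactSupport g) (j : Fin n) :
    HasCompactSupport (pd j g) :=
  hg.fderiv_apply ℝ (Pi.single j 1)

lemma iter_pd_contDiff {g : (Fin n → ℝ) → ℂ} (hg : ContDiff ℝ (⊤ : ℕ∞) g) (j : Fin n) (k : ℕ) :
    ContDiff ℝ (⊤ : ℕ∞) ((pd j)^[k] g) := by
  induction k with
  | zero => exact hg
  | succ k ih => rw [Function.iterate_succ_apply']; exact pd_contDiff ih j

lemma iter_pd_support {g : (Fin n → ℝ) → ℂ} (hg : HasCompactSupport g) (j : Fin n) (k : ℕ) :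
    HasCompactSupport ((pd j)^[k] g) := by
  induction k with
  | zero => exact hg
  | succ k ih => rw [Function.iterate_succ_apply']; exact pd_support ih j

lemma foldr_contDiff (p : Fin n → ℕ) (l : List (Fin n)) {g : (Fin n → ℝ) → ℂ}
    (hg : ContDiff ℝ (⊤ : ℕ∞) g) :
    ContDiff ℝ (⊤ : ℕ∞) ((l.foldr (fun j f => (pd j)^[p j] ∘ f) id) g) := by
  induction l with
  | nil => exact hg
  | cons j l ih =>
    simp only [List.foldr_cons, Function.comp_apply]
    exact iter_pd_contDiff ih j (p j)

lemma foldr_support (p : Fin n → ℕ) (l : List (Fin n)) {g : (Fin n → ℝ) → ℂ}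
    (hg : HasCompactSupport g) :
    HasCompactSupport ((l.foldr (fun j f => (pd j)^[p j] ∘ f) id) g) := by
  induction l with
  | nil => exact hg
  | cons j l ih =>
    simp only [List.foldr_cons, Function.comp_apply]
    exact iter_pd_support ih j (p j)

lemma multiPD_contDiff (p : Fin n → ℕ) {g : (Fin n → ℝ) → ℂ} (hg : ContDiff ℝ (⊤ : ℕ∞) g) :
    ContDiff ℝ (⊤ : ℕ∞) (multiPD p g) :=
  foldr_contDiff p (List.finRange n) hg

lemma multiPD_support (p : Fin n → ℕ) {g : (Fin n → ℝ) → ℂ} (hg : HasCompactSupport g) :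
    HasCompactSupport (multiPD p g) :=
  foldr_support p (List.finRange n) hg

lemma fourier_pd (j : Fin n) {g : (Fin n → ℝ) → ℂ} (hg1 : ContDiff ℝ (⊤ : ℕ∞) g)
    (hg2 : HasCompactSupport g) (ξ : Eucl n) :
    𝓕 ((pd j g) ∘ (ee n)) ξ = (2 * π * Complex.I * (ξ j)) * 𝓕 (g ∘ (ee n)) ξ := by
  have hG1 : ContDiff ℝ (⊤ : ℕ∞) (g ∘ (ee n)) := hg1.comp (ee n).contDiff
  have hG2 : HasCompactSupport (g ∘ (ee n)) := hg2.comp_homeomorph (ee n).toHomeomorph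
  have hGi : Integrable (g ∘ (ee n)) := hG1.continuous.integrable_of_hasCompactSupport hG2
  have hd1 : ContDiff ℝ (⊤ : ℕ∞) (fderiv ℝ (g ∘ (ee n))) := hG1.fderiv_right (by simp)
  have hdi : Integrable (fderiv ℝ (g ∘ (ee n))) :=
    hd1.continuous.integrable_of_hasCompactSupport (hG2.fderiv ℝ)
  have key := Real.fourier_fderiv hGi (hG1.differentiable (by simp)) hdi
  have hcomp : (pd j g) ∘ ⇑(ee n)
      = fun x => fderiv ℝ (g ∘ (ee n)) x (EuclideanSpace.single j (1 : ℝ)) := by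
    funext x
    have h1 : fderiv ℝ (g ∘ (ee n)) x
        = (fderiv ℝ g ((ee n) x)).comp ((ee n) : Eucl n →L[ℝ] (Fin n → ℝ)) :=
      (ee n).comp_right_fderiv
    have h2 : (ee n) (EuclideanSpace.single j (1 : ℝ)) = Pi.single j 1 := rfl
    simp [pd, h1, h2]
  rw [hcomp, ← Real.fourier_continuousLinearMap_apply hdi, key]
  have hinner : (inner ℝ ξ (EuclideanSpace.single j (1 : ℝ)) : ℝ) = ξ j := by
    simp [EuclideanSpace.inner_single_right]
  simp only [VectorFourier.fourierSMulRight_apply, ContinuousLinearMap.neg_apply, innerSL_apply_apply,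
    hinner, neg_smul, smul_neg, neg_neg, smul_eq_mul, Complex.real_smul, Complex.ofReal_neg]
  rw [show ((innerSL ℝ) ξ) (EuclideanSpace.single j (1 : ℝ)) = ξ j from hinner]
  ring

lemma fourier_pd_iter (j : Fin n) (k : ℕ) {g : (Fin n → ℝ) → ℂ} (hg1 : ContDiff ℝ (⊤ : ℕ∞) g)
    (hg2 : HasCompactSupport g) (ξ : Eucl n) :
    𝓕 (((pd j)^[k] g) ∘ (ee n)) ξ = (2 * π * Complex.I * (ξ j)) ^ k * 𝓕 (g ∘ (ee n)) ξ := by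
  induction k with
  | zero => simp
  | succ k ih =>
    rw [Function.iterate_succ_apply',
      fourier_pd j (iter_pd_contDiff hg1 j k) (iter_pd_support hg2 j k) ξ, ih]
    ring

lemma fourier_foldr (p : Fin n → ℕ) (l : List (Fin n)) {g : (Fin n → ℝ) → ℂ}
    (hg1 : ContDiff ℝ (⊤ : ℕ∞) g) (hg2 : HasCompactSupport g) (ξ : Eucl n) :
    𝓕 (((l.foldr (fun j f => (pd j)^[p j] ∘ f) id) g) ∘ (ee n)) ξ
      = (l.map (fun j => (2 * π * Complex.I * (ξ j)) ^ (p j))).prod * 𝓕 (g ∘ (ee n)) ξ := by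
  induction l with
  | nil => simp
  | cons j l ih =>
    simp only [List.foldr_cons, Function.comp_apply, List.map_cons, List.prod_cons]
    rw [fourier_pd_iter j (p j) (foldr_contDiff p l hg1) (foldr_support p l hg2) ξ, ih]
    ring

lemma fourier_multiPD (p : Fin n → ℕ) {g : (Fin n → ℝ) → ℂ} (hg1 : ContDiff ℝ (⊤ : ℕ∞) g)
    (hg2 : HasCompactSupport g) (ξ : Eucl n) :
    𝓕 ((multiPD p g) ∘ (ee n)) ξ
      = (∏ j, (2 * π * Complex.I * (ξ j)) ^ (p j)) * 𝓕 (g ∘ (ee n)) ξ := by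
  rw [Fin.prod_univ_def]
  exact fourier_foldr p (List.finRange n) hg1 hg2 ξ

lemma digit_inj : ∀ (n M : ℕ) (p q : Fin n → ℕ), (∀ j, p j < M) → (∀ j, q j < M) →
    (∑ j, p j * M ^ (j : ℕ)) = (∑ j, q j * M ^ (j : ℕ)) → p = q := by
  intro n
  induction n with
  | zero => intro M p q _ _ _; funext j; exact absurd j.2 (by omega)
  | succ n ih =>
    intro M p q hp hq h
    have hM : 0 < M := lt_of_le_of_lt (Nat.zero_le _) (hp 0)
    have hsum : ∀ r : Fin (n+1) → ℕ,
        (∑ j, r j * M ^ (j : ℕ)) = r 0 + M * ∑ j : Fin n, r j.succ * M ^ (j : ℕ) := by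
      intro r
      rw [Fin.sum_univ_succ]
      simp only [Fin.val_zero, pow_zero, mul_one, Fin.val_succ]
      congr 1
      rw [Finset.mul_sum]
      refine Finset.sum_congr rfl fun j _ => ?_
      rw [pow_succ]
      ring
    rw [hsum p, hsum q] at h
    have h0 : p 0 = q 0 := by
      have := congrArg (· % M) h
      simpa [Nat.add_mul_mod_self_left, Nat.mod_eq_of_lt (hp 0), Nat.mod_eq_of_lt (hq 0)]
        using this
    have hS : (∑ j : Fin n, p j.succ * M ^ (j : ℕ)) = ∑ j : Fin n, q j.succ * M ^ (j : ℕ) := by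
      have : M * (∑ j : Fin n, p j.succ * M ^ (j : ℕ))
          = M * ∑ j : Fin n, q j.succ * M ^ (j : ℕ) := by omega
      exact Nat.eq_of_mul_eq_mul_left hM this
    have htail := ih M (fun j => p j.succ) (fun j => q j.succ)
      (fun j => hp j.succ) (fun j => hq j.succ) hS
    funext j
    refine Fin.cases h0 (fun i => ?_) j
    exact congrFun htail i

end PDOAux

open PDOAux

/-- A nonzero constant-coefficient linear partial differential operator
`P(∂) = Σ_p a_p ∂^p` is injective on smooth compactly supported functions:
if `P(∂)φ = 0` everywhere then `φ = 0`. -/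
theorem constCoeff_PDO_injective_on_testFunctions
    (n : ℕ) (hn : 1 ≤ n) (a : (Fin n → ℕ) →₀ ℂ) (ha : a ≠ 0)
    (φ : (Fin n → ℝ) → ℂ) (hφ1 : ContDiff ℝ (⊤ : ℕ∞) φ)
    (hφ2 : HasCompactSupport φ)
    (hP : ∀ x : Fin n → ℝ, ∑ p ∈ a.support, a p * multiPD p φ x = 0) :
    φ = 0 := by
  classical
  set G : Eucl n → ℂ := φ ∘ (ee n) with hGdef
  have hG1 : ContDiff ℝ (⊤ : ℕ∞) G := hφ1.comp (ee n).contDiff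
  have hG2 : HasCompactSupport G := hφ2.comp_homeomorph (ee n).toHomeomorph
  have hGc : Continuous G := hG1.continuous
  have hGi : Integrable G := hGc.integrable_of_hasCompactSupport hG2
  suffices hH : 𝓕 G = 0 by
    have hinv := hGc.fourierInv_fourier_eq hGi (by rw [hH]; exact integrable_zero _ _ _)
    rw [hH] at hinv
    have h0 : (𝓕⁻ (0 : Eucl n → ℂ)) = 0 := by
      funext w; simp [Real.fourierInv_eq]
    rw [h0] at hinv
    funext y
    have := congrFun hinv ((ee n).symm y)
    simpa [hGdef] using this.symm
  by_contra hH
  obtain ⟨ξ₀, hξ₀⟩ : ∃ ξ, 𝓕 G ξ ≠ 0 := by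
    by_contra h; push_neg at h; exact hH (funext h)
  set Q : Eucl n → ℂ := fun ξ => ∑ p ∈ a.support, a p * ∏ j, (2 * π * Complex.I * (ξ j)) ^ (p j)
    with hQdef
  have hQH : ∀ ξ : Eucl n, Q ξ * 𝓕 G ξ = 0 := by
    intro ξ
    have hint : ∀ p : Fin n → ℕ,
        Integrable (fun v : Eucl n => ((𝐞 (-⟪v, ξ⟫) : Circle) : ℂ) * (multiPD p φ ((ee n) v))) := by
      intro p
      have h1 : ContDiff ℝ (⊤ : ℕ∞) (multiPD p φ) := multiPD_contDiff p hφ1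
      have h2 : HasCompactSupport (multiPD p φ) := multiPD_support p hφ2
      have h3 : Integrable ((multiPD p φ) ∘ (ee n)) :=
        ((h1.comp (ee n).contDiff).continuous).integrable_of_hasCompactSupport
          (h2.comp_homeomorph (ee n).toHomeomorph)
      have := (Real.fourierIntegral_convergent_iff ξ).2 h3
      simpa [Circle.smul_def, Function.comp] using this
    calc Q ξ * 𝓕 G ξ = ∑ p ∈ a.support, a p * 𝓕 ((multiPD p φ) ∘ (ee n)) ξ := by
          rw [hQdef, Finset.sum_mul]
          refine Finset.sum_congr rfl fun p hp => ?_
          rw [fourier_multiPD p hφ1 hφ2 ξ]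
          ring
      _ = ∑ p ∈ a.support, ∫ v : Eucl n,
            a p * (((𝐞 (-⟪v, ξ⟫) : Circle) : ℂ) * multiPD p φ ((ee n) v)) := by
          refine Finset.sum_congr rfl fun p hp => ?_
          rw [Real.fourier_eq, ← integral_const_mul]
          simp only [Circle.smul_def, Function.comp_apply, smul_eq_mul]
      _ = ∫ v : Eucl n, ∑ p ∈ a.support,
            a p * (((𝐞 (-⟪v, ξ⟫) : Circle) : ℂ) * multiPD p φ ((ee n) v)) :=
          (integral_finset_sum _ fun p _ => (hint p).const_mul _).symm
      _ = ∫ v : Eucl n, ((𝐞 (-⟪v, ξ⟫) : Circle) : ℂ)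
            * ∑ p ∈ a.support, a p * multiPD p φ ((ee n) v) := by
          congr 1; funext v
          rw [Finset.mul_sum]
          refine Finset.sum_congr rfl fun p hp => by ring
      _ = 0 := by simp [hP]
  have hQA : AnalyticOnNhd ℝ Q univ := by
    apply Finset.analyticOnNhd_fun_sum
    intro p hp
    apply AnalyticOnNhd.mul analyticOnNhd_const
    apply Finset.analyticOnNhd_fun_prod
    intro j hj
    apply AnalyticOnNhd.pow
    apply AnalyticOnNhd.mul analyticOnNhd_const
    have := (Complex.ofRealCLM.comp (EuclideanSpace.proj (𝕜 := ℝ) j)).analyticOnNhd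
      (univ : Set (Eucl n))
    exact this
  have hFc : Continuous (𝓕 G) :=
    VectorFourier.fourierIntegral_continuous Real.continuous_fourierChar
      (by exact continuous_inner) hGi
  have hev : Q =ᶠ[𝓝 ξ₀] 0 := by
    filter_upwards [hFc.continuousAt.eventually_ne hξ₀] with ξ hξ
    rcases mul_eq_zero.1 (hQH ξ) with h | h
    · exact h
    · exact absurd h hξ
  have hQ0 : EqOn Q 0 univ :=
    hQA.eqOn_zero_of_preconnected_of_eventuallyEq_zero isPreconnected_univ (mem_univ ξ₀) hev
  obtain ⟨p₀, hp₀⟩ := Finsupp.support_nonempty_iff.2 ha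
  set M : ℕ := (a.support.sup fun p => Finset.univ.sup p) + 1 with hM
  have hMlt : ∀ p ∈ a.support, ∀ j, p j < M := fun p hp j =>
    Nat.lt_succ_of_le ((Finset.le_sup (Finset.mem_univ j)).trans (Finset.le_sup hp))
  set N : (Fin n → ℕ) → ℕ := fun p => ∑ j, p j * M ^ (j : ℕ) with hN
  have hNinj : ∀ p ∈ a.support, ∀ q ∈ a.support, N p = N q → p = q := fun p hp q hq h =>
    digit_inj n M p q (hMlt p hp) (hMlt q hq) h
  set R : Polynomial ℂ :=
    ∑ p ∈ a.support, Polynomial.C (a p * (2 * π * Complex.I) ^ (∑ j, p j))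
      * Polynomial.X ^ (N p) with hR
  have hroot : ∀ t : ℝ, R.IsRoot (t : ℂ) := by
    intro t
    set x : Eucl n := (WithLp.equiv 2 (Fin n → ℝ)).symm (fun j => t ^ M ^ (j : ℕ)) with hx
    have h0 := hQ0 (mem_univ x)
    simp only [hQdef, Pi.zero_apply] at h0
    have hxj : ∀ j : Fin n, x j = t ^ M ^ (j : ℕ) := fun j => rfl
    unfold Polynomial.IsRoot
    rw [hR]
    simp only [Polynomial.eval_finset_sum, Polynomial.eval_mul, Polynomial.eval_C,
      Polynomial.eval_pow, Polynomial.eval_X]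
    rw [← h0]
    refine Finset.sum_congr rfl fun p hp => ?_
    rw [mul_assoc]
    congr 1
    calc (2 * ↑π * Complex.I) ^ (∑ j, p j) * (t : ℂ) ^ (N p)
        = ∏ j, ((2 * ↑π * Complex.I) ^ (p j) * ((t : ℂ) ^ (M ^ (j : ℕ))) ^ (p j)) := by
          rw [Finset.prod_mul_distrib, Finset.prod_pow_eq_pow_sum]
          congr 1
          rw [hN]
          rw [← Finset.prod_pow_eq_pow_sum]
          refine Finset.prod_congr rfl fun j _ => ?_
          rw [← pow_mul, mul_comm (M ^ (j : ℕ)) (p j)]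
      _ = ∏ j, (2 * ↑π * Complex.I * ((x j : ℝ) : ℂ)) ^ (p j) := by
          refine Finset.prod_congr rfl fun j _ => ?_
          rw [hxj j, mul_pow]
          push_cast
          ring
  have hR0 : R = 0 := by
    refine R.eq_zero_of_infinite_isRoot ?_
    refine (Set.infinite_range_of_injective Complex.ofReal_injective).mono ?_
    rintro z ⟨t, rfl⟩
    exact hroot t
  have hc := congrArg (fun P : Polynomial ℂ => Polynomial.coeff P (N p₀)) hR0
  simp only [hR, Polynomial.finset_sum_coeff, Polynomial.coeff_C_mul, Polynomial.coeff_X_pow,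
    Polynomial.coeff_zero] at hc
  rw [Finset.sum_eq_single p₀ (fun p hp hne => by
      have hne' : ¬(N p₀ = N p) := fun h => hne (hNinj p hp p₀ hp₀ h.symm)
      simp [hne'])
    (fun h => absurd hp₀ h)] at hc
  have hc' : a p₀ * (2 * (π : ℂ) * Complex.I) ^ (∑ j, p₀ j) = 0 := by simpa using hc
  rcases mul_eq_zero.1 hc' with h | h
  · exact absurd h (Finsupp.mem_support_iff.1 hp₀)
  · have h2 : (2 * (π : ℂ) * Complex.I) ≠ 0 := by
      refine mul_ne_zero (mul_ne_zero two_ne_zero ?_) Complex.I_ne_zero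
      exact_mod_cast Real.pi_ne_zero
    exact absurd h (pow_ne_zero _ h2)
end

section
/- Let Ω ⊆ ℝ³ be open, with coordinates written (x₁, y₁, x₂). If φ : ℝ³ → ℂ is an infinitely differentiable function with compact support contained in Ω that satisfies the (transposed) Lewy equation −(∂φ/∂x₁)(x) − i·(∂φ/∂y₁)(x) + 2i·(x₁ + i·y₁)·(∂φ/∂x₂)(x) = 0 for all x = (x₁, y₁, x₂) ∈ ℝ³, then φ = 0. That is, the Lewy operator P(x,∂) = −∂/∂x₁ − i ∂/∂y₁ + 2i(x₁ + i y₁) ∂/∂x₂ is injective on D(Ω). -/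
open Complex

namespace LewyAux

open MeasureTheory Metric Filter Real Set

/-- The real-linear embedding `ℂ →L[ℝ] ℝ³`, `z ↦ (Re z, Im z, 0)`. -/
noncomputable def L : ℂ →L[ℝ] (Fin 3 → ℝ) :=
  ContinuousLinearMap.pi
    (fun j => if j = 0 then Complex.reCLM else if j = 1 then Complex.imCLM else 0)

/-- The affine slice map `(t, z) ↦ (Re z, Im z, t)`. -/
noncomputable def c (t : ℝ) (z : ℂ) : Fin 3 → ℝ :=
  L z + t • (Pi.single (2 : Fin 3) (1 : ℝ) : Fin 3 → ℝ)

@[simp] lemma c_apply0 (t : ℝ) (z : ℂ) : c t z 0 = z.re := by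
  simp [c, L, Pi.single_apply]

@[simp] lemma c_apply1 (t : ℝ) (z : ℂ) : c t z 1 = z.im := by
  simp [c, L, Pi.single_apply]

@[simp] lemma c_apply2 (t : ℝ) (z : ℂ) : c t z 2 = t := by
  simp [c, L, Pi.single_apply]

lemma L_one : L 1 = Pi.single (0 : Fin 3) (1 : ℝ) := by
  funext j
  fin_cases j <;> simp [L, Pi.single_apply]

lemma L_I : L Complex.I = Pi.single (1 : Fin 3) (1 : ℝ) := by
  funext j
  fin_cases j <;> simp [L, Pi.single_apply]

lemma continuous_c (z : ℂ) : Continuous (fun t => c t z) :=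
  continuous_const.add (continuous_id.smul continuous_const)

end LewyAux

set_option maxHeartbeats 2000000 in
open LewyAux MeasureTheory Metric Filter Real Set in
/-- The Lewy operator `P(x,∂) = −∂/∂x₁ − i ∂/∂y₁ + 2i(x₁ + i y₁) ∂/∂x₂`
is injective on `D(Ω)` for every open `Ω ⊆ ℝ³`: a smooth function with compact
support in `Ω` satisfying the (transposed) Lewy equation vanishes identically. -/
theorem lewy_operator_injective_on_testFunctions
    (Ω : Set (Fin 3 → ℝ)) (hΩ : IsOpen Ω)
    (φ : (Fin 3 → ℝ) → ℂ) (hφ1 : ContDiff ℝ (⊤ : ℕ∞) φ)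
    (hφ2 : HasCompactSupport φ) (hφ3 : tsupport φ ⊆ Ω)
    (hP : ∀ x : Fin 3 → ℝ,
      -(pd (0 : Fin 3) φ x) - I * pd (1 : Fin 3) φ x
        + 2 * I * ((x 0 : ℂ) + I * (x 1 : ℂ)) * pd (2 : Fin 3) φ x = 0) :
    φ = 0 := by
  -- basic facts about φ
  have hφd : Differentiable ℝ φ := hφ1.differentiable (by simp)
  have hφc : Continuous φ := hφ1.continuous
  have hφ' : Continuous (fderiv ℝ φ) := hφ1.continuous_fderiv (by simp)
  -- a radius containing the support
  obtain ⟨R, hR⟩ : ∃ R : ℝ, tsupport φ ⊆ closedBall 0 R :=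
    hφ2.isBounded.subset_closedBall 0
  have hvan : ∀ x : Fin 3 → ℝ, R < ‖x‖ → φ x = 0 := by
    intro x hx
    apply image_eq_zero_of_notMem_tsupport
    intro hmem
    have := mem_closedBall_zero_iff.1 (hR hmem)
    linarith
  have hvan' : ∀ x : Fin 3 → ℝ, R < ‖x‖ → fderiv ℝ φ x = 0 := by
    intro x hx
    by_contra h
    have : x ∈ tsupport φ := support_fderiv_subset ℝ h
    have := mem_closedBall_zero_iff.1 (hR this)
    linarith
  -- a bound for the derivative
  obtain ⟨C₀, hC₀⟩ : ∃ C₀, ∀ x, ‖fderiv ℝ φ x‖ ≤ C₀ :=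
    (hφ2.fderiv ℝ).exists_bound_of_continuous hφ'
  set C : ℝ := max C₀ 0 with hCdef
  have hC : ∀ x, ‖fderiv ℝ φ x‖ ≤ C := fun x => (hC₀ x).trans (le_max_left _ _)
  have hCnn : 0 ≤ C := le_max_right _ _
  -- norm of coordinates
  have hcoord : ∀ (x : Fin 3 → ℝ) (j : Fin 3), |x j| ≤ ‖x‖ := by
    intro x j
    simpa using norm_le_pi_norm x j
  -- vanishing of slices for large |t|
  have hslice_van : ∀ (z : ℂ) (t : ℝ), R < |t| → φ (c t z) = 0 := by
    intro z t ht
    refine hvan _ (lt_of_lt_of_le ht ?_)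
    simpa using hcoord (c t z) 2
  have hslice_van' : ∀ (z : ℂ) (t : ℝ), R < |t| → fderiv ℝ φ (c t z) = 0 := by
    intro z t ht
    refine hvan' _ (lt_of_lt_of_le ht ?_)
    simpa using hcoord (c t z) 2
  -- slices are smooth
  have hsliceF : ∀ (t : ℝ) (z : ℂ),
      HasFDerivAt (fun w => φ (c t w)) ((fderiv ℝ φ (c t z)).comp L) z := by
    intro t z
    exact (hφd (c t z)).hasFDerivAt.comp z ((L.hasFDerivAt).add_const _)
  have hsliceT : ∀ (z : ℂ) (t : ℝ),
      HasDerivAt (fun s => φ (c s z)) (pd 2 φ (c t z)) t := by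
    intro z t
    have h1 : HasDerivAt (fun s : ℝ => c s z) (Pi.single (2 : Fin 3) (1 : ℝ)) t := by
      have := ((hasDerivAt_id t).smul_const (Pi.single (2 : Fin 3) (1 : ℝ))).const_add (L z)
      simpa [c] using this
    exact (hφd (c t z)).hasFDerivAt.comp_hasDerivAt t h1
  -- the key claim : all partial Fourier transforms of the slices vanish
  have habs : ∀ t : ℝ, t ∉ Icc (-R) R → R < |t| := by
    intro t ht
    rw [mem_Icc, not_and_or, not_le, not_le] at ht
    rcases ht with h | h
    · exact lt_of_lt_of_le (by linarith) (neg_le_abs t)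
    · exact lt_of_lt_of_le h (le_abs_self t)
  have hpdcont : ∀ j : Fin 3, Continuous (pd j φ) := by
    intro j
    exact (ContinuousLinearMap.apply ℝ ℂ (Pi.single j 1)).continuous.comp hφ'
  have key : ∀ (ξ : ℝ) (z : ℂ),
      ∫ t : ℝ, Complex.exp ((-2 * π * t * ξ : ℝ) * I) * φ (c t z) = 0 := by
    intro ξ
    set θ : ℂ := ((-2 * π * ξ : ℝ) : ℂ) * I with hθ
    set k : ℝ → ℂ := fun t => Complex.exp (((-2 * π * t * ξ : ℝ) : ℂ) * I) with hk
    set h : ℂ → ℂ := fun z => ∫ t : ℝ, k t * φ (c t z) with hhdef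
    suffices hsuff : ∀ z : ℂ, h z = 0 by
      intro z; exact hsuff z
    -- basic properties of the character k
    have hkexp : ∀ t : ℝ, Complex.exp (θ * (t : ℂ)) = k t := by
      intro t; rw [hk, hθ]; congr 1; push_cast; ring
    have hknorm : ∀ t : ℝ, ‖k t‖ = 1 := by
      intro t
      rw [hk]
      exact Complex.norm_exp_ofReal_mul_I _
    have hkcont : Continuous k := by
      rw [hk]; fun_prop
    have hkderiv : ∀ t : ℝ, HasDerivAt k (θ * k t) t := by
      intro t
      have h1 : HasDerivAt (fun s : ℝ => θ * (s : ℂ)) θ t := by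
        simpa using ((hasDerivAt_id t).ofReal_comp (z := t)).const_mul θ
      have h2 := h1.cexp
      rw [hkexp] at h2
      have : (fun s : ℝ => Complex.exp (θ * (s : ℂ))) = k := funext hkexp
      rw [this, mul_comm] at h2
      exact h2
    -- the parametric derivative
    set F' : ℂ → ℝ → (ℂ →L[ℝ] ℂ) :=
      fun z t => k t • ((fderiv ℝ φ (c t z)).comp L) with hF'def
    have hF'cont : ∀ z : ℂ, Continuous (fun t => F' z t) := by
      intro z
      apply hkcont.smul
      exact ((ContinuousLinearMap.compL ℝ ℂ (Fin 3 → ℝ) ℂ).flip L).continuous.comp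
        (hφ'.comp (continuous_c z))
    have hF'zero : ∀ (z : ℂ) (t : ℝ), R < |t| → F' z t = 0 := by
      intro z t ht
      rw [hF'def]
      simp [hslice_van' z t ht]
    have hF'norm : ∀ (z : ℂ) (t : ℝ), ‖F' z t‖ ≤ C * ‖L‖ := by
      intro z t
      rw [hF'def]
      calc ‖k t • ((fderiv ℝ φ (c t z)).comp L)‖
          = ‖k t‖ * ‖(fderiv ℝ φ (c t z)).comp L‖ := norm_smul _ _
        _ ≤ 1 * (‖fderiv ℝ φ (c t z)‖ * ‖L‖) := by
            rw [hknorm]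
            exact mul_le_mul_of_nonneg_left
              ((fderiv ℝ φ (c t z)).opNorm_comp_le L) zero_le_one
        _ ≤ C * ‖L‖ := by
            rw [one_mul]
            exact mul_le_mul_of_nonneg_right (hC _) (norm_nonneg _)
    have hF' : ∀ (z : ℂ) (t : ℝ),
        HasFDerivAt (fun w => k t * φ (c t w)) (F' z t) z := by
      intro z t
      exact (hsliceF t z).const_mul (k t)
    -- integrability of the integrand and of F'
    have hIcs : ∀ z : ℂ, HasCompactSupport (fun t => k t * φ (c t z)) := by
      intro z
      apply HasCompactSupport.intro (isCompact_Icc (a := -R) (b := R))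
      intro t ht
      simp [hslice_van z t (habs t ht)]
    have hInt : ∀ z : ℂ, Integrable (fun t => k t * φ (c t z)) := by
      intro z
      exact (hkcont.mul (hφc.comp (continuous_c z))).integrable_of_hasCompactSupport (hIcs z)
    have hF'int : ∀ z : ℂ, Integrable (F' z) := by
      intro z
      apply (hF'cont z).integrable_of_hasCompactSupport
      apply HasCompactSupport.intro (isCompact_Icc (a := -R) (b := R))
      intro t ht
      exact hF'zero z t (habs t ht)
    -- differentiation under the integral sign
    have hh : ∀ z : ℂ, HasFDerivAt h (∫ t : ℝ, F' z t) z := by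
      intro z
      apply hasFDerivAt_integral_of_dominated_of_fderiv_le (s := Set.univ) Filter.univ_mem
        (bound := Set.indicator (Icc (-R) R) (fun _ => C * ‖L‖))
      · exact Eventually.of_forall fun w =>
          ((hkcont.mul (hφc.comp (continuous_c w)))).aestronglyMeasurable
      · exact hInt z
      · exact (hF'cont z).aestronglyMeasurable
      · refine Eventually.of_forall fun t => fun w _ => ?_
        by_cases htI : t ∈ Icc (-R) R
        · rw [Set.indicator_of_mem htI]
          exact hF'norm w t
        · rw [Set.indicator_of_notMem htI, hF'zero w t (habs t htI)]
          simp
      · exact (integrable_indicator_iff measurableSet_Icc).2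
          (integrableOn_const measure_Icc_lt_top.ne)
      · refine Eventually.of_forall fun t => fun w _ => hF' w t
    -- directional derivatives of h
    have hD : ∀ (z : ℂ) (w : ℂ),
        (∫ t : ℝ, F' z t) w = ∫ t : ℝ, k t * (fderiv ℝ φ (c t z) (L w)) := by
      intro z w
      rw [ContinuousLinearMap.integral_apply (hF'int z)]
      refine integral_congr_ae (Eventually.of_forall fun t => ?_)
      simp [hF'def, smul_eq_mul]
    have hD1 : ∀ z : ℂ, (∫ t : ℝ, F' z t) 1 = ∫ t : ℝ, k t * pd 0 φ (c t z) := by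
      intro z
      rw [hD z 1, L_one]; rfl
    have hDI : ∀ z : ℂ,
        (∫ t : ℝ, F' z t) Complex.I = ∫ t : ℝ, k t * pd 1 φ (c t z) := by
      intro z
      rw [hD z Complex.I, L_I]; rfl
    -- integrability of all slice integrands
    have hIntPd : ∀ (z : ℂ) (j : Fin 3), Integrable (fun t => k t * pd j φ (c t z)) := by
      intro z j
      apply (hkcont.mul ((hpdcont j).comp (continuous_c z))).integrable_of_hasCompactSupport
      apply HasCompactSupport.intro (isCompact_Icc (a := -R) (b := R))
      intro t ht
      have : fderiv ℝ φ (c t z) = 0 := hslice_van' z t (habs t ht)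
      simp [pd, this]
    -- integration by parts in t
    have hIBP : ∀ z : ℂ, (∫ t : ℝ, k t * pd 2 φ (c t z)) = -(θ * h z) := by
      intro z
      have hparts := MeasureTheory.integral_mul_deriv_eq_deriv_mul
        (u := k) (v := fun t => φ (c t z)) (u' := fun t => θ * k t)
        (v' := fun t => pd 2 φ (c t z)) (a' := 0) (b' := 0)
        (fun t _ => hkderiv t) (fun t _ => hsliceT z t)
        ?_ ?_ ?_ ?_
      · rw [hhdef]
        have h2 : (∫ t : ℝ, (θ * k t) * φ (c t z)) = θ * ∫ t : ℝ, k t * φ (c t z) := by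
          rw [← integral_const_mul]
          congr 1; funext t; ring
        rw [hparts, h2]
        ring
      · have : ((k * fun t => pd 2 φ (c t z)) : ℝ → ℂ)
            = fun t => k t * pd 2 φ (c t z) := rfl
        rw [this]
        exact hIntPd z 2
      · have : (((fun t => θ * k t) * fun t => φ (c t z)) : ℝ → ℂ)
            = fun t => θ * (k t * φ (c t z)) := by funext t; simp [Pi.mul_apply]; ring
        rw [this]
        exact (hInt z).const_mul θ
      · have hev : ((k * fun t => φ (c t z)) : ℝ → ℂ) =ᶠ[atBot] (fun _ => (0 : ℂ)) := by
          refine eventually_atBot.2 ⟨-(R+1), fun t ht => ?_⟩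
          have h1 : R + 1 ≤ -t := by linarith
          have : R < |t| := by
            calc R < R + 1 := by linarith
              _ ≤ -t := h1
              _ ≤ |t| := neg_le_abs t
          simp [Pi.mul_apply, hslice_van z t this]
        exact Tendsto.congr' hev.symm tendsto_const_nhds
      · have hev : ((k * fun t => φ (c t z)) : ℝ → ℂ) =ᶠ[atTop] (fun _ => (0 : ℂ)) := by
          refine eventually_atTop.2 ⟨R+1, fun t ht => ?_⟩
          have : R < |t| := lt_of_lt_of_le (by linarith) (le_abs_self t)
          simp [Pi.mul_apply, hslice_van z t this]
        exact Tendsto.congr' hev.symm tendsto_const_nhds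
    -- the key algebraic identity from the Lewy equation
    have hAB : ∀ z : ℂ,
        (∫ t : ℝ, k t * pd 0 φ (c t z)) + Complex.I * (∫ t : ℝ, k t * pd 1 φ (c t z))
          = 2 * Complex.I * z * -(θ * h z) := by
      intro z
      have h1 : Complex.I * (∫ t : ℝ, k t * pd 1 φ (c t z))
          = ∫ t : ℝ, Complex.I * (k t * pd 1 φ (c t z)) := (integral_const_mul _ _).symm
      have h2 : 2 * Complex.I * z * -(θ * h z)
          = 2 * Complex.I * z * (∫ t : ℝ, k t * pd 2 φ (c t z)) := by rw [hIBP z]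
      rw [h1, h2, ← integral_const_mul,
        ← integral_add (hIntPd z 0) ((hIntPd z 1).const_mul Complex.I)]
      congr 1
      funext t
      have hPt := hP (c t z)
      rw [c_apply0, c_apply1] at hPt
      have hz : (z.re : ℂ) + (z.im : ℂ) * Complex.I = z := Complex.re_add_im z
      linear_combination (-(k t)) * hPt
        + (2 * Complex.I * (k t) * (pd 2 φ (c t z))) * hz
    -- the Gaussian factor
    set m : ℂ → ℝ := fun z => 2 * π * ξ * (z.re * z.re + z.im * z.im) with hmdef
    set Lm : ℂ → (ℂ →L[ℝ] ℝ) := fun z =>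
      (2 * π * ξ) • ((z.re • Complex.reCLM + z.re • Complex.reCLM)
        + (z.im • Complex.imCLM + z.im • Complex.imCLM)) with hLmdef
    have hm : ∀ z : ℂ, HasFDerivAt m (Lm z) z := by
      intro z
      have h1 : HasFDerivAt (fun w : ℂ => w.re * w.re)
          (z.re • Complex.reCLM + z.re • Complex.reCLM) z :=
        (Complex.reCLM.hasFDerivAt).mul (Complex.reCLM.hasFDerivAt)
      have h2 : HasFDerivAt (fun w : ℂ => w.im * w.im)
          (z.im • Complex.imCLM + z.im • Complex.imCLM) z :=
        (Complex.imCLM.hasFDerivAt).mul (Complex.imCLM.hasFDerivAt)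
      exact (h1.add h2).const_mul (2 * π * ξ)
    set Ef : ℂ → ℂ := fun z => Complex.exp ((m z : ℝ) : ℂ) with hEdef
    have hE : ∀ z : ℂ, HasFDerivAt Ef (Ef z • (Complex.ofRealCLM.comp (Lm z))) z := by
      intro z
      have h1 : HasFDerivAt (fun w => ((m w : ℝ) : ℂ)) (Complex.ofRealCLM.comp (Lm z)) z :=
        Complex.ofRealCLM.hasFDerivAt.comp z (hm z)
      exact h1.cexp
    set G : ℂ → ℂ := fun z => Ef z * h z with hGdef
    have hG : ∀ z : ℂ, HasFDerivAt G
        (Ef z • (∫ t : ℝ, F' z t) + h z • (Ef z • (Complex.ofRealCLM.comp (Lm z)))) z := by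
      intro z
      exact (hE z).mul (hh z)
    -- Cauchy-Riemann equations for G
    have hCR : ∀ z : ℂ,
        (Ef z • (∫ t : ℝ, F' z t) + h z • (Ef z • (Complex.ofRealCLM.comp (Lm z)))) Complex.I
          = Complex.I *
        ((Ef z • (∫ t : ℝ, F' z t) + h z • (Ef z • (Complex.ofRealCLM.comp (Lm z)))) 1) := by
      intro z
      have hA := hAB z
      have hz : (z.re : ℂ) + (z.im : ℂ) * Complex.I = z := Complex.re_add_im z
      simp only [ContinuousLinearMap.add_apply, ContinuousLinearMap.smul_apply,
        ContinuousLinearMap.comp_apply, hD1 z, hDI z, smul_eq_mul, hLmdef,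
        Complex.ofRealCLM_apply, Complex.reCLM_apply, Complex.imCLM_apply,
        Complex.I_re, Complex.I_im, Complex.one_re, Complex.one_im]
      rw [hθ] at hA
      push_cast
      push_cast at hA
      linear_combination (-(Complex.I) * Ef z) * hA
        + (Ef z * (∫ t : ℝ, k t * pd 1 φ (c t z))
            + 4*(π:ℂ)*(ξ:ℂ)*(h z)*(Ef z)*((z.im:ℂ)*(1 - Complex.I^2) - Complex.I*(z.re:ℂ)))
          * Complex.I_sq
        + (4*(π:ℂ)*(ξ:ℂ)*(h z)*(Ef z)*Complex.I^3) * hz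
    -- G is entire
    have hGdiff : Differentiable ℂ G := by
      intro z
      set LG := Ef z • (∫ t : ℝ, F' z t) + h z • (Ef z • (Complex.ofRealCLM.comp (Lm z)))
        with hLG
      refine ⟨(LG 1) • (1 : ℂ →L[ℂ] ℂ), ?_⟩
      refine hasFDerivAt_of_restrictScalars ℝ (hG z) ?_
      apply ContinuousLinearMap.ext
      intro w
      have hw : w = w.re • (1 : ℂ) + w.im • Complex.I := by
        simp [Complex.real_smul]
      have h1 : (((LG 1) • (1 : ℂ →L[ℂ] ℂ)).restrictScalars ℝ) w = LG 1 * w := by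
        simp
      rw [h1]
      have h2 : LG w = w.re • LG 1 + w.im • LG Complex.I := by
        conv_lhs => rw [hw]
        rw [map_add, ContinuousLinearMap.map_smul, ContinuousLinearMap.map_smul]
      rw [h2, hCR z]
      rw [Complex.real_smul, Complex.real_smul]
      nth_rewrite 1 [hw]
      rw [Complex.real_smul, Complex.real_smul]
      ring
    -- G is zero on an open set, hence everywhere
    have hGanalytic : AnalyticOnNhd ℂ G Set.univ :=
      hGdiff.differentiableOn.analyticOnNhd isOpen_univ
    have hGbig : ∀ z : ℂ, R < z.re → G z = 0 := by
      intro z hz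
      have hzero : ∀ t : ℝ, φ (c t z) = 0 := by
        intro t
        apply hvan
        have h1 := hcoord (c t z) 0
        rw [c_apply0] at h1
        have h2 : z.re ≤ ‖c t z‖ := le_trans (le_abs_self _) h1
        linarith
      have hhz : h z = 0 := by
        rw [hhdef]; simp [hzero]
      rw [hGdef]; simp [hhz]
    have hGzero : ∀ z : ℂ, G z = 0 := by
      have hopen : IsOpen {z : ℂ | R < z.re} := isOpen_lt continuous_const Complex.continuous_re
      have hmem : ((R + 1 : ℝ) : ℂ) ∈ {z : ℂ | R < z.re} := by
        simp only [Set.mem_setOf_eq, Complex.ofReal_re]; linarith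
      have hev : G =ᶠ[nhds ((R + 1 : ℝ) : ℂ)] 0 :=
        Filter.eventually_of_mem (hopen.mem_nhds hmem) (fun w hw => hGbig w hw)
      have := hGanalytic.eqOn_zero_of_preconnected_of_eventuallyEq_zero
        isPreconnected_univ (Set.mem_univ _) hev
      intro z; exact this (Set.mem_univ z)
    intro z
    have hEz : Ef z ≠ 0 := Complex.exp_ne_zero _
    have hgz := hGzero z
    simp only [hGdef] at hgz
    exact (mul_eq_zero.1 hgz).resolve_left hEz
  -- conclude via Fourier inversion
  funext x
  set zx : ℂ := ⟨x 0, x 1⟩ with hzx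
  have hx : x = c (x 2) zx := by
    funext j
    fin_cases j
    · show x 0 = c (x 2) zx 0
      rw [c_apply0]
    · show x 1 = c (x 2) zx 1
      rw [c_apply1]
    · show x 2 = c (x 2) zx 2
      rw [c_apply2]
  set f : ℝ → ℂ := fun t => φ (c t zx) with hfdef
  have hfc : Continuous f := hφc.comp (continuous_c zx)
  have hfs : HasCompactSupport f := by
    apply HasCompactSupport.intro (isCompact_Icc (a := -R) (b := R))
    intro t ht
    exact hslice_van zx t (habs t ht)
  have hfi : Integrable f := hfc.integrable_of_hasCompactSupport hfs
  have hFzero : FourierTransform.fourier f = 0 := by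
    funext ξ
    rw [Real.fourier_real_eq_integral_exp_smul]
    simpa [smul_eq_mul] using key ξ zx
  have hinv := hfc.fourierInv_fourier_eq hfi (by rw [hFzero]; exact integrable_zero _ _ _)
  have hf0 : f (x 2) = 0 := by
    rw [← hinv, hFzero]
    simp [Real.fourierInv_eq]
  rw [hx]
  simpa [hfdef] using hf0
end

section
/- Let Ω ⊆ ℝⁿ be open and let a : (Fin n → ℕ) → ℂ be a finitely supported coefficient function that is not identically zero, defining the nonzero constant-coefficient operator P(∂) = Σ_p a_p ∂^p. Then P(∂) : D*(Ω) → D*(Ω) is surjective: for every linear functional F on D(Ω) there exists a linear functional U on D(Ω) such that U(Σ_p (−1)^{|p|} a_p ∂^p φ) = F(φ) for all φ ∈ D(Ω). (Here Σ_p (−1)^{|p|} a_p ∂^p φ is the transposed operator applied to φ, and it again belongs to D(Ω).) -/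
open Function MeasureTheory Real Complex FourierTransform

variable {n : ℕ}

local notation "Eu" => EuclideanSpace ℝ (Fin n)

noncomputable def pdE (j : Fin n) (g : EuclideanSpace ℝ (Fin n) → ℂ) :
    EuclideanSpace ℝ (Fin n) → ℂ :=
  fun x => fderiv ℝ g x (EuclideanSpace.single j 1)

lemma pdE_contDiff (j : Fin n) {g : Eu → ℂ} (hg : ContDiff ℝ (⊤:ℕ∞) g) :
    ContDiff ℝ (⊤:ℕ∞) (pdE j g) := by
  have h := hg.fderiv_right (m := (⊤:ℕ∞)) (by simp)
  exact (ContinuousLinearMap.apply ℝ ℂ (EuclideanSpace.single j 1)).contDiff.comp h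

lemma pdE_support (j : Fin n) (g : Eu → ℂ) : tsupport (pdE j g) ⊆ tsupport g := by
  apply closure_minimal _ (isClosed_tsupport g)
  intro x hx
  simp only [Function.mem_support, pdE, ne_eq] at hx
  by_contra hxx
  have : fderiv ℝ g x = 0 := by
    by_contra h0
    exact hxx (support_fderiv_subset (𝕜 := ℝ) (f := g) h0)
  simp [this] at hx

lemma pdE_hcs (j : Fin n) {g : Eu → ℂ} (hg : HasCompactSupport g) :
    HasCompactSupport (pdE j g) := by
  exact hg.mono' ((subset_tsupport _).trans (pdE_support j g))

lemma fourier_pdE (j : Fin n) {g : Eu → ℂ} (h1 : ContDiff ℝ (⊤:ℕ∞) g)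
    (h2 : HasCompactSupport g) (ξ : Eu) :
    𝓕 (pdE j g) ξ = (2 * π * Complex.I * (ξ j)) * 𝓕 g ξ := by
  have hint : Integrable g := h1.continuous.integrable_of_hasCompactSupport h2
  have hder : Integrable (fderiv ℝ g) :=
    (h1.fderiv_right (m := (⊤:ℕ∞)) (by simp)).continuous.integrable_of_hasCompactSupport (h2.fderiv (𝕜 := ℝ))
  have hfd := Real.fourier_fderiv hint (h1.differentiable (by simp)) hder
  have happ : 𝓕 (pdE j g) ξ = 𝓕 (fderiv ℝ g) ξ (EuclideanSpace.single j 1) :=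
    (Real.fourier_continuousLinearMap_apply hder).symm
  rw [happ, hfd]
  simp only [VectorFourier.fourierSMulRight_apply, ContinuousLinearMap.neg_apply, innerSL_apply_apply]
  have h5 : (inner ℝ ξ (EuclideanSpace.single j (1:ℝ)) : ℝ) = ξ j := by
    simp [EuclideanSpace.inner_single_right]
  rw [show (innerSL ℝ ξ) (EuclideanSpace.single j (1:ℝ)) = ξ j from h5]
  rw [Complex.real_smul, smul_eq_mul]
  push_cast
  ring

lemma pdE_iter_contDiff (j : Fin n) (k : ℕ) {g : Eu → ℂ} (hg : ContDiff ℝ (⊤:ℕ∞) g) :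
    ContDiff ℝ (⊤:ℕ∞) ((pdE j)^[k] g) := by
  induction k with
  | zero => exact hg
  | succ k ih => rw [Function.iterate_succ_apply']; exact pdE_contDiff j ih

lemma pdE_iter_hcs (j : Fin n) (k : ℕ) {g : Eu → ℂ} (hg : HasCompactSupport g) :
    HasCompactSupport ((pdE j)^[k] g) := by
  induction k with
  | zero => exact hg
  | succ k ih => rw [Function.iterate_succ_apply']; exact pdE_hcs j ih

lemma fourier_pdE_iter (j : Fin n) (k : ℕ) {g : Eu → ℂ} (h1 : ContDiff ℝ (⊤:ℕ∞) g)
    (h2 : HasCompactSupport g) (ξ : Eu) :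
    𝓕 ((pdE j)^[k] g) ξ = (2 * π * Complex.I * (ξ j)) ^ k * 𝓕 g ξ := by
  induction k with
  | zero => simp
  | succ k ih =>
      rw [Function.iterate_succ_apply',
        fourier_pdE j (pdE_iter_contDiff j k h1) (pdE_iter_hcs j k h2), ih, pow_succ]
      ring

noncomputable def multiPDE (p : Fin n → ℕ) (g : EuclideanSpace ℝ (Fin n) → ℂ) :
    EuclideanSpace ℝ (Fin n) → ℂ :=
  (List.finRange n).foldr (fun j f => (pdE j)^[p j] ∘ f) id g

lemma mPDE_cons (p : Fin n → ℕ) (j : Fin n) (l : List (Fin n)) (g : Eu → ℂ) :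
    (j :: l).foldr (fun j f => (pdE j)^[p j] ∘ f) id g
      = (pdE j)^[p j] (l.foldr (fun j f => (pdE j)^[p j] ∘ f) id g) := rfl

lemma mPDE_contDiff (p : Fin n → ℕ) (l : List (Fin n)) {g : Eu → ℂ}
    (hg : ContDiff ℝ (⊤:ℕ∞) g) :
    ContDiff ℝ (⊤:ℕ∞) (l.foldr (fun j f => (pdE j)^[p j] ∘ f) id g) := by
  induction l with
  | nil => exact hg
  | cons j l ih => rw [mPDE_cons]; exact pdE_iter_contDiff j _ ih

lemma mPDE_hcs (p : Fin n → ℕ) (l : List (Fin n)) {g : Eu → ℂ}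
    (hg : HasCompactSupport g) :
    HasCompactSupport (l.foldr (fun j f => (pdE j)^[p j] ∘ f) id g) := by
  induction l with
  | nil => exact hg
  | cons j l ih => rw [mPDE_cons]; exact pdE_iter_hcs j _ ih

lemma fourier_mPDE (p : Fin n → ℕ) (l : List (Fin n)) {g : Eu → ℂ}
    (h1 : ContDiff ℝ (⊤:ℕ∞) g) (h2 : HasCompactSupport g) (ξ : Eu) :
    𝓕 (l.foldr (fun j f => (pdE j)^[p j] ∘ f) id g) ξ
      = (l.map (fun j => (2 * π * Complex.I * (ξ j)) ^ (p j))).prod * 𝓕 g ξ := by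
  induction l with
  | nil => simp
  | cons j l ih =>
      rw [mPDE_cons, fourier_pdE_iter j (p j) (mPDE_contDiff p l h1) (mPDE_hcs p l h2), ih]
      simp [List.prod_cons]
      ring

lemma fourier_multiPDE (p : Fin n → ℕ) {g : Eu → ℂ}
    (h1 : ContDiff ℝ (⊤:ℕ∞) g) (h2 : HasCompactSupport g) (ξ : Eu) :
    𝓕 (multiPDE p g) ξ = (∏ j, (2 * π * Complex.I * (ξ j)) ^ (p j)) * 𝓕 g ξ := by
  rw [multiPDE, fourier_mPDE p _ h1 h2, Fin.prod_univ_def]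

lemma fourier_finset_sum {ι : Type*} (s : Finset ι) (h : ι → Eu → ℂ) (c : ι → ℂ)
    (hint : ∀ i ∈ s, Integrable (h i)) (ξ : Eu) :
    𝓕 (fun x => ∑ i ∈ s, c i * h i x) ξ = ∑ i ∈ s, c i * 𝓕 (h i) ξ := by
  classical
  simp only [Real.fourier_eq]
  have eq1 : ∀ v : Eu, (𝐞 (-inner ℝ v ξ)) • ∑ i ∈ s, c i * h i v
      = ∑ i ∈ s, c i * ((𝐞 (-inner ℝ v ξ)) • h i v) := by
    intro v
    rw [Circle.smul_def, smul_eq_mul, Finset.mul_sum]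
    exact Finset.sum_congr rfl fun i _ => by rw [Circle.smul_def, smul_eq_mul]; ring
  simp_rw [eq1]
  rw [MeasureTheory.integral_finset_sum _ (fun i hi => ?_)]
  · exact Finset.sum_congr rfl fun i _ => MeasureTheory.integral_const_mul _ _
  · have : Integrable (fun v : Eu => (𝐞 (-inner ℝ v ξ) : Circle) • h i v) :=
      (Real.fourierIntegral_convergent_iff ξ).2 (hint i hi)
    exact this.const_mul (c i)
open Polynomial

/-- Base-M digit injectivity. -/
lemma digit_inj : ∀ {n : ℕ} {M : ℕ} (p q : Fin n → ℕ), (∀ j, p j < M) → (∀ j, q j < M) →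
    (∑ j, p j * M ^ (j : ℕ)) = (∑ j, q j * M ^ (j : ℕ)) → p = q := by
  intro n
  induction n with
  | zero => intro M p q _ _ _; funext j; exact j.elim0
  | succ n ih =>
      intro M p q hp hq h
      have hM : 0 < M := Nat.pos_of_ne_zero (by rintro rfl; exact Nat.not_lt_zero _ (hp 0))
      have key : ∀ r : Fin (n+1) → ℕ, (∑ j, r j * M ^ (j : ℕ))
          = r 0 + M * ∑ j : Fin n, r j.succ * M ^ (j : ℕ) := by
        intro r
        rw [Fin.sum_univ_succ, Finset.mul_sum]
        simp only [Fin.val_zero, pow_zero, mul_one, Fin.val_succ]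
        congr 1
        refine Finset.sum_congr rfl fun j _ => ?_
        rw [pow_succ]
        ring
      rw [key p, key q] at h
      have h0 : p 0 = q 0 := by
        have := congrArg (· % M) h
        simpa [Nat.add_mul_mod_self_left, Nat.mod_eq_of_lt (hp 0), Nat.mod_eq_of_lt (hq 0)]
          using this
      have h1 : (∑ j : Fin n, p j.succ * M ^ (j : ℕ)) = ∑ j : Fin n, q j.succ * M ^ (j : ℕ) := by
        have := congrArg (· / M) h
        simpa [h0, Nat.add_mul_div_left _ _ hM, Nat.div_eq_of_lt (hp 0), Nat.div_eq_of_lt (hq 0)]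
          using this
      have := ih (fun j => p j.succ) (fun j => q j.succ) (fun j => hp _) (fun j => hq _) h1
      funext j
      rcases Fin.eq_zero_or_eq_succ j with rfl | ⟨k, rfl⟩
      · exact h0
      · exact congrFun this k

/-- A nonzero polynomial over ℂ does not vanish at some real point of any infinite set. -/
lemma poly_exists_real (R : Polynomial ℂ) (hR : R ≠ 0) {s : Set ℝ} (hs : s.Infinite) :
    ∃ t ∈ s, R.eval (t : ℂ) ≠ 0 := by
  have hfin : {t : ℝ | R.eval (t : ℂ) = 0}.Finite := by
    have : {t : ℝ | R.eval (t : ℂ) = 0} = (fun t : ℝ => (t : ℂ)) ⁻¹' {z | R.IsRoot z} := rfl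
    rw [this]
    exact Set.Finite.preimage (Set.injOn_of_injective Complex.ofReal_injective)
      (Polynomial.finite_setOf_isRoot hR)
  obtain ⟨t, hts, htz⟩ := (hs.diff hfin).nonempty
  exact ⟨t, hts, htz⟩

/-- A "polynomial" with nonzero coefficients has a real nonvanishing point. -/
lemma exists_real_point {n : ℕ} (s : Finset (Fin n → ℕ)) (c : (Fin n → ℕ) → ℂ)
    (p₀ : Fin n → ℕ) (hp₀ : p₀ ∈ s) (hc : c p₀ ≠ 0) :
    ∃ ξ : Fin n → ℝ, (∑ p ∈ s, c p * ∏ j, ((ξ j : ℝ) : ℂ) ^ (p j)) ≠ 0 := by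
  classical
  set M : ℕ := 1 + s.sup (fun p => Finset.univ.sup p) with hM
  have hdig : ∀ p ∈ s, ∀ j, p j < M := by
    intro p hp j
    have : p j ≤ Finset.univ.sup p := Finset.le_sup (Finset.mem_univ j)
    have h2 : Finset.univ.sup p ≤ s.sup (fun p => Finset.univ.sup p) := Finset.le_sup hp
    omega
  set E : (Fin n → ℕ) → ℕ := fun p => ∑ j, p j * M ^ (j : ℕ) with hE
  set R : Polynomial ℂ := ∑ p ∈ s, Polynomial.C (c p) * Polynomial.X ^ (E p) with hRdef
  have hR : R ≠ 0 := by
    intro h0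
    have : R.coeff (E p₀) = c p₀ := by
      rw [hRdef, Polynomial.finset_sum_coeff]
      rw [Finset.sum_eq_single p₀]
      · simp
      · intro p hp hne
        have : E p ≠ E p₀ := fun he =>
          hne (digit_inj p p₀ (hdig p hp) (hdig p₀ hp₀) he)
        simp only [Polynomial.coeff_C_mul, Polynomial.coeff_X_pow]
        rw [if_neg (fun h => this h.symm), mul_zero]
      · intro h; exact absurd hp₀ h
    rw [h0] at this
    simp at this
    exact hc this.symm
  obtain ⟨t, -, ht⟩ := poly_exists_real R hR (Set.infinite_univ (α := ℝ))
  refine ⟨fun j => t ^ (M ^ (j : ℕ)), ?_⟩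
  have : (∑ p ∈ s, c p * ∏ j : Fin n, (((t ^ (M ^ (j : ℕ)) : ℝ) : ℂ)) ^ (p j)) = R.eval (t : ℂ) := by
    rw [hRdef, Polynomial.eval_finset_sum]
    refine Finset.sum_congr rfl fun p hp => ?_
    rw [Polynomial.eval_mul, Polynomial.eval_C, Polynomial.eval_pow, Polynomial.eval_X]
    congr 1
    push_cast
    rw [← Finset.prod_pow_eq_pow_sum]
    refine Finset.prod_congr rfl fun j _ => ?_
    rw [← pow_mul, mul_comm (p j)]
  rw [this]
  exact ht

lemma twoPiI_ne : (2 * (π:ℂ) * Complex.I) ≠ 0 :=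
  mul_ne_zero (mul_ne_zero two_ne_zero (by exact_mod_cast Real.pi_ne_zero)) Complex.I_ne_zero

lemma exists_point_E (s : Finset (Fin n → ℕ)) (c : (Fin n → ℕ) → ℂ)
    (p₀ : Fin n → ℕ) (hp₀ : p₀ ∈ s) (hc : c p₀ ≠ 0) :
    ∃ ξ : Eu, (∑ p ∈ s, c p * ∏ j, (2 * π * Complex.I * (ξ j)) ^ (p j)) ≠ 0 := by
  obtain ⟨ξR, hξR⟩ := exists_real_point s (fun p => c p * ∏ j, (2 * (π:ℂ) * Complex.I) ^ (p j))
    p₀ hp₀ (mul_ne_zero hc (Finset.prod_ne_zero_iff.2 fun j _ => pow_ne_zero _ twoPiI_ne))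
  refine ⟨(WithLp.equiv 2 _).symm ξR, ?_⟩
  have hcoord : ∀ j, (((WithLp.equiv 2 (Fin n → ℝ)).symm ξR) j : ℝ) = ξR j := fun j => rfl
  intro h0
  apply hξR
  rw [← h0]
  refine Finset.sum_congr rfl fun p hp => ?_
  rw [mul_assoc, ← Finset.prod_mul_distrib]
  congr 1
  refine Finset.prod_congr rfl fun j _ => ?_
  rw [hcoord, ← mul_pow]

lemma Qdense (s : Finset (Fin n → ℕ)) (c : (Fin n → ℕ) → ℂ)
    (p₀ : Fin n → ℕ) (hp₀ : p₀ ∈ s) (hc : c p₀ ≠ 0) :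
    Dense {ξ : Eu | (∑ p ∈ s, c p * ∏ j, (2 * π * Complex.I * (ξ j)) ^ (p j)) ≠ 0} := by
  classical
  set Q : Eu → ℂ := fun ξ => ∑ p ∈ s, c p * ∏ j, (2 * π * Complex.I * (ξ j)) ^ (p j) with hQ
  obtain ⟨ξ₁, hξ₁⟩ := exists_point_E s c p₀ hp₀ hc
  rw [Metric.dense_iff]
  intro ξ₀ r hr
  set d : Eu := ξ₁ - ξ₀ with hd
  set R : Polynomial ℂ := ∑ p ∈ s, Polynomial.C (c p)
    * ∏ j, (Polynomial.C (2 * π * Complex.I * (ξ₀ j)) + Polynomial.C (2 * π * Complex.I * (d j)) * Polynomial.X) ^ (p j) with hR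
  have hev : ∀ t : ℝ, R.eval (t : ℂ) = Q (ξ₀ + t • d) := by
    intro t
    rw [hR, Polynomial.eval_finset_sum]
    refine Finset.sum_congr rfl fun p hp => ?_
    rw [Polynomial.eval_mul, Polynomial.eval_C, Polynomial.eval_prod]
    congr 1
    refine Finset.prod_congr rfl fun j _ => ?_
    rw [Polynomial.eval_pow]
    congr 1
    have : (ξ₀ + t • d) j = ξ₀ j + t * d j := rfl
    rw [this]
    simp only [Polynomial.eval_add, Polynomial.eval_mul, Polynomial.eval_C, Polynomial.eval_X]
    push_cast
    ring
  have hRne : R ≠ 0 := by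
    intro h0
    apply hξ₁
    have h1 : R.eval ((1:ℝ) : ℂ) = Q (ξ₀ + (1:ℝ) • d) := hev 1
    rw [h0] at h1
    have : ξ₀ + (1:ℝ) • d = ξ₁ := by rw [hd]; simp
    rw [this] at h1
    exact h1.symm.trans (by simp)
  have hball : (Set.Ioo (0:ℝ) (r / (‖d‖ + 1))).Infinite := by
    apply Set.Ioo_infinite
    positivity
  obtain ⟨t, htmem, htne⟩ := poly_exists_real R hRne hball
  refine ⟨ξ₀ + t • d, ?_, ?_⟩
  · rw [Metric.mem_ball, dist_eq_norm]
    have h1 : ξ₀ + t • d - ξ₀ = t • d := by abel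
    rw [h1, norm_smul]
    have h2 : ‖t‖ = t := abs_of_pos htmem.1
    have h3 : t < r / (‖d‖ + 1) := htmem.2
    have h4 : ‖d‖ + 1 > 0 := by positivity
    calc ‖t‖ * ‖d‖ ≤ t * (‖d‖ + 1) := by rw [h2]; nlinarith [norm_nonneg d, htmem.1]
    _ < r / (‖d‖ + 1) * (‖d‖ + 1) := by apply mul_lt_mul_of_pos_right h3 h4
    _ = r := by field_simp
  · show Q (ξ₀ + t • d) ≠ 0
    rw [← hev t]
    exact htne

lemma keyE (a : (Fin n → ℕ) →₀ ℂ) (ha : a ≠ 0) {g : Eu → ℂ}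
    (h1 : ContDiff ℝ (⊤:ℕ∞) g) (h2 : HasCompactSupport g)
    (h : ∀ x : Eu, ∑ p ∈ a.support, (-1:ℂ)^(∑ j, p j) * a p * multiPDE p g x = 0) :
    g = 0 := by
  classical
  set c : (Fin n → ℕ) → ℂ := fun p => (-1:ℂ)^(∑ j, p j) * a p with hc
  obtain ⟨p₀, hp₀⟩ := Finsupp.support_nonempty_iff.2 ha
  have hcp₀ : c p₀ ≠ 0 :=
    mul_ne_zero (pow_ne_zero _ (neg_ne_zero.2 one_ne_zero)) (Finsupp.mem_support_iff.1 hp₀)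
  have hintg : Integrable g := h1.continuous.integrable_of_hasCompactSupport h2
  have hQF : ∀ ξ : Eu,
      (∑ p ∈ a.support, c p * ∏ j, (2*π*Complex.I*(ξ j))^(p j)) * 𝓕 g ξ = 0 := by
    intro ξ
    have hz : (fun x : Eu => ∑ p ∈ a.support, c p * multiPDE p g x) = (fun _ => (0:ℂ)) :=
      funext h
    have hfs := fourier_finset_sum a.support (fun p => multiPDE p g) c
      (fun p _ => (mPDE_contDiff p _ h1).continuous.integrable_of_hasCompactSupport
        (mPDE_hcs p _ h2)) ξ
    rw [hz] at hfs
    have h0 : 𝓕 (fun _ : Eu => (0:ℂ)) ξ = 0 := by simp [Real.fourier_eq]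
    rw [h0] at hfs
    rw [Finset.sum_mul]
    rw [show (∑ p ∈ a.support, c p * (∏ j, (2*π*Complex.I*(ξ j))^(p j)) * 𝓕 g ξ)
        = ∑ p ∈ a.support, c p * 𝓕 (multiPDE p g) ξ from
      Finset.sum_congr rfl fun p hp => by
        rw [fourier_multiPDE p h1 h2 ξ, mul_assoc]]
    exact hfs.symm
  have hcont : Continuous (𝓕 g) := by
    have hcd := Real.contDiff_fourier (f := g) (N := (0:ℕ∞)) ?_
    · exact hcd.continuous
    · intro k hk
      have hk0 : k = 0 := by exact_mod_cast Nat.le_zero.1 (by exact_mod_cast hk)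
      subst hk0
      simpa using hintg.norm
  have hF0 : 𝓕 g = 0 := by
    have hdense := Qdense a.support c p₀ hp₀ hcp₀
    apply Continuous.ext_on hdense hcont continuous_const
    intro ξ hξ
    exact (mul_eq_zero.1 (hQF ξ)).resolve_left hξ
  have hinv := (h1.continuous).fourierInv_fourier_eq hintg
    (by rw [hF0]; exact integrable_zero _ _ _)
  rw [hF0] at hinv
  have hz2 : 𝓕⁻ (0 : Eu → ℂ) = 0 := by
    funext ξ
    simp [Real.fourierInv_eq]
  rw [hz2] at hinv
  exact hinv.symm

section Transfer

noncomputable def ee : EuclideanSpace ℝ (Fin n) ≃L[ℝ] (Fin n → ℝ) :=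
  EuclideanSpace.equiv (Fin n) ℝ

lemma ee_single (j : Fin n) : (ee (n := n)) (EuclideanSpace.single j (1:ℝ)) = Pi.single j 1 := by
  rfl

lemma pd_transfer (f : (Fin n → ℝ) → ℂ) (j : Fin n) :
    (pd j f) ∘ (ee (n := n)) = pdE j (f ∘ (ee (n := n))) := by
  funext x
  show pd j f (ee x) = fderiv ℝ (f ∘ (ee (n := n))) x (EuclideanSpace.single j 1)
  rw [ContinuousLinearEquiv.comp_right_fderiv]
  show pd j f (ee x) = fderiv ℝ f (ee x) ((ee (n := n)) (EuclideanSpace.single j 1))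
  rw [ee_single]
  rfl

lemma pd_iter_transfer (f : (Fin n → ℝ) → ℂ) (j : Fin n) (k : ℕ) :
    ((pd j)^[k] f) ∘ (ee (n := n)) = (pdE j)^[k] (f ∘ (ee (n := n))) := by
  induction k generalizing f with
  | zero => rfl
  | succ k ih =>
      rw [Function.iterate_succ_apply, Function.iterate_succ_apply, ih (pd j f), pd_transfer]

lemma mPD_transfer (p : Fin n → ℕ) (l : List (Fin n)) (f : (Fin n → ℝ) → ℂ) :
    (l.foldr (fun j F => (pd j)^[p j] ∘ F) id f) ∘ (ee (n := n))
      = l.foldr (fun j F => (pdE j)^[p j] ∘ F) id (f ∘ (ee (n := n))) := by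
  induction l with
  | nil => rfl
  | cons j l ih =>
      show ((pd j)^[p j] (l.foldr (fun j F => (pd j)^[p j] ∘ F) id f)) ∘ (ee (n := n))
        = (pdE j)^[p j] (l.foldr (fun j F => (pdE j)^[p j] ∘ F) id (f ∘ (ee (n := n))))
      rw [pd_iter_transfer, ih]

lemma multiPD_transfer (p : Fin n → ℕ) (f : (Fin n → ℝ) → ℂ) :
    (multiPD p f) ∘ (ee (n := n)) = multiPDE p (f ∘ (ee (n := n))) :=
  mPD_transfer p _ f

end Transfer

/-- Key injectivity result, on the pi-space. -/
lemma multiPD_injective {n : ℕ} (a : (Fin n → ℕ) →₀ ℂ) (ha : a ≠ 0)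
    {φ : (Fin n → ℝ) → ℂ} (h1 : ContDiff ℝ (⊤:ℕ∞) φ) (h2 : HasCompactSupport φ)
    (h : ∀ x, ∑ p ∈ a.support, (-1:ℂ)^(∑ j, p j) * a p * multiPD p φ x = 0) :
    φ = 0 := by
  set g : EuclideanSpace ℝ (Fin n) → ℂ := φ ∘ (ee (n := n)) with hg
  have hg1 : ContDiff ℝ (⊤:ℕ∞) g := h1.comp (ee (n := n)).toContinuousLinearMap.contDiff
  have hg2 : HasCompactSupport g := h2.comp_homeomorph (ee (n := n)).toHomeomorph
  have hgh : ∀ x : EuclideanSpace ℝ (Fin n),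
      ∑ p ∈ a.support, (-1:ℂ)^(∑ j, p j) * a p * multiPDE p g x = 0 := by
    intro x
    have := h ((ee (n := n)) x)
    rw [← this]
    refine Finset.sum_congr rfl fun p _ => ?_
    congr 1
    exact (congrFun (multiPD_transfer p φ) x).symm
  have hz := keyE a ha hg1 hg2 hgh
  funext y
  have : φ y = g ((ee (n := n)).symm y) := by
    rw [hg]
    show φ y = φ ((ee (n := n)) ((ee (n := n)).symm y))
    rw [ContinuousLinearEquiv.apply_symm_apply]
  rw [this, hz]
  rfl

section PDlem

variable {n : ℕ}

lemma pd_contDiff (j : Fin n) {ψ : (Fin n → ℝ) → ℂ} (hψ : ContDiff ℝ (⊤:ℕ∞) ψ) :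
    ContDiff ℝ (⊤:ℕ∞) (pd j ψ) := by
  have h := hψ.fderiv_right (m := (⊤:ℕ∞)) (by simp)
  exact (ContinuousLinearMap.apply ℝ ℂ (Pi.single j 1)).contDiff.comp h

lemma pd_tsupport (j : Fin n) (ψ : (Fin n → ℝ) → ℂ) : tsupport (pd j ψ) ⊆ tsupport ψ := by
  apply closure_minimal _ (isClosed_tsupport ψ)
  intro x hx
  simp only [Function.mem_support, pd, ne_eq] at hx
  by_contra hxx
  have : fderiv ℝ ψ x = 0 := by
    by_contra h0
    exact hxx (support_fderiv_subset (𝕜 := ℝ) (f := ψ) h0)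
  simp [this] at hx

lemma pd_add (j : Fin n) {ψ χ : (Fin n → ℝ) → ℂ} (hψ : Differentiable ℝ ψ)
    (hχ : Differentiable ℝ χ) : pd j (ψ + χ) = pd j ψ + pd j χ := by
  funext x
  have : fderiv ℝ (ψ + χ) x = fderiv ℝ ψ x + fderiv ℝ χ x := fderiv_add (hψ x) (hχ x)
  simp [pd, this]

lemma pd_smul (j : Fin n) (c : ℂ) {ψ : (Fin n → ℝ) → ℂ} (hψ : Differentiable ℝ ψ) :
    pd j (c • ψ) = c • pd j ψ := by
  funext x
  have : fderiv ℝ (c • ψ) x = c • fderiv ℝ ψ x := fderiv_const_smul (hψ x) c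
  simp [pd, this]

/-- Iterates of `pd`. -/
lemma pd_iter_contDiff (j : Fin n) (k : ℕ) {ψ : (Fin n → ℝ) → ℂ}
    (hψ : ContDiff ℝ (⊤:ℕ∞) ψ) : ContDiff ℝ (⊤:ℕ∞) ((pd j)^[k] ψ) := by
  induction k with
  | zero => exact hψ
  | succ k ih => rw [Function.iterate_succ_apply']; exact pd_contDiff j ih

lemma pd_iter_tsupport (j : Fin n) (k : ℕ) (ψ : (Fin n → ℝ) → ℂ) :
    tsupport ((pd j)^[k] ψ) ⊆ tsupport ψ := by
  induction k with
  | zero => exact subset_rfl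
  | succ k ih => rw [Function.iterate_succ_apply']; exact (pd_tsupport j _).trans ih

lemma pd_iter_add (j : Fin n) (k : ℕ) {ψ χ : (Fin n → ℝ) → ℂ}
    (hψ : ContDiff ℝ (⊤:ℕ∞) ψ) (hχ : ContDiff ℝ (⊤:ℕ∞) χ) :
    (pd j)^[k] (ψ + χ) = (pd j)^[k] ψ + (pd j)^[k] χ := by
  induction k with
  | zero => rfl
  | succ k ih =>
      rw [Function.iterate_succ_apply', Function.iterate_succ_apply',
        Function.iterate_succ_apply', ih,
        pd_add j ((pd_iter_contDiff j k hψ).differentiable (by simp)) ((pd_iter_contDiff j k hχ).differentiable (by simp))]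

lemma pd_iter_smul (j : Fin n) (k : ℕ) (c : ℂ) {ψ : (Fin n → ℝ) → ℂ}
    (hψ : ContDiff ℝ (⊤:ℕ∞) ψ) : (pd j)^[k] (c • ψ) = c • (pd j)^[k] ψ := by
  induction k with
  | zero => rfl
  | succ k ih =>
      rw [Function.iterate_succ_apply', Function.iterate_succ_apply', ih,
        pd_smul j c ((pd_iter_contDiff j k hψ).differentiable (by simp))]

/-- foldr helper equals multiPD on `finRange`. -/
lemma mPD_cons (p : Fin n → ℕ) (j : Fin n) (l : List (Fin n)) (ψ : (Fin n → ℝ) → ℂ) :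
    (j :: l).foldr (fun j f => (pd j)^[p j] ∘ f) id ψ
      = (pd j)^[p j] (l.foldr (fun j f => (pd j)^[p j] ∘ f) id ψ) := rfl

lemma mPD_contDiff (p : Fin n → ℕ) (l : List (Fin n)) {ψ : (Fin n → ℝ) → ℂ}
    (hψ : ContDiff ℝ (⊤:ℕ∞) ψ) :
    ContDiff ℝ (⊤:ℕ∞) (l.foldr (fun j f => (pd j)^[p j] ∘ f) id ψ) := by
  induction l with
  | nil => exact hψ
  | cons j l ih => rw [mPD_cons]; exact pd_iter_contDiff j _ ih

lemma mPD_tsupport (p : Fin n → ℕ) (l : List (Fin n)) (ψ : (Fin n → ℝ) → ℂ) :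
    tsupport (l.foldr (fun j f => (pd j)^[p j] ∘ f) id ψ) ⊆ tsupport ψ := by
  induction l with
  | nil => exact subset_rfl
  | cons j l ih => rw [mPD_cons]; exact (pd_iter_tsupport j _ _).trans ih

lemma mPD_add (p : Fin n → ℕ) (l : List (Fin n)) {ψ χ : (Fin n → ℝ) → ℂ}
    (hψ : ContDiff ℝ (⊤:ℕ∞) ψ) (hχ : ContDiff ℝ (⊤:ℕ∞) χ) :
    l.foldr (fun j f => (pd j)^[p j] ∘ f) id (ψ + χ)
      = l.foldr (fun j f => (pd j)^[p j] ∘ f) id ψ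
        + l.foldr (fun j f => (pd j)^[p j] ∘ f) id χ := by
  induction l with
  | nil => rfl
  | cons j l ih =>
      rw [mPD_cons, mPD_cons, mPD_cons, ih,
        pd_iter_add j _ (mPD_contDiff p l hψ) (mPD_contDiff p l hχ)]

lemma mPD_smul (p : Fin n → ℕ) (l : List (Fin n)) (c : ℂ) {ψ : (Fin n → ℝ) → ℂ}
    (hψ : ContDiff ℝ (⊤:ℕ∞) ψ) :
    l.foldr (fun j f => (pd j)^[p j] ∘ f) id (c • ψ)
      = c • l.foldr (fun j f => (pd j)^[p j] ∘ f) id ψ := by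
  induction l with
  | nil => rfl
  | cons j l ih =>
      rw [mPD_cons, mPD_cons, ih, pd_iter_smul j _ c (mPD_contDiff p l hψ)]

lemma multiPD_contDiff (p : Fin n → ℕ) {ψ : (Fin n → ℝ) → ℂ}
    (hψ : ContDiff ℝ (⊤:ℕ∞) ψ) : ContDiff ℝ (⊤:ℕ∞) (multiPD p ψ) :=
  mPD_contDiff p _ hψ

lemma multiPD_tsupport (p : Fin n → ℕ) (ψ : (Fin n → ℝ) → ℂ) :
    tsupport (multiPD p ψ) ⊆ tsupport ψ := mPD_tsupport p _ ψ

lemma multiPD_add (p : Fin n → ℕ) {ψ χ : (Fin n → ℝ) → ℂ}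
    (hψ : ContDiff ℝ (⊤:ℕ∞) ψ) (hχ : ContDiff ℝ (⊤:ℕ∞) χ) :
    multiPD p (ψ + χ) = multiPD p ψ + multiPD p χ := mPD_add p _ hψ hχ

lemma multiPD_smul (p : Fin n → ℕ) (c : ℂ) {ψ : (Fin n → ℝ) → ℂ}
    (hψ : ContDiff ℝ (⊤:ℕ∞) ψ) : multiPD p (c • ψ) = c • multiPD p ψ :=
  mPD_smul p _ c hψ

end PDlem

section Tops

variable {n : ℕ} {Ω : Set (Fin n → ℝ)} (a : (Fin n → ℕ) →₀ ℂ)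

/-- the transposed operator, as a plain function. -/
noncomputable def tOp (ψ : (Fin n → ℝ) → ℂ) : (Fin n → ℝ) → ℂ :=
  fun x => ∑ p ∈ a.support, (-1 : ℂ) ^ (∑ j, p j) * a p * multiPD p ψ x

lemma Top_eq (ψ : (Fin n → ℝ) → ℂ) :
    tOp a ψ = ∑ p ∈ a.support, ((-1 : ℂ) ^ (∑ j, p j) * a p) • multiPD p ψ := by
  funext x
  simp [tOp, Finset.sum_apply, mul_assoc]

lemma Top_mem {φ : (Fin n → ℝ) → ℂ} (hφ : φ ∈ Dspace n Ω) : tOp a φ ∈ Dspace n Ω := by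
  rw [Top_eq]
  refine Submodule.sum_mem _ fun p _ => Submodule.smul_mem _ _ ?_
  exact ⟨multiPD_contDiff p hφ.1, hφ.2.1.mono' ((subset_tsupport _).trans (multiPD_tsupport p φ)),
    (multiPD_tsupport p φ).trans hφ.2.2⟩

lemma Top_add {φ ψ : (Fin n → ℝ) → ℂ} (hφ : ContDiff ℝ (⊤:ℕ∞) φ)
    (hψ : ContDiff ℝ (⊤:ℕ∞) ψ) : tOp a (φ + ψ) = tOp a φ + tOp a ψ := by
  funext x
  simp only [tOp, multiPD_add _ hφ hψ, Pi.add_apply, mul_add, Finset.sum_add_distrib]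

lemma Top_smul (c : ℂ) {φ : (Fin n → ℝ) → ℂ} (hφ : ContDiff ℝ (⊤:ℕ∞) φ) :
    tOp a (c • φ) = c • tOp a φ := by
  funext x
  simp only [tOp, multiPD_smul _ c hφ, Pi.smul_apply, smul_eq_mul, Finset.mul_sum]
  congr 1; funext p; ring

end Tops


/-- KEY analytic lemma : injectivity. -/
lemma tOp_injective {n : ℕ} (a : (Fin n → ℕ) →₀ ℂ) (ha : a ≠ 0)
    {φ : (Fin n → ℝ) → ℂ} (h1 : ContDiff ℝ (⊤:ℕ∞) φ) (h2 : HasCompactSupport φ)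
    (h : tOp a φ = 0) : φ = 0 :=
  multiPD_injective a ha h1 h2 (fun x => congrFun h x)

/-- A nonzero constant-coefficient operator `P(∂) = Σ_p a_p ∂^p` is surjective
on the algebraic dual `D*(Ω)` for every open `Ω ⊆ ℝⁿ`: given any linear
functional `F` on `D(Ω)` there is a linear functional `U` on `D(Ω)` with
`U(ᵗP(∂)φ) = F(φ)` for all test functions `φ`, where
`ᵗP(∂)φ = Σ_p (−1)^{|p|} a_p ∂^p φ` again belongs to `D(Ω)`. -/
theorem constCoeff_PDO_surjective_on_algebraicDual
    (n : ℕ) (Ω : Set (Fin n → ℝ)) (hΩ : IsOpen Ω)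
    (a : (Fin n → ℕ) →₀ ℂ) (ha : a ≠ 0)
    (F : Dspace n Ω →ₗ[ℂ] ℂ) :
    ∃ U : Dspace n Ω →ₗ[ℂ] ℂ, ∀ φ : Dspace n Ω,
      ∃ hmem : (fun x => ∑ p ∈ a.support,
          (-1 : ℂ) ^ (∑ j, p j) * a p * multiPD p (φ : (Fin n → ℝ) → ℂ) x)
          ∈ Dspace n Ω,
        U ⟨_, hmem⟩ = F φ := by
  classical
  -- the transposed operator as a linear endomorphism of D(Ω)
  let L : Dspace n Ω →ₗ[ℂ] Dspace n Ω :=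
    { toFun := fun φ => ⟨tOp a φ.1, Top_mem a φ.2⟩
      map_add' := by
        intro φ ψ
        apply Subtype.ext
        exact Top_add a φ.2.1 ψ.2.1
      map_smul' := by
        intro c φ
        apply Subtype.ext
        exact Top_smul a c φ.2.1 }
  have hker : LinearMap.ker L = ⊥ := by
    rw [LinearMap.ker_eq_bot']
    intro φ hφ
    have h0 : tOp a φ.1 = 0 := congrArg Subtype.val hφ
    exact Subtype.ext (tOp_injective a ha φ.2.1
      (φ.2.2.1) h0)
  obtain ⟨G, hG⟩ := L.exists_leftInverse_of_injective hker
  refine ⟨F.comp G, fun φ => ?_⟩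
  have hmem : (fun x => ∑ p ∈ a.support,
      (-1 : ℂ) ^ (∑ j, p j) * a p * multiPD p (φ : (Fin n → ℝ) → ℂ) x) ∈ Dspace n Ω :=
    Top_mem a φ.2
  refine ⟨hmem, ?_⟩
  have : (⟨_, hmem⟩ : Dspace n Ω) = L φ := rfl
  rw [this]
  show F (G (L φ)) = F φ
  congr 1
  exact congrArg (fun (f : Dspace n Ω →ₗ[ℂ] Dspace n Ω) => f φ) hG
end

section
/- Let n ≥ 1 and let a : (Fin n → ℕ) → ℂ be a finitely supported coefficient function that is not identically zero, defining the nonzero constant-coefficient operator P(∂) = Σ_p a_p ∂^p. Then P(∂) has a fundamental solution in the algebraic dual D*(ℝⁿ): there exists a linear functional S on D(ℝⁿ) such that S(Σ_p (−1)^{|p|} a_p ∂^p φ) = φ(0) for all φ ∈ D(ℝⁿ), i.e., P(∂)S equals the Dirac measure δ at the origin. -/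
/-- `D(ℝⁿ)`: smooth compactly supported functions `ℝⁿ → ℂ`. -/
noncomputable def DRn (n : ℕ) : Submodule ℂ ((Fin n → ℝ) → ℂ) where
  carrier := {φ | ContDiff ℝ (⊤ : ℕ∞) φ ∧ HasCompactSupport φ}
  add_mem' hf hg := ⟨hf.1.add hg.1, hf.2.add hg.2⟩
  zero_mem' := ⟨contDiff_const, HasCompactSupport.zero⟩
  smul_mem' c f hf := ⟨hf.1.const_smul c,
    hf.2.mono (Function.support_const_smul_subset c f)⟩

open MeasureTheory FourierTransform Complex Function

namespace FundSolAux

/-! ### Generic lemmas about `x ↦ fderiv ℝ f x v` -/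

section generic
variable {V : Type*} [NormedAddCommGroup V] [NormedSpace ℝ V] {f g : V → ℂ}

lemma smooth_fderiv_apply (hf : ContDiff ℝ (⊤ : ℕ∞) f) (v : V) :
    ContDiff ℝ (⊤ : ℕ∞) fun x => fderiv ℝ f x v :=
  (hf.fderiv_right le_rfl).clm_apply contDiff_const

lemma fderiv_apply_add (hf : ContDiff ℝ (⊤ : ℕ∞) f) (hg : ContDiff ℝ (⊤ : ℕ∞) g) (v : V) :
    (fun x => fderiv ℝ (f + g) x v) = fun x => fderiv ℝ f x v + fderiv ℝ g x v := by
  funext x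
  have : fderiv ℝ (f + g) x = fderiv ℝ f x + fderiv ℝ g x := by
    have h1 := (hf.differentiable (by simp)).differentiableAt (x := x)
    have h2 := (hg.differentiable (by simp)).differentiableAt (x := x)
    simpa [Pi.add_def] using fderiv_add h1 h2
  simp [this]

lemma fderiv_apply_smul (hf : ContDiff ℝ (⊤ : ℕ∞) f) (c : ℂ) (v : V) :
    (fun x => fderiv ℝ (c • f) x v) = fun x => c • fderiv ℝ f x v := by
  funext x
  have : fderiv ℝ (c • f) x = c • fderiv ℝ f x := by
    have h1 := (hf.differentiable (by simp)).differentiableAt (x := x)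
    simpa [Pi.smul_def] using fderiv_const_smul h1 c
  simp [this]

end generic

/-! ### `pd` lemmas on the `Pi` side -/

variable {n : ℕ}

lemma pd_smooth {f : (Fin n → ℝ) → ℂ} (hf : ContDiff ℝ (⊤ : ℕ∞) f) (j : Fin n) :
    ContDiff ℝ (⊤ : ℕ∞) (pd j f) := smooth_fderiv_apply hf _

lemma pd_hcs {f : (Fin n → ℝ) → ℂ} (hf : HasCompactSupport f) (j : Fin n) :
    HasCompactSupport (pd j f) := hf.fderiv_apply ℝ _

lemma pd_add {f g : (Fin n → ℝ) → ℂ} (hf : ContDiff ℝ (⊤ : ℕ∞) f)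
    (hg : ContDiff ℝ (⊤ : ℕ∞) g) (j : Fin n) :
    pd j (f + g) = pd j f + pd j g := fderiv_apply_add hf hg _

lemma pd_smul {f : (Fin n → ℝ) → ℂ} (hf : ContDiff ℝ (⊤ : ℕ∞) f) (c : ℂ) (j : Fin n) :
    pd j (c • f) = c • pd j f := fderiv_apply_smul hf c _

lemma pd_iter_smooth {f : (Fin n → ℝ) → ℂ} (hf : ContDiff ℝ (⊤ : ℕ∞) f) (j : Fin n) (k : ℕ) :
    ContDiff ℝ (⊤ : ℕ∞) ((pd j)^[k] f) := by
  induction k generalizing f with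
  | zero => simpa using hf
  | succ k ih => rw [Function.iterate_succ_apply]; exact ih (pd_smooth hf j)

lemma pd_iter_hcs {f : (Fin n → ℝ) → ℂ} (hf : HasCompactSupport f) (j : Fin n) (k : ℕ) :
    HasCompactSupport ((pd j)^[k] f) := by
  induction k generalizing f with
  | zero => simpa using hf
  | succ k ih => rw [Function.iterate_succ_apply]; exact ih (pd_hcs hf j)

lemma pd_iter_add {f g : (Fin n → ℝ) → ℂ} (hf : ContDiff ℝ (⊤ : ℕ∞) f)
    (hg : ContDiff ℝ (⊤ : ℕ∞) g) (j : Fin n) (k : ℕ) :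
    (pd j)^[k] (f + g) = (pd j)^[k] f + (pd j)^[k] g := by
  induction k generalizing f g with
  | zero => simp
  | succ k ih =>
      simp only [Function.iterate_succ_apply]
      rw [pd_add hf hg, ih (pd_smooth hf j) (pd_smooth hg j)]

lemma pd_iter_smul {f : (Fin n → ℝ) → ℂ} (hf : ContDiff ℝ (⊤ : ℕ∞) f) (c : ℂ)
    (j : Fin n) (k : ℕ) :
    (pd j)^[k] (c • f) = c • (pd j)^[k] f := by
  induction k generalizing f with
  | zero => simp
  | succ k ih =>
      simp only [Function.iterate_succ_apply]
      rw [pd_smul hf c, ih (pd_smooth hf j)]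

lemma foldr_cons (p : Fin n → ℕ) (j : Fin n) (L : List (Fin n)) (f : (Fin n → ℝ) → ℂ) :
    (j :: L).foldr (fun j f => (pd j)^[p j] ∘ f) id f
      = (pd j)^[p j] (L.foldr (fun j f => (pd j)^[p j] ∘ f) id f) := rfl

lemma foldr_smooth (p : Fin n → ℕ) (L : List (Fin n)) {f : (Fin n → ℝ) → ℂ}
    (hf : ContDiff ℝ (⊤ : ℕ∞) f) :
    ContDiff ℝ (⊤ : ℕ∞) (L.foldr (fun j f => (pd j)^[p j] ∘ f) id f) := by
  induction L generalizing f with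
  | nil => simpa using hf
  | cons j L ih => rw [foldr_cons]; exact pd_iter_smooth (ih hf) j (p j)

lemma foldr_hcs (p : Fin n → ℕ) (L : List (Fin n)) {f : (Fin n → ℝ) → ℂ}
    (hf : HasCompactSupport f) :
    HasCompactSupport (L.foldr (fun j f => (pd j)^[p j] ∘ f) id f) := by
  induction L generalizing f with
  | nil => simpa using hf
  | cons j L ih => rw [foldr_cons]; exact pd_iter_hcs (ih hf) j (p j)

lemma multiPD_smooth (p : Fin n → ℕ) {f : (Fin n → ℝ) → ℂ} (hf : ContDiff ℝ (⊤ : ℕ∞) f) :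
    ContDiff ℝ (⊤ : ℕ∞) (multiPD p f) := foldr_smooth p _ hf

lemma multiPD_hcs (p : Fin n → ℕ) {f : (Fin n → ℝ) → ℂ} (hf : HasCompactSupport f) :
    HasCompactSupport (multiPD p f) := foldr_hcs p _ hf

lemma multiPD_add (p : Fin n → ℕ) {f g : (Fin n → ℝ) → ℂ} (hf : ContDiff ℝ (⊤ : ℕ∞) f)
    (hg : ContDiff ℝ (⊤ : ℕ∞) g) :
    multiPD p (f + g) = multiPD p f + multiPD p g := by
  unfold multiPD
  generalize (List.finRange n) = L
  induction L generalizing f g with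
  | nil => simp
  | cons j L ih =>
      rw [foldr_cons, foldr_cons, foldr_cons, ih hf hg]
      exact pd_iter_add (foldr_smooth p L hf) (foldr_smooth p L hg) j (p j)

lemma multiPD_smul (p : Fin n → ℕ) {f : (Fin n → ℝ) → ℂ} (hf : ContDiff ℝ (⊤ : ℕ∞) f)
    (c : ℂ) :
    multiPD p (c • f) = c • multiPD p f := by
  unfold multiPD
  generalize (List.finRange n) = L
  induction L generalizing f with
  | nil => simp
  | cons j L ih =>
      rw [foldr_cons, foldr_cons, ih hf]
      exact pd_iter_smul (foldr_smooth p L hf) c j (p j)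

end FundSolAux
namespace FundSolAux

variable {n : ℕ}

/-! ### Euclidean side -/

noncomputable def pdE (j : Fin n) (ψ : EuclideanSpace ℝ (Fin n) → ℂ) :
    EuclideanSpace ℝ (Fin n) → ℂ :=
  fun y => fderiv ℝ ψ y (EuclideanSpace.single j 1)

noncomputable def multiPDE (p : Fin n → ℕ) (ψ : EuclideanSpace ℝ (Fin n) → ℂ) :
    EuclideanSpace ℝ (Fin n) → ℂ :=
  (List.finRange n).foldr (fun j f => (pdE j)^[p j] ∘ f) id ψ

lemma pdE_smooth {f : EuclideanSpace ℝ (Fin n) → ℂ} (hf : ContDiff ℝ (⊤ : ℕ∞) f) (j : Fin n) :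
    ContDiff ℝ (⊤ : ℕ∞) (pdE j f) := smooth_fderiv_apply hf _

lemma pdE_hcs {f : EuclideanSpace ℝ (Fin n) → ℂ} (hf : HasCompactSupport f) (j : Fin n) :
    HasCompactSupport (pdE j f) := hf.fderiv_apply ℝ _

lemma pdE_iter_smooth {f : EuclideanSpace ℝ (Fin n) → ℂ} (hf : ContDiff ℝ (⊤ : ℕ∞) f)
    (j : Fin n) (k : ℕ) : ContDiff ℝ (⊤ : ℕ∞) ((pdE j)^[k] f) := by
  induction k generalizing f with
  | zero => simpa using hf
  | succ k ih => rw [Function.iterate_succ_apply]; exact ih (pdE_smooth hf j)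

lemma pdE_iter_hcs {f : EuclideanSpace ℝ (Fin n) → ℂ} (hf : HasCompactSupport f)
    (j : Fin n) (k : ℕ) : HasCompactSupport ((pdE j)^[k] f) := by
  induction k generalizing f with
  | zero => simpa using hf
  | succ k ih => rw [Function.iterate_succ_apply]; exact ih (pdE_hcs hf j)

lemma foldrE_cons (p : Fin n → ℕ) (j : Fin n) (L : List (Fin n))
    (f : EuclideanSpace ℝ (Fin n) → ℂ) :
    (j :: L).foldr (fun j f => (pdE j)^[p j] ∘ f) id f
      = (pdE j)^[p j] (L.foldr (fun j f => (pdE j)^[p j] ∘ f) id f) := rfl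

lemma foldrE_smooth (p : Fin n → ℕ) (L : List (Fin n)) {f : EuclideanSpace ℝ (Fin n) → ℂ}
    (hf : ContDiff ℝ (⊤ : ℕ∞) f) :
    ContDiff ℝ (⊤ : ℕ∞) (L.foldr (fun j f => (pdE j)^[p j] ∘ f) id f) := by
  induction L generalizing f with
  | nil => simpa using hf
  | cons j L ih => rw [foldrE_cons]; exact pdE_iter_smooth (ih hf) j (p j)

lemma foldrE_hcs (p : Fin n → ℕ) (L : List (Fin n)) {f : EuclideanSpace ℝ (Fin n) → ℂ}
    (hf : HasCompactSupport f) :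
    HasCompactSupport (L.foldr (fun j f => (pdE j)^[p j] ∘ f) id f) := by
  induction L generalizing f with
  | nil => simpa using hf
  | cons j L ih => rw [foldrE_cons]; exact pdE_iter_hcs (ih hf) j (p j)

/-! ### Transfer between the `Pi` picture and the Euclidean picture -/

noncomputable def eqv : EuclideanSpace ℝ (Fin n) ≃L[ℝ] (Fin n → ℝ) :=
  EuclideanSpace.equiv (Fin n) ℝ

lemma pdE_transfer (j : Fin n) (f : (Fin n → ℝ) → ℂ) :
    pdE j (f ∘ ⇑(eqv (n := n))) = (pd j f) ∘ ⇑(eqv (n := n)) := by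
  funext y
  show fderiv ℝ (f ∘ ⇑(eqv (n := n))) y (EuclideanSpace.single j 1) = _
  rw [ContinuousLinearEquiv.comp_right_fderiv]
  show fderiv ℝ f (eqv y) (eqv (EuclideanSpace.single j 1)) = pd j f (eqv y)
  congr 1

lemma pdE_iter_transfer (j : Fin n) (k : ℕ) (f : (Fin n → ℝ) → ℂ) :
    (pdE j)^[k] (f ∘ ⇑(eqv (n := n))) = ((pd j)^[k] f) ∘ ⇑(eqv (n := n)) := by
  induction k generalizing f with
  | zero => simp
  | succ k ih =>
      rw [Function.iterate_succ_apply, Function.iterate_succ_apply, pdE_transfer, ih]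

lemma multiPDE_transfer (p : Fin n → ℕ) (f : (Fin n → ℝ) → ℂ) :
    multiPDE p (f ∘ ⇑(eqv (n := n))) = (multiPD p f) ∘ ⇑(eqv (n := n)) := by
  unfold multiPDE multiPD
  generalize (List.finRange n) = L
  induction L generalizing f with
  | nil => rfl
  | cons j L ih => rw [foldrE_cons, foldr_cons, ih, pdE_iter_transfer]

end FundSolAux
namespace FundSolAux

variable {n : ℕ}
open scoped Real

/-! ### Fourier transform computations on the Euclidean side -/

lemma integrable_of_nice {f : EuclideanSpace ℝ (Fin n) → ℂ}
    (h1 : ContDiff ℝ (⊤ : ℕ∞) f) (h2 : HasCompactSupport f) : Integrable f :=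
  h1.continuous.integrable_of_hasCompactSupport h2

lemma fourier_pdE {f : EuclideanSpace ℝ (Fin n) → ℂ}
    (h1 : ContDiff ℝ (⊤ : ℕ∞) f) (h2 : HasCompactSupport f) (j : Fin n)
    (ξ : EuclideanSpace ℝ (Fin n)) :
    𝓕 (pdE j f) ξ = (2 * ↑π * I * (ξ j : ℂ)) * 𝓕 f ξ := by
  have hder : Integrable (fderiv ℝ f) :=
    ((h1.fderiv_right (m := (⊤ : ℕ∞)) le_rfl).continuous).integrable_of_hasCompactSupport (h2.fderiv ℝ)
  have hint : Integrable f := integrable_of_nice h1 h2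
  have h3 : 𝓕 (pdE j f) ξ = 𝓕 (fderiv ℝ f) ξ (EuclideanSpace.single j 1) :=
    (Real.fourier_continuousLinearMap_apply hder).symm
  rw [h3, Real.fourier_fderiv hint (h1.differentiable (by simp)) hder]
  rw [VectorFourier.fourierSMulRight_apply]
  have h4 : ((-innerSL ℝ) ξ) (EuclideanSpace.single j 1) = -(ξ j) := by
    simp [EuclideanSpace.inner_single_right]
  rw [h4]
  simp only [smul_eq_mul, neg_smul, neg_mul, neg_neg, real_smul, ofReal_neg]
  ring

lemma fourier_pdE_iter {f : EuclideanSpace ℝ (Fin n) → ℂ}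
    (h1 : ContDiff ℝ (⊤ : ℕ∞) f) (h2 : HasCompactSupport f) (j : Fin n) (k : ℕ)
    (ξ : EuclideanSpace ℝ (Fin n)) :
    𝓕 ((pdE j)^[k] f) ξ = (2 * ↑π * I * (ξ j : ℂ)) ^ k * 𝓕 f ξ := by
  induction k generalizing f with
  | zero => simp
  | succ k ih =>
      rw [Function.iterate_succ_apply, ih (pdE_smooth h1 j) (pdE_hcs h2 j),
        fourier_pdE h1 h2 j ξ, pow_succ]
      try ring

lemma fourier_foldr (p : Fin n → ℕ) (L : List (Fin n)) {f : EuclideanSpace ℝ (Fin n) → ℂ}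
    (h1 : ContDiff ℝ (⊤ : ℕ∞) f) (h2 : HasCompactSupport f)
    (ξ : EuclideanSpace ℝ (Fin n)) :
    𝓕 (L.foldr (fun j f => (pdE j)^[p j] ∘ f) id f) ξ
      = (L.map fun j => (2 * ↑π * I * (ξ j : ℂ)) ^ (p j)).prod * 𝓕 f ξ := by
  induction L generalizing f with
  | nil => simpa using rfl
  | cons j L ih =>
      rw [foldrE_cons,
        fourier_pdE_iter (foldrE_smooth p L h1) (foldrE_hcs p L h2) j (p j) ξ, ih h1 h2]
      simp [List.prod_cons]
      try ring

lemma fourier_multiPDE (p : Fin n → ℕ) {f : EuclideanSpace ℝ (Fin n) → ℂ}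
    (h1 : ContDiff ℝ (⊤ : ℕ∞) f) (h2 : HasCompactSupport f)
    (ξ : EuclideanSpace ℝ (Fin n)) :
    𝓕 (multiPDE p f) ξ = (∏ j : Fin n, (2 * ↑π * I * (ξ j : ℂ)) ^ (p j)) * 𝓕 f ξ := by
  rw [multiPDE, fourier_foldr p _ h1 h2 ξ, Fin.prod_univ_def]

/-- Fourier transform of a finite linear combination. -/
lemma fourier_sum {ι : Type*} (s : Finset ι) (c : ι → ℂ)
    (h : ι → EuclideanSpace ℝ (Fin n) → ℂ)
    (hint : ∀ i ∈ s, Integrable (h i)) (ξ : EuclideanSpace ℝ (Fin n)) :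
    𝓕 (fun x => ∑ i ∈ s, c i * h i x) ξ = ∑ i ∈ s, c i * 𝓕 (h i) ξ := by
  rw [Real.fourier_eq]
  have step : ∀ x : EuclideanSpace ℝ (Fin n),
      (𝐞 (-inner ℝ x ξ) : Circle) • (∑ i ∈ s, c i * h i x)
        = ∑ i ∈ s, c i * ((𝐞 (-inner ℝ x ξ) : Circle) • h i x) := by
    intro x
    rw [Finset.smul_sum]
    refine Finset.sum_congr rfl fun i _ => ?_
    simp only [Circle.smul_def, smul_eq_mul]
    ring
  simp only [step]
  rw [integral_finset_sum]
  · refine Finset.sum_congr rfl fun i hi => ?_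
    have : ∀ x : EuclideanSpace ℝ (Fin n),
        c i * ((𝐞 (-inner ℝ x ξ) : Circle) • h i x)
          = c i * ((fun v => (𝐞 (-inner ℝ v ξ) : Circle) • h i v) x) := fun x => rfl
    rw [MeasureTheory.integral_const_mul]
    rfl
  · intro i hi
    exact (((Real.fourierIntegral_convergent_iff ξ).2 (hint i hi))).const_mul (c i)

end FundSolAux
namespace FundSolAux

variable {n : ℕ}
open scoped Real

/-! ### Polynomial functions on `ℝⁿ` with complex coefficients -/

/-- A complex-coefficient polynomial function vanishing identically on `ℝⁿ`
has all coefficients zero. -/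
lemma poly_coeffs_zero {s : Finset (Fin n → ℕ)} {b : (Fin n → ℕ) → ℂ}
    (h : ∀ ξ : Fin n → ℝ, ∑ p ∈ s, b p * ∏ j, (ξ j : ℂ) ^ (p j) = 0) :
    ∀ p ∈ s, b p = 0 := by
  classical
  have main : ∀ (c : (Fin n → ℕ) → ℝ),
      (∀ ξ : Fin n → ℝ, ∑ p ∈ s, c p * ∏ j, ξ j ^ p j = 0) → ∀ p ∈ s, c p = 0 := by
    intro c hc p hp
    set P : MvPolynomial (Fin n) ℝ :=
      ∑ q ∈ s, MvPolynomial.monomial (Finsupp.equivFunOnFinite.symm q) (c q) with hP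
    have hP0 : P = 0 := by
      apply MvPolynomial.funext
      intro ξ
      rw [map_zero, hP, map_sum]
      have : ∀ q ∈ s,
          MvPolynomial.eval ξ
            (MvPolynomial.monomial (Finsupp.equivFunOnFinite.symm q) (c q))
            = c q * ∏ j, ξ j ^ q j := by
        intro q _
        rw [MvPolynomial.eval_monomial]
        congr 1
        rw [Finsupp.prod_fintype _ _ (fun j => pow_zero (ξ j))]
        rfl
      rw [Finset.sum_congr rfl this]
      exact hc ξ
    have hcoeff := congrArg (MvPolynomial.coeff (Finsupp.equivFunOnFinite.symm p)) hP0
    rw [hP] at hcoeff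
    rw [MvPolynomial.coeff_sum] at hcoeff
    simp only [MvPolynomial.coeff_monomial, MvPolynomial.coeff_zero,
      EmbeddingLike.apply_eq_iff_eq] at hcoeff
    rwa [Finset.sum_ite_eq' s p c, if_pos hp] at hcoeff
  intro p hp
  have hre := main (fun q => (b q).re) (fun ξ => by
    have h1 := congrArg Complex.re (h ξ)
    rw [Complex.re_sum] at h1
    simpa only [Complex.mul_re, show ∀ q : Fin n → ℕ,
        (∏ j, ((ξ j : ℂ)) ^ (q j)) = (((∏ j, ξ j ^ q j : ℝ) : ℂ)) by
          intro q; push_cast; ring,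
      Complex.ofReal_re, Complex.ofReal_im, mul_zero, sub_zero, Complex.zero_re] using h1) p hp
  have him := main (fun q => (b q).im) (fun ξ => by
    have h1 := congrArg Complex.im (h ξ)
    rw [Complex.im_sum] at h1
    simpa only [Complex.mul_im, show ∀ q : Fin n → ℕ,
        (∏ j, ((ξ j : ℂ)) ^ (q j)) = (((∏ j, ξ j ^ q j : ℝ) : ℂ)) by
          intro q; push_cast; ring,
      Complex.ofReal_re, Complex.ofReal_im, mul_zero, zero_add, Complex.zero_im] using h1) p hp
  exact Complex.ext hre him

end FundSolAux
namespace FundSolAux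

variable {n : ℕ}
open scoped Real

lemma multiPDE_smooth (p : Fin n → ℕ) {f : EuclideanSpace ℝ (Fin n) → ℂ}
    (hf : ContDiff ℝ (⊤ : ℕ∞) f) : ContDiff ℝ (⊤ : ℕ∞) (multiPDE p f) :=
  foldrE_smooth p _ hf

lemma multiPDE_hcs (p : Fin n → ℕ) {f : EuclideanSpace ℝ (Fin n) → ℂ}
    (hf : HasCompactSupport f) : HasCompactSupport (multiPDE p f) :=
  foldrE_hcs p _ hf

lemma two_pi_I_ne_zero : (2 * ↑π * I : ℂ) ≠ 0 := by
  simp [Real.pi_ne_zero, I_ne_zero]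

/-- The key analytic fact: if a nonzero constant-coefficient operator annihilates a
smooth compactly supported function, that function is identically zero. -/
lemma key_vanishing (a : (Fin n → ℕ) →₀ ℂ) (ha : a ≠ 0)
    {φ : EuclideanSpace ℝ (Fin n) → ℂ}
    (h1 : ContDiff ℝ (⊤ : ℕ∞) φ) (h2 : HasCompactSupport φ)
    (h0 : ∀ x, ∑ p ∈ a.support,
      (-1 : ℂ) ^ (∑ j, p j) * a p * multiPDE p φ x = 0) :
    ∀ x, φ x = 0 := by
  classical
  have hint : Integrable φ := integrable_of_nice h1 h2
  set Qf : EuclideanSpace ℝ (Fin n) → ℂ := fun ξ =>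
    ∑ p ∈ a.support, (-1 : ℂ) ^ (∑ j, p j) * a p *
      ∏ j, (2 * ↑π * I * ((ξ j : ℝ) : ℂ)) ^ (p j) with hQf
  -- Step 1 : `Qf ξ * 𝓕 φ ξ = 0` for every `ξ`.
  have hQF : ∀ ξ, Qf ξ * 𝓕 φ ξ = 0 := by
    intro ξ
    have hzero : (fun x => ∑ p ∈ a.support,
        (-1 : ℂ) ^ (∑ j, p j) * a p * multiPDE p φ x)
        = (0 : EuclideanSpace ℝ (Fin n) → ℂ) := funext h0
    have hsum := fourier_sum a.support
      (fun p => (-1 : ℂ) ^ (∑ j, p j) * a p) (fun p => multiPDE p φ)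
      (fun p _ => integrable_of_nice (multiPDE_smooth p h1) (multiPDE_hcs p h2)) ξ
    rw [hzero] at hsum
    have hF0 : 𝓕 (0 : EuclideanSpace ℝ (Fin n) → ℂ) ξ = 0 := by
      simp [Real.fourier_eq]
    rw [hF0] at hsum
    have hexp : ∀ p ∈ a.support,
        (-1 : ℂ) ^ (∑ j, p j) * a p * 𝓕 (multiPDE p φ) ξ
          = (-1 : ℂ) ^ (∑ j, p j) * a p *
              (∏ j, (2 * ↑π * I * ((ξ j : ℝ) : ℂ)) ^ (p j)) * 𝓕 φ ξ := by
      intro p _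
      rw [fourier_multiPDE p h1 h2 ξ]
      ring
    rw [Finset.sum_congr rfl hexp] at hsum
    rw [hQf, Finset.sum_mul]
    exact hsum.symm
  -- Step 2 : there is a point where `Qf` does not vanish.
  have hA : ∃ ξ₀ : EuclideanSpace ℝ (Fin n), Qf ξ₀ ≠ 0 := by
    by_contra hall
    push_neg at hall
    have hb : ∀ ξ : Fin n → ℝ,
        ∑ p ∈ a.support,
          ((-1 : ℂ) ^ (∑ j, p j) * a p * (2 * ↑π * I) ^ (∑ j, p j)) *
            ∏ j, ((ξ j : ℝ) : ℂ) ^ (p j) = 0 := by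
      intro ξ
      have h := hall ((eqv (n := n)).symm ξ)
      rw [hQf] at h
      beta_reduce at h
      have hrw : ∀ p ∈ a.support,
          (-1 : ℂ) ^ (∑ j, p j) * a p *
              ∏ j, (2 * ↑π * I * (((((eqv (n := n)).symm ξ) j : ℝ)) : ℂ)) ^ (p j)
            = ((-1 : ℂ) ^ (∑ j, p j) * a p * (2 * ↑π * I) ^ (∑ j, p j)) *
                ∏ j, ((ξ j : ℝ) : ℂ) ^ (p j) := by
        intro p _
        have h1' : ∀ j : Fin n, ((((eqv (n := n)).symm ξ) j : ℝ) : ℂ) = ((ξ j : ℝ) : ℂ) :=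
          fun j => rfl
        simp only [h1', mul_pow, Finset.prod_mul_distrib,
          Finset.prod_pow_eq_pow_sum]
        ring
      rw [Finset.sum_congr rfl hrw] at h
      exact h
    obtain ⟨p₀, hp₀⟩ := Finsupp.support_nonempty_iff.2 ha
    have := poly_coeffs_zero hb p₀ hp₀
    have ha₀ : a p₀ ≠ 0 := Finsupp.mem_support_iff.1 hp₀
    apply ha₀
    have h2πI : (2 * ↑π * I : ℂ) ^ (∑ j, p₀ j) ≠ 0 := pow_ne_zero _ two_pi_I_ne_zero
    have hneg : ((-1 : ℂ)) ^ (∑ j, p₀ j) ≠ 0 := pow_ne_zero _ (by norm_num)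
    rcases mul_eq_zero.1 this with h' | h'
    · rcases mul_eq_zero.1 h' with h'' | h''
      · exact absurd h'' hneg
      · exact h''
    · exact absurd h' h2πI
  -- Step 3 : `𝓕 φ` vanishes identically.
  have hFcont : Continuous (𝓕 φ) :=
    VectorFourier.fourierIntegral_continuous Real.continuous_fourierChar
      (by exact continuous_inner) hint
  obtain ⟨ξ₀, hξ₀⟩ := hA
  have hB : ∀ η, 𝓕 φ η = 0 := by
    intro η
    set G : Polynomial ℂ := ∑ p ∈ a.support,
      Polynomial.C ((-1 : ℂ) ^ (∑ j, p j) * a p) *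
        ∏ j, (Polynomial.C (2 * ↑π * I * ((η j : ℝ) : ℂ))
          + Polynomial.C (2 * ↑π * I * (((ξ₀ j - η j : ℝ)) : ℂ)) * Polynomial.X) ^ (p j)
      with hG
    have evalG : ∀ t : ℝ, G.eval ((t : ℝ) : ℂ) = Qf (η + t • (ξ₀ - η)) := by
      intro t
      rw [hG, hQf, Polynomial.eval_finset_sum]
      refine Finset.sum_congr rfl fun p _ => ?_
      rw [Polynomial.eval_mul, Polynomial.eval_C, Polynomial.eval_prod]
      congr 1
      refine Finset.prod_congr rfl fun j _ => ?_
      rw [Polynomial.eval_pow]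
      congr 1
      have hcoord : ((η + t • (ξ₀ - η)) j : ℝ) = η j + t * (ξ₀ j - η j) := by
        simp [PiLp.add_apply, PiLp.smul_apply, PiLp.sub_apply, smul_eq_mul]
      rw [hcoord]
      simp only [Polynomial.eval_add, Polynomial.eval_mul, Polynomial.eval_C,
        Polynomial.eval_X]
      push_cast
      ring
    have hG1 : G.eval ((1 : ℝ) : ℂ) = Qf ξ₀ := by
      rw [evalG 1]
      congr 1
      ext j
      simp [PiLp.add_apply, PiLp.smul_apply, PiLp.sub_apply]
    have hGne : G ≠ 0 := by
      intro hG0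
      rw [hG0] at hG1
      simp at hG1
      exact hξ₀ hG1.symm
    have hroots : ({t : ℝ | G.eval ((t : ℝ) : ℂ) = 0}).Finite := by
      have : ({t : ℝ | G.eval ((t : ℝ) : ℂ) = 0})
          = ((fun t : ℝ => ((t : ℝ) : ℂ)) ⁻¹' {z : ℂ | G.IsRoot z}) := rfl
      rw [this]
      exact (Polynomial.finite_setOf_isRoot hGne).preimage
        (Complex.ofReal_injective.injOn)
    have hev : ∀ᶠ t in nhdsWithin (0 : ℝ) {0}ᶜ, 𝓕 φ (η + t • (ξ₀ - η)) = 0 := by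
      have hclosed : IsClosed ({t : ℝ | G.eval ((t : ℝ) : ℂ) = 0} \ {0}) :=
        (hroots.subset Set.diff_subset).isClosed
      have h0mem : (0 : ℝ) ∈ ({t : ℝ | G.eval ((t : ℝ) : ℂ) = 0} \ {0})ᶜ := by
        simp
      have hopen := hclosed.isOpen_compl.mem_nhds h0mem
      filter_upwards [nhdsWithin_le_nhds hopen, self_mem_nhdsWithin] with t ht ht0
      have htne : G.eval ((t : ℝ) : ℂ) ≠ 0 := by
        intro habs
        exact ht ⟨habs, ht0⟩
      have hQne : Qf (η + t • (ξ₀ - η)) ≠ 0 := by rw [← evalG t]; exact htne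
      have := hQF (η + t • (ξ₀ - η))
      exact (mul_eq_zero.1 this).resolve_left hQne
    have htend : Filter.Tendsto (fun t : ℝ => 𝓕 φ (η + t • (ξ₀ - η)))
        (nhdsWithin (0 : ℝ) {0}ᶜ) (nhds (𝓕 φ η)) := by
      have hcont : Continuous fun t : ℝ => η + t • (ξ₀ - η) :=
        continuous_const.add (continuous_id.smul continuous_const)
      have := (hFcont.comp hcont).tendsto 0
      simp only [Function.comp, zero_smul, add_zero] at this
      exact this.mono_left nhdsWithin_le_nhds
    have htend0 : Filter.Tendsto (fun t : ℝ => 𝓕 φ (η + t • (ξ₀ - η)))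
        (nhdsWithin (0 : ℝ) {0}ᶜ) (nhds 0) :=
      Filter.Tendsto.congr' (Filter.EventuallyEq.symm hev) tendsto_const_nhds
    exact tendsto_nhds_unique htend htend0
  -- Step 4 : Fourier inversion.
  intro x
  have hFzero : 𝓕 φ = 0 := funext hB
  have hinv := hint.fourierInv_fourier_eq (by rw [hFzero]; exact integrable_zero _ _ _)
    (h1.continuous.continuousAt (x := x))
  rw [hFzero] at hinv
  rw [← hinv]
  simp [Real.fourierInv_eq]

end FundSolAux
namespace FundSolAux

variable {n : ℕ}

lemma DRn_mem_def {f : (Fin n → ℝ) → ℂ} (h : f ∈ DRn n) :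
    ContDiff ℝ (⊤ : ℕ∞) f ∧ HasCompactSupport f := h

lemma sum_mem (a : (Fin n → ℕ) →₀ ℂ) (φ : DRn n) :
    (fun x => ∑ p ∈ a.support,
      (-1 : ℂ) ^ (∑ j, p j) * a p * multiPD p (φ : (Fin n → ℝ) → ℂ) x) ∈ DRn n := by
  classical
  have hfun : (fun x => ∑ p ∈ a.support,
      (-1 : ℂ) ^ (∑ j, p j) * a p * multiPD p (φ : (Fin n → ℝ) → ℂ) x)
      = ∑ p ∈ a.support,
          ((-1 : ℂ) ^ (∑ j, p j) * a p) • multiPD p (φ : (Fin n → ℝ) → ℂ) := by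
    funext x
    rw [Finset.sum_apply]
    exact Finset.sum_congr rfl fun p _ => by simp [smul_eq_mul]
  rw [hfun]
  exact Submodule.sum_mem _ fun p _ => Submodule.smul_mem _ _
    ⟨multiPD_smooth p (DRn_mem_def φ.2).1, multiPD_hcs p (DRn_mem_def φ.2).2⟩

/-- The transpose operator `ᵗP(∂)` as a linear endomorphism of `D(ℝⁿ)`. -/
noncomputable def Tlin (a : (Fin n → ℕ) →₀ ℂ) : DRn n →ₗ[ℂ] DRn n where
  toFun φ := ⟨fun x => ∑ p ∈ a.support,
      (-1 : ℂ) ^ (∑ j, p j) * a p * multiPD p (φ : (Fin n → ℝ) → ℂ) x, sum_mem a φ⟩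
  map_add' φ ψ := by
    apply Subtype.ext
    funext x
    have hc : ((↑(φ + ψ) : (Fin n → ℝ) → ℂ)) = ↑φ + ↑ψ := rfl
    have hadd : ∀ p : Fin n → ℕ,
        multiPD p ((↑φ : (Fin n → ℝ) → ℂ) + ↑ψ)
          = multiPD p (↑φ : (Fin n → ℝ) → ℂ) + multiPD p (↑ψ : (Fin n → ℝ) → ℂ) :=
      fun p => multiPD_add p (DRn_mem_def φ.2).1 (DRn_mem_def ψ.2).1
    show ∑ p ∈ a.support, _ = _
    simp only [hc, hadd, Pi.add_apply, mul_add]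
    rw [Finset.sum_add_distrib]
    rfl
  map_smul' c φ := by
    apply Subtype.ext
    funext x
    have hc : ((↑(c • φ) : (Fin n → ℝ) → ℂ)) = c • (↑φ : (Fin n → ℝ) → ℂ) := rfl
    have hs : ∀ p : Fin n → ℕ,
        multiPD p (c • (↑φ : (Fin n → ℝ) → ℂ))
          = c • multiPD p (↑φ : (Fin n → ℝ) → ℂ) :=
      fun p => multiPD_smul p (DRn_mem_def φ.2).1 c
    show ∑ p ∈ a.support, _ = _
    simp only [hc, hs, Pi.smul_apply, smul_eq_mul]
    simp only [RingHom.id_apply, SetLike.val_smul, Pi.smul_apply, smul_eq_mul]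
    rw [Finset.mul_sum]
    exact Finset.sum_congr rfl fun p _ => by ring

/-- Evaluation at the origin, as a linear functional on `D(ℝⁿ)`. -/
noncomputable def delta0 : DRn n →ₗ[ℂ] ℂ where
  toFun φ := (φ : (Fin n → ℝ) → ℂ) 0
  map_add' φ ψ := rfl
  map_smul' c φ := rfl

lemma ker_cond (a : (Fin n → ℕ) →₀ ℂ) (ha : a ≠ 0) (φ : DRn n)
    (hT : Tlin a φ = 0) : (φ : (Fin n → ℝ) → ℂ) 0 = 0 := by
  have hfun : ∀ x, ∑ p ∈ a.support,
      (-1 : ℂ) ^ (∑ j, p j) * a p * multiPD p (φ : (Fin n → ℝ) → ℂ) x = 0 := by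
    intro x
    have := congrArg (fun ψ : DRn n => (ψ : (Fin n → ℝ) → ℂ) x) hT
    exact this
  set φE : EuclideanSpace ℝ (Fin n) → ℂ :=
    (↑φ : (Fin n → ℝ) → ℂ) ∘ ⇑(eqv (n := n)) with hφE
  have hsm : ContDiff ℝ (⊤ : ℕ∞) φE :=
    (DRn_mem_def φ.2).1.comp (eqv (n := n)).contDiff
  have hcs : HasCompactSupport φE :=
    (DRn_mem_def φ.2).2.comp_homeomorph (eqv (n := n)).toHomeomorph
  have h0 : ∀ y, ∑ p ∈ a.support,
      (-1 : ℂ) ^ (∑ j, p j) * a p * multiPDE p φE y = 0 := by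
    intro y
    have ht : ∀ p : Fin n → ℕ, multiPDE p φE y
        = multiPD p (↑φ : (Fin n → ℝ) → ℂ) (eqv (n := n) y) := by
      intro p
      rw [hφE, multiPDE_transfer]
      rfl
    simp only [ht]
    exact hfun _
  have hvan := key_vanishing a ha hsm hcs h0 ((eqv (n := n)).symm 0)
  rw [hφE] at hvan
  simpa using hvan

end FundSolAux

open FundSolAux in
/-- Every nonzero constant-coefficient operator `P(∂) = Σ_p a_p ∂^p` has a
fundamental solution in the algebraic dual `D*(ℝⁿ)`: a linear functional `S`
on `D(ℝⁿ)` with `S(ᵗP(∂)φ) = φ(0)` for all test functions `φ`, i.e.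
`P(∂)S = δ`. Here `ᵗP(∂)φ = Σ_p (−1)^{|p|} a_p ∂^p φ ∈ D(ℝⁿ)`. -/
theorem constCoeff_PDO_has_fundamental_solution_in_algebraicDual
    (n : ℕ) (hn : 1 ≤ n) (a : (Fin n → ℕ) →₀ ℂ) (ha : a ≠ 0) :
    ∃ S : DRn n →ₗ[ℂ] ℂ, ∀ φ : DRn n,
      ∃ hmem : (fun x => ∑ p ∈ a.support,
          (-1 : ℂ) ^ (∑ j, p j) * a p * multiPD p (φ : (Fin n → ℝ) → ℂ) x)
          ∈ DRn n,
        S ⟨_, hmem⟩ = (φ : (Fin n → ℝ) → ℂ) 0 := by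
  classical
  set T : DRn n →ₗ[ℂ] DRn n := Tlin a with hTdef
  obtain ⟨W', hW'⟩ := (LinearMap.range T).exists_isCompl
  have hle : LinearMap.ker T ≤ LinearMap.ker (delta0 (n := n)) := by
    intro φ hφ
    rw [LinearMap.mem_ker] at hφ ⊢
    exact ker_cond a ha φ hφ
  set h1 : (DRn n ⧸ LinearMap.ker T) →ₗ[ℂ] ℂ := (LinearMap.ker T).liftQ delta0 hle
    with hh1
  set h2 : (LinearMap.range T : Submodule ℂ (DRn n)) →ₗ[ℂ] ℂ :=
    h1 ∘ₗ (T.quotKerEquivRange.symm : _ ≃ₗ[ℂ] _).toLinearMap with hh2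
  refine ⟨h2 ∘ₗ (Submodule.linearProjOfIsCompl _ _ hW'), fun φ => ⟨sum_mem a φ, ?_⟩⟩
  have heq : (⟨fun x => ∑ p ∈ a.support,
      (-1 : ℂ) ^ (∑ j, p j) * a p * multiPD p (φ : (Fin n → ℝ) → ℂ) x,
      sum_mem a φ⟩ : DRn n) = T φ := rfl
  rw [LinearMap.comp_apply, heq]
  have hproj : Submodule.linearProjOfIsCompl _ _ hW' (T φ)
      = ⟨T φ, LinearMap.mem_range_self T φ⟩ :=
    Submodule.linearProjOfIsCompl_apply_left hW' ⟨T φ, LinearMap.mem_range_self T φ⟩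
  rw [hproj, hh2, LinearMap.comp_apply, LinearEquiv.coe_coe,
    LinearMap.quotKerEquivRange_symm_apply_image, hh1, Submodule.mkQ_apply,
    Submodule.liftQ_apply]
  rfl
end
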